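/- arXiv:1606.08567 — 4 statements merged into one kernel-verified Lean document; each statement's English description precedes it below -/
import Mathlib

section
/- Proposition 1 (variable-length memory of the binned chain). Assume τ ≥ D. Let m ≥ 1 and let x : {−m,…,−1} → A be a finite past such that there exists 1 ≤ ℓ ≤ m with x(−ℓ) = z and x(−j) ≠ z for all 1 ≤ j < ℓ. Then for every a ∈ A, P⁽ᵇ⁾(X₀ = a | X₋ₘ = x(−m),…,X₋₁ = x(−1)) = P⁽ᵇ⁾(X₀ = a | X₋ℓ = x(−ℓ),…,X₋₁ = x(−1)), where conditional probabilities of cylinder sets are the ratios of the corresponding cylinder probabilities (all finite cylinders of P⁽ᵇ⁾ have positive measure). -/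
open MeasureTheory Filter

/-- Alphabet of spike patterns of `N` neurons. -/
abbrev Pat (N : ℕ) : Type := Fin N → Bool

/-- Space of spike trains (configurations). -/
abbrev Conf (N : ℕ) : Type := ℤ → Pat N

/-- Conditional probability of cylinder sets, defined as the ratio of the
corresponding (cylinder) probabilities. -/
noncomputable def condProb {N : ℕ} (P : Measure (Conf N)) (E C : Set (Conf N)) : ℝ :=
  (P (E ∩ C)).toReal / (P C).toReal

/-- Cylinder set prescribing the configuration on the finite set `s`. -/
def cyl {N : ℕ} (s : Finset ℤ) (v : ℤ → Pat N) : Set (Conf N) :=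
  {ω | ∀ n ∈ s, ω n = v n}

/-- The left shift. -/
def shiftMap {N : ℕ} : Conf N → Conf N := fun ω n => ω (n + 1)

/-- The binning map with window size `τ`: `(binMap τ ω) m k = true` iff neuron `k`
spikes at least once in the window `{mτ, …, (m+1)τ - 1}`. -/
def binMap {N : ℕ} (τ : ℕ) (ω : Conf N) : Conf N :=
  fun m k => (List.range τ).any fun i => ω (m * (τ : ℤ) + (i : ℤ)) k

/-- The all-false pattern (no neuron spikes). -/
def zPat (N : ℕ) : Pat N := fun _ => false

/-- `P` is (stationary) Markov of order `D`: conditioning the present on any finite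
past of length `m ≥ D` equals conditioning on the last `D` coordinates. -/
def MarkovOrder {N : ℕ} (P : Measure (Conf N)) (D : ℕ) : Prop :=
  ∀ (a : Pat N) (m : ℕ), D ≤ m → ∀ w : ℤ → Pat N,
    condProb P {ω | ω 0 = a} (cyl (Finset.Icc (-(m : ℤ)) (-1)) w)
      = condProb P {ω | ω 0 = a} (cyl (Finset.Icc (-(D : ℤ)) (-1)) w)

/-- Every finite cylinder has strictly positive probability. -/
def PosCyl {N : ℕ} (P : Measure (Conf N)) : Prop :=
  ∀ (s : Finset ℤ) (v : ℤ → Pat N), 0 < P (cyl s v)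

namespace VLM
variable {N : ℕ}

lemma cyl_congr {s : Finset ℤ} {v w : ℤ → Pat N} (h : ∀ n ∈ s, v n = w n) :
    cyl s v = cyl s w := by
  ext ω; constructor <;> intro hω n hn
  · rw [hω n hn, h n hn]
  · rw [hω n hn, h n hn]

lemma cyl_union (s t : Finset ℤ) (v : ℤ → Pat N) :
    cyl (s ∪ t) v = cyl s v ∩ cyl t v := by
  ext ω; simp only [cyl, Set.mem_setOf_eq, Set.mem_inter_iff, Finset.mem_union]
  constructor
  · intro h; exact ⟨fun n hn => h n (Or.inl hn), fun n hn => h n (Or.inr hn)⟩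
  · rintro ⟨h1, h2⟩ n (hn | hn); exacts [h1 n hn, h2 n hn]

lemma measurableSet_cyl (s : Finset ℤ) (v : ℤ → Pat N) :
    MeasurableSet (cyl s v) := by
  have : cyl s v = ⋂ n ∈ s, {ω : Conf N | ω n = v n} := by
    ext ω; simp [cyl]
  rw [this]
  refine MeasurableSet.biInter s.countable_toSet fun n _ => ?_
  have := (measurable_pi_apply (a := n) (X := fun _ : ℤ => Pat N)) (measurableSet_singleton (v n))
  simpa [Set.preimage] using this

lemma measurableSet_fiber (a : Pat N) : MeasurableSet {ω : Conf N | ω 0 = a} := by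
  have := (measurable_pi_apply (a := (0:ℤ)) (X := fun _ : ℤ => Pat N)) (measurableSet_singleton a)
  simpa [Set.preimage] using this

lemma measurable_shiftMap : Measurable (shiftMap (N := N)) :=
  measurable_pi_lambda _ fun n => measurable_pi_apply (n + 1)

lemma measurable_binMap (τ : ℕ) : Measurable (binMap (N := N) τ) := by
  refine measurable_pi_lambda _ fun m => measurable_pi_lambda _ fun k => ?_
  have : ∀ l : List ℕ, Measurable (fun ω : Conf N => l.any fun i => ω (m * (τ : ℤ) + (i : ℤ)) k) := by
    intro l; induction l with
    | nil => simpa using measurable_const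
    | cons a l ih =>
      simp only [List.any_cons]
      have h1 : Measurable (fun ω : Conf N => ω (m * (τ : ℤ) + (a : ℤ)) k) :=
        (measurable_pi_apply k).comp (measurable_pi_apply _)
      exact (measurable_of_countable (fun p : Bool × Bool => p.1 || p.2)).comp (h1.prodMk ih)
  exact this (List.range τ)

lemma shift_preimage_cyl (a b : ℤ) (w : ℤ → Pat N) :
    shiftMap ⁻¹' (cyl (Finset.Icc a b) w)
      = cyl (Finset.Icc (a+1) (b+1)) (fun n => w (n - 1)) := by
  ext ω
  simp only [Set.mem_preimage, cyl, Set.mem_setOf_eq, shiftMap, Finset.mem_Icc]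
  constructor
  · intro h t ht
    have := h (t - 1) (by omega)
    simpa [sub_add_cancel] using this
  · intro h n hn
    have := h (n + 1) (by omega)
    simpa using this

lemma cyl_shift_one (P : Measure (Conf N)) (hshift : Measure.map shiftMap P = P)
    (a b : ℤ) (w : ℤ → Pat N) :
    P (cyl (Finset.Icc a b) w)
      = P (cyl (Finset.Icc (a+1) (b+1)) (fun n => w (n - 1))) := by
  conv_lhs => rw [← hshift]
  rw [Measure.map_apply measurable_shiftMap (measurableSet_cyl _ _), shift_preimage_cyl]

lemma cyl_shift_nat (P : Measure (Conf N)) (hshift : Measure.map shiftMap P = P)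
    (k : ℕ) (a b : ℤ) (w : ℤ → Pat N) :
    P (cyl (Finset.Icc a b) w)
      = P (cyl (Finset.Icc (a+k) (b+k)) (fun n => w (n - k))) := by
  induction k with
  | zero => simp
  | succ k ih =>
    rw [ih, cyl_shift_one P hshift]
    have h1 : a + (k:ℤ) + 1 = a + ((k:ℕ)+1 : ℕ) := by push_cast; ring
    have h2 : b + (k:ℤ) + 1 = b + ((k:ℕ)+1 : ℕ) := by push_cast; ring
    rw [h1, h2]
    apply congrArg
    apply cyl_congr
    intro n _
    congr 1
    push_cast; ring

lemma cyl_shift (P : Measure (Conf N)) (hshift : Measure.map shiftMap P = P)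
    (c a b : ℤ) (w : ℤ → Pat N) :
    P (cyl (Finset.Icc a b) w)
      = P (cyl (Finset.Icc (a+c) (b+c)) (fun n => w (n - c))) := by
  rcases le_or_gt 0 c with hc | hc
  · have := cyl_shift_nat P hshift c.toNat a b w
    rwa [Int.toNat_of_nonneg hc] at this
  · have := cyl_shift_nat P hshift (-c).toNat (a+c) (b+c) (fun n => w (n - c))
    rw [Int.toNat_of_nonneg (by omega)] at this
    rw [this]
    have e1 : a + c + -c = a := by ring
    have e2 : b + c + -c = b := by ring
    rw [e1, e2]
    apply congrArg; apply cyl_congr; intro n _; simp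

lemma cyl_shift' (P : Measure (Conf N)) (hshift : Measure.map shiftMap P = P)
    (c a b a' b' : ℤ) (w w' : ℤ → Pat N)
    (ha : a' = a + c) (hb : b' = b + c) (hw : ∀ n, w' n = w (n - c)) :
    P (cyl (Finset.Icc a b) w) = P (cyl (Finset.Icc a' b') w') := by
  rw [cyl_shift P hshift c a b w, ha, hb]
  exact congrArg _ (cyl_congr fun n _ => (hw n).symm)

lemma cyl_insert_zero {s : ℤ} (hs : s ≤ 0) (w : ℤ → Pat N) :
    {ω : Conf N | ω 0 = w 0} ∩ cyl (Finset.Icc s (-1)) w = cyl (Finset.Icc s 0) w := by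
  ext ω
  simp only [Set.mem_inter_iff, Set.mem_setOf_eq, cyl, Finset.mem_Icc]
  constructor
  · rintro ⟨h0, h⟩ n hn
    rcases eq_or_lt_of_le hn.2 with h1 | h1
    · subst h1; exact h0
    · exact h n ⟨hn.1, by omega⟩
  · intro h
    exact ⟨h 0 ⟨hs, le_refl 0⟩, fun n hn => h n ⟨hn.1, by omega⟩⟩

lemma markov_step {D : ℕ} (P : Measure (Conf N)) [IsProbabilityMeasure P]
    (hshift : Measure.map shiftMap P = P)
    (hD : 1 ≤ D) (hpos : PosCyl P) (hMarkov : MarkovOrder P D)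
    (w : ℤ → Pat N) (s t : ℤ) (hst : (D:ℤ) ≤ t + 1 - s) :
    P (cyl (Finset.Icc s (t+1)) w) * P (cyl (Finset.Icc (t+1-D) t) w)
      = P (cyl (Finset.Icc s t) w) * P (cyl (Finset.Icc (t+1-D) (t+1)) w) := by
  set m' : ℕ := (t + 1 - s).toNat with hm'
  have hm'z : (m' : ℤ) = t + 1 - s := Int.toNat_of_nonneg (by omega)
  have hDm' : D ≤ m' := by omega
  set w' : ℤ → Pat N := fun n => w (n + (t+1)) with hw'
  have hM := hMarkov (w (t+1)) m' hDm' w'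
  unfold condProb at hM
  have hz : w' 0 = w (t+1) := by simp [hw']
  rw [← hz] at hM
  rw [cyl_insert_zero (s := -(m':ℤ)) (by omega) w',
      cyl_insert_zero (s := -(D:ℤ)) (by omega) w'] at hM
  have trans : ∀ u u' : ℤ, u' = u - (t+1) →
      P (cyl (Finset.Icc u' 0) w') = P (cyl (Finset.Icc u (t+1)) w) ∧
      P (cyl (Finset.Icc u' (-1)) w') = P (cyl (Finset.Icc u t) w) := by
    intro u u' hu
    constructor
    · exact (cyl_shift' P hshift (-(t+1)) u (t+1) u' 0 w w' (by omega) (by omega)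
        (fun n => by show w (n + (t+1)) = w (n - -(t+1)); congr 1; ring)).symm
    · exact (cyl_shift' P hshift (-(t+1)) u t u' (-1) w w' (by omega) (by omega)
        (fun n => by show w (n + (t+1)) = w (n - -(t+1)); congr 1; ring)).symm
  obtain ⟨e1, e2⟩ := trans s (-(m':ℤ)) (by omega)
  obtain ⟨e3, e4⟩ := trans (t+1-D) (-(D:ℤ)) (by omega)
  rw [e1, e2, e3, e4] at hM
  -- now cross-multiply
  have fin : ∀ (S : Set (Conf N)), P S ≠ ⊤ := fun S => measure_ne_top P S
  have p2 : (P (cyl (Finset.Icc s t) w)).toReal > 0 :=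
    ENNReal.toReal_pos (hpos _ _).ne' (fin _)
  have p4 : (P (cyl (Finset.Icc (t+1-D) t) w)).toReal > 0 :=
    ENNReal.toReal_pos (hpos _ _).ne' (fin _)
  rw [div_eq_div_iff p2.ne' p4.ne'] at hM
  have : (P (cyl (Finset.Icc s (t+1)) w) * P (cyl (Finset.Icc (t+1-D) t) w)).toReal
      = (P (cyl (Finset.Icc s t) w) * P (cyl (Finset.Icc (t+1-D) (t+1)) w)).toReal := by
    rw [ENNReal.toReal_mul, ENNReal.toReal_mul]
    linarith [hM]
  exact (ENNReal.toReal_eq_toReal_iff' (ENNReal.mul_ne_top (fin _) (fin _))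
    (ENNReal.mul_ne_top (fin _) (fin _))).mp this

lemma block_indep_aux {D τ : ℕ} (P : Measure (Conf N)) [IsProbabilityMeasure P]
    (hshift : Measure.map shiftMap P = P)
    (hD : 1 ≤ D) (hτD : D ≤ τ) (hpos : PosCyl P) (hMarkov : MarkovOrder P D)
    (w : ℤ → Pat N) (u p : ℤ) (hup : u ≤ p) (k : ℕ) :
    P (cyl (Finset.Icc u (p+τ-1+k)) w) * P (cyl (Finset.Icc p (p+τ-1)) w)
      = P (cyl (Finset.Icc u (p+τ-1)) w) * P (cyl (Finset.Icc p (p+τ-1+k)) w) := by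
  induction k with
  | zero => simpa using mul_comm _ _
  | succ k ih =>
    set r : ℤ := p+τ-1+k with hrdef
    have hstep : p+τ-1+((k:ℕ)+1:ℕ) = r + 1 := by push_cast; omega
    rw [hstep]
    have h4u := markov_step P hshift hD hpos hMarkov w u r (by omega)
    have h4p := markov_step P hshift hD hpos hMarkov w p r (by omega)
    have fin : ∀ (S : Set (Conf N)), P S ≠ ⊤ := fun S => measure_ne_top P S
    have hK0 : P (cyl (Finset.Icc (r+1-D) r) w) ≠ 0 := (hpos _ _).ne'
    have hKt : P (cyl (Finset.Icc (r+1-D) r) w) ≠ ⊤ := fin _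
    apply (ENNReal.mul_left_inj hK0 hKt).mp
    calc P (cyl (Finset.Icc u (r+1)) w) * P (cyl (Finset.Icc p (p+τ-1)) w)
        * P (cyl (Finset.Icc (r+1-D) r) w)
      = (P (cyl (Finset.Icc u (r+1)) w) * P (cyl (Finset.Icc (r+1-D) r) w))
        * P (cyl (Finset.Icc p (p+τ-1)) w) := by ring
    _ = (P (cyl (Finset.Icc u r) w) * P (cyl (Finset.Icc (r+1-D) (r+1)) w))
        * P (cyl (Finset.Icc p (p+τ-1)) w) := by rw [h4u]
    _ = (P (cyl (Finset.Icc u r) w) * P (cyl (Finset.Icc p (p+τ-1)) w))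
        * P (cyl (Finset.Icc (r+1-D) (r+1)) w) := by ring
    _ = (P (cyl (Finset.Icc u (p+τ-1)) w) * P (cyl (Finset.Icc p r) w))
        * P (cyl (Finset.Icc (r+1-D) (r+1)) w) := by rw [ih]
    _ = P (cyl (Finset.Icc u (p+τ-1)) w) * (P (cyl (Finset.Icc p r) w)
        * P (cyl (Finset.Icc (r+1-D) (r+1)) w)) := by ring
    _ = P (cyl (Finset.Icc u (p+τ-1)) w) * (P (cyl (Finset.Icc p (r+1)) w)
        * P (cyl (Finset.Icc (r+1-D) r) w)) := by rw [← h4p]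
    _ = P (cyl (Finset.Icc u (p+τ-1)) w) * P (cyl (Finset.Icc p (r+1)) w)
        * P (cyl (Finset.Icc (r+1-D) r) w) := by ring

lemma block_indep {D τ : ℕ} (P : Measure (Conf N)) [IsProbabilityMeasure P]
    (hshift : Measure.map shiftMap P = P)
    (hD : 1 ≤ D) (hτD : D ≤ τ) (hpos : PosCyl P) (hMarkov : MarkovOrder P D)
    (w : ℤ → Pat N) (u p r : ℤ) (hup : u ≤ p) (hr : p + τ - 1 ≤ r) :
    P (cyl (Finset.Icc u r) w) * P (cyl (Finset.Icc p (p+τ-1)) w)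
      = P (cyl (Finset.Icc u (p+τ-1)) w) * P (cyl (Finset.Icc p r) w) := by
  have hk : r = p+τ-1+((r - (p+τ-1)).toNat : ℤ) := by
    rw [Int.toNat_of_nonneg (by omega)]; ring
  rw [hk]
  exact block_indep_aux P hshift hD hτD hpos hMarkov w u p hup _

noncomputable section
open scoped Classical

/-- Extend a finite configuration on `I` to a full configuration by `zPat`. -/
def extI (I : Finset ℤ) (u : {n // n ∈ I} → Pat N) : Conf N :=
  fun n => if h : n ∈ I then u ⟨n, h⟩ else zPat N

lemma extI_mem {I : Finset ℤ} (u : {n // n ∈ I} → Pat N) {n : ℤ} (h : n ∈ I) :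
    extI I u n = u ⟨n, h⟩ := by simp [extI, h]

lemma extI_not_mem {I : Finset ℤ} (u : {n // n ∈ I} → Pat N) {n : ℤ} (h : n ∉ I) :
    extI I u n = zPat N := by simp [extI, h]

/-- A set `S` is determined by the coordinates in `I`. -/
def DetBy (I : Finset ℤ) (S : Set (Conf N)) : Prop :=
  ∀ ω ω' : Conf N, (∀ n ∈ I, ω n = ω' n) → (ω ∈ S ↔ ω' ∈ S)

lemma decomp (P : Measure (Conf N)) (I : Finset ℤ) (S : Set (Conf N))
    (hdet : DetBy I S) (hms : MeasurableSet S) :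
    P S = ∑ u : {n // n ∈ I} → Pat N,
      if extI I u ∈ S then P (cyl I (extI I u)) else 0 := by
  classical
  have hSeq : S = ⋃ u : {n // n ∈ I} → Pat N,
      (if extI I u ∈ S then cyl I (extI I u) else ∅) := by
    ext ω; constructor
    · intro hω
      refine Set.mem_iUnion.mpr ⟨fun i => ω i, ?_⟩
      have hagree : ∀ n ∈ I, extI I (fun i : {n // n ∈ I} => ω (i : ℤ)) n = ω n := by
        intro n hn; rw [extI_mem _ hn]
      have : extI I (fun i : {n // n ∈ I} => ω (i : ℤ)) ∈ S :=
        (hdet _ ω hagree).mpr hω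
      rw [if_pos this]
      intro n hn; exact (hagree n hn).symm
    · intro hω
      obtain ⟨u, hu⟩ := Set.mem_iUnion.mp hω
      by_cases hc : extI I u ∈ S
      · rw [if_pos hc] at hu
        exact (hdet ω (extI I u) (fun n hn => hu n hn)).mpr hc
      · rw [if_neg hc] at hu; exact absurd hu (Set.notMem_empty ω)
  have hdisj : Pairwise (Function.onFun Disjoint
      (fun u : {n // n ∈ I} → Pat N => if extI I u ∈ S then cyl I (extI I u) else ∅)) := by
    intro u v huv
    have : ¬ ∀ n : {n // n ∈ I}, u n = v n := fun h => huv (funext h)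
    push_neg at this
    obtain ⟨i, hi⟩ := this
    refine Set.disjoint_left.mpr ?_
    intro ω hω1 hω2
    simp only at hω1 hω2
    split_ifs at hω1 hω2 with h1 h2 h2
    · have e1 : ω (i : ℤ) = u i := by rw [hω1 (i : ℤ) i.2, extI_mem u i.2]
      have e2 : ω (i : ℤ) = v i := by rw [hω2 (i : ℤ) i.2, extI_mem v i.2]
      exact hi (e1 ▸ e2)
    all_goals first | exact absurd hω1 (Set.notMem_empty ω) | exact absurd hω2 (Set.notMem_empty ω)
  have hmeas : ∀ u : {n // n ∈ I} → Pat N,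
      MeasurableSet (if extI I u ∈ S then cyl I (extI I u) else ∅) := by
    intro u; split_ifs
    · exact measurableSet_cyl _ _
    · exact MeasurableSet.empty
  conv_lhs => rw [hSeq]
  rw [measure_iUnion hdisj hmeas, tsum_fintype]
  apply Finset.sum_congr rfl
  intro u _
  split_ifs with h
  · rfl
  · exact measure_empty

end

noncomputable section
open scoped Classical

def glue (I₁ I₂ : Finset ℤ)
    (u : ({n // n ∈ I₁} → Pat N) × ({n // n ∈ I₂} → Pat N)) :
    {n // n ∈ I₁ ∪ I₂} → Pat N :=
  fun n => if h : (n : ℤ) ∈ I₁ then u.1 ⟨n, h⟩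
    else u.2 ⟨n, (Finset.mem_union.mp n.2).resolve_left h⟩

lemma glue_bijective {I₁ I₂ : Finset ℤ} (hd : Disjoint I₁ I₂) :
    Function.Bijective (glue (N := N) I₁ I₂) := by
  constructor
  · intro u v huv
    have h1 : ∀ i : {n // n ∈ I₁}, u.1 i = v.1 i := by
      intro i
      have := congrFun huv ⟨(i : ℤ), Finset.mem_union_left _ i.2⟩
      simpa [glue, i.2] using this
    have h2 : ∀ i : {n // n ∈ I₂}, u.2 i = v.2 i := by
      intro i
      have hni : (i : ℤ) ∉ I₁ := Finset.disjoint_right.mp hd i.2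
      have := congrFun huv ⟨(i : ℤ), Finset.mem_union_right _ i.2⟩
      simpa [glue, hni] using this
    exact Prod.ext (funext h1) (funext h2)
  · intro w
    refine ⟨(fun i => w ⟨i, Finset.mem_union_left _ i.2⟩,
             fun j => w ⟨j, Finset.mem_union_right _ j.2⟩), ?_⟩
    funext n
    by_cases h : (n : ℤ) ∈ I₁
    · simp only [glue, dif_pos h]
    · simp only [glue, dif_neg h]

lemma extI_glue_left {I₁ I₂ : Finset ℤ} (u₁ : {n // n ∈ I₁} → Pat N)
    (u₂ : {n // n ∈ I₂} → Pat N) {n : ℤ} (hn : n ∈ I₁) :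
    extI (I₁ ∪ I₂) (glue I₁ I₂ (u₁, u₂)) n = extI I₁ u₁ n := by
  rw [extI_mem _ (Finset.mem_union_left _ hn), extI_mem _ hn]
  simp only [glue, dif_pos hn]

lemma extI_glue_right {I₁ I₂ : Finset ℤ} (hd : Disjoint I₁ I₂)
    (u₁ : {n // n ∈ I₁} → Pat N) (u₂ : {n // n ∈ I₂} → Pat N) {n : ℤ} (hn : n ∈ I₂) :
    extI (I₁ ∪ I₂) (glue I₁ I₂ (u₁, u₂)) n = extI I₂ u₂ n := by
  have hn1 : n ∉ I₁ := Finset.disjoint_right.mp hd hn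
  rw [extI_mem _ (Finset.mem_union_right _ hn), extI_mem _ hn]
  simp only [glue, dif_neg hn1]

lemma any_congr {l : List ℕ} {f g : ℕ → Bool} (h : ∀ i ∈ l, f i = g i) :
    l.any f = l.any g := by
  induction l with
  | nil => rfl
  | cons a l ih =>
    simp only [List.any_cons]
    rw [h a (by simp), ih (fun i hi => h i (by simp [hi]))]

lemma binMap_congr {τ : ℕ} {ω ω' : Conf N} {n : ℤ}
    (h : ∀ i : ℕ, i < τ → ω (n * τ + i) = ω' (n * τ + i)) :
    binMap τ ω n = binMap τ ω' n := by
  funext k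
  exact any_congr fun i hi => by rw [h i (List.mem_range.mp hi)]

/-- the binned preimage of a binned cylinder is determined by the blown-up window -/
lemma det_binPre (τ : ℕ) (lo hi : ℤ) (y : ℤ → Pat N) :
    DetBy (Finset.Icc (lo * τ) (hi * τ + τ - 1))
      (binMap τ ⁻¹' cyl (Finset.Icc lo hi) y) := by
  intro ω ω' hagree
  have hbin : ∀ n ∈ Finset.Icc lo hi, binMap τ ω n = binMap τ ω' n := by
    intro n hn
    rw [Finset.mem_Icc] at hn
    refine binMap_congr fun i hi' => hagree _ ?_
    rw [Finset.mem_Icc]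
    have l1 : lo * (τ:ℤ) ≤ n * τ := by
      apply mul_le_mul_of_nonneg_right hn.1 (by positivity)
    have l2 : n * (τ:ℤ) ≤ hi * τ := by
      apply mul_le_mul_of_nonneg_right hn.2 (by positivity)
    omega
  constructor <;> intro h n hn <;> rw [Set.mem_preimage, cyl] at *
  · rw [← hbin n hn]; exact h n hn
  · rw [hbin n hn]; exact h n hn

lemma det_mono {I J : Finset ℤ} {S : Set (Conf N)} (h : DetBy I S) (hIJ : I ⊆ J) :
    DetBy J S :=
  fun ω ω' hagree => h ω ω' fun n hn => hagree n (hIJ hn)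

/-- if the binned value at `c` is `zPat` then the window is identically `zPat` -/
lemma window_false {τ : ℕ} {ω : Conf N} {c : ℤ} (h : binMap τ ω c = zPat N) :
    ∀ n ∈ Finset.Icc (c * τ) (c * τ + τ - 1), ω n = zPat N := by
  intro n hn
  rw [Finset.mem_Icc] at hn
  funext k
  have hk := congrFun h k
  simp only [binMap, zPat] at hk ⊢
  rw [List.any_eq_false] at hk
  have hi : n = c * τ + ((n - c * τ).toNat : ℤ) := by omega
  have hlt : (n - c * τ).toNat < τ := by omega
  have := hk ((n - c * τ).toNat) (List.mem_range.mpr hlt)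
  rw [← hi] at this
  simpa using this

/-- canonical preimage of a binned cylinder -/
def canonPre (τ : ℕ) (y : ℤ → Pat N) : Conf N :=
  fun n => if n % (τ : ℤ) = 0 then y (n / τ) else zPat N

lemma binMap_canonPre {τ : ℕ} (hτ : 1 ≤ τ) (y : ℤ → Pat N) (n : ℤ) :
    binMap τ (canonPre τ y) n = y n := by
  have hτ0 : (τ:ℤ) ≠ 0 := by positivity
  funext k
  have hval : ∀ i : ℕ, i < τ → canonPre τ y (n * τ + i) = if i = 0 then y n else zPat N := by
    intro i hi
    have hmod : (n * (τ:ℤ) + i) % τ = i := by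
      have hre : n * (τ:ℤ) + i = i + (τ:ℤ) * n := by ring
      rw [hre, Int.add_mul_emod_self_left]
      exact Int.emod_eq_of_lt (by positivity) (by exact_mod_cast hi)
    by_cases h0 : i = 0
    · subst h0
      have hm : (n * (τ:ℤ)) % τ = 0 := Int.mul_emod_left n (τ:ℤ)
      simp only [Nat.cast_zero, add_zero]
      simp [canonPre, hm, Int.mul_ediv_cancel n hτ0]
    · have : (n * (τ:ℤ) + i) % τ ≠ 0 := by
        rw [hmod]; exact_mod_cast h0
      simp only [canonPre, if_neg this, if_neg h0]
  simp only [binMap]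
  cases hy : y n k with
  | true =>
    rw [List.any_eq_true]
    refine ⟨0, List.mem_range.mpr hτ, ?_⟩
    rw [hval 0 hτ]
    simp [hy]
  | false =>
    rw [List.any_eq_false]
    intro i hi
    rw [hval i (List.mem_range.mp hi)]
    split_ifs
    · simp [hy]
    · simp [zPat]

lemma pos_binPre {τ : ℕ} (hτ : 1 ≤ τ) (P : Measure (Conf N)) (hpos : PosCyl P)
    (lo hi : ℤ) (y : ℤ → Pat N) :
    0 < P (binMap τ ⁻¹' cyl (Finset.Icc lo hi) y) := by
  refine lt_of_lt_of_le (hpos (Finset.Icc (lo * τ) (hi * τ + τ - 1)) (canonPre τ y)) ?_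
  apply measure_mono
  intro ω hω
  rw [Set.mem_preimage]
  intro n hn
  have h1 : binMap τ ω n = binMap τ (canonPre τ y) n := by
    rw [Finset.mem_Icc] at hn
    refine binMap_congr fun i hi' => hω _ ?_
    rw [Finset.mem_Icc]
    have l1 : lo * (τ:ℤ) ≤ n * τ := mul_le_mul_of_nonneg_right hn.1 (by positivity)
    have l2 : n * (τ:ℤ) ≤ hi * τ := mul_le_mul_of_nonneg_right hn.2 (by positivity)
    omega
  rw [h1, binMap_canonPre hτ]

end

noncomputable section
open scoped Classical

lemma key_core {D τ : ℕ} (P : Measure (Conf N)) [IsProbabilityMeasure P]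
    (hshift : Measure.map shiftMap P = P)
    (hD : 1 ≤ D) (hτD : D ≤ τ) (hpos : PosCyl P) (hMarkov : MarkovOrder P D)
    (lo c hi : ℤ) (hc : lo ≤ c) (hhi : c ≤ hi)
    (y : ℤ → Pat N) (hy : y c = zPat N) :
    P (binMap τ ⁻¹' cyl (Finset.Icc lo hi) y)
        * P (cyl (Finset.Icc (c * (τ:ℤ)) (c * (τ:ℤ) + τ - 1)) (fun _ => zPat N))
      = (∑ u₁ : {n // n ∈ Finset.Icc (lo * (τ:ℤ)) (c * (τ:ℤ) - 1)} → Pat N,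
          if extI _ u₁ ∈ binMap τ ⁻¹' cyl (Finset.Icc lo (c - 1)) y
          then P (cyl (Finset.Icc (lo * (τ:ℤ)) (c * (τ:ℤ) + τ - 1)) (extI _ u₁)) else 0)
        * P (binMap τ ⁻¹' cyl (Finset.Icc c hi) y) := by
  have hτ1 : 1 ≤ τ := hD.trans hτD
  have hτ1' : (1:ℤ) ≤ (τ:ℤ) := by exact_mod_cast hτ1
  have hτpos : (0:ℤ) ≤ (τ:ℤ) := by positivity
  have hup : lo * (τ:ℤ) ≤ c * τ := mul_le_mul_of_nonneg_right hc hτpos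
  have hcE : c * (τ:ℤ) ≤ hi * τ := mul_le_mul_of_nonneg_right hhi hτpos
  set I₁ : Finset ℤ := Finset.Icc (lo * (τ:ℤ)) (c * (τ:ℤ) - 1) with hI₁
  set I₂ : Finset ℤ := Finset.Icc (c * (τ:ℤ)) (hi * (τ:ℤ) + τ - 1) with hI₂
  set S_A : Set (Conf N) := binMap τ ⁻¹' cyl (Finset.Icc lo (c - 1)) y with hSA
  set S_T : Set (Conf N) := binMap τ ⁻¹' cyl (Finset.Icc c hi) y with hSTdef
  have hdisj : Disjoint I₁ I₂ := by
    rw [hI₁, hI₂, Finset.disjoint_left]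
    intro n h1 h2
    rw [Finset.mem_Icc] at h1 h2
    omega
  have hdetA : DetBy I₁ S_A := by
    have h := det_binPre (N := N) τ lo (c - 1) y
    have e : (c - 1) * (τ:ℤ) + τ - 1 = c * (τ:ℤ) - 1 := by ring
    rw [e] at h
    exact h
  have hdetT : DetBy I₂ S_T := det_binPre (N := N) τ c hi y
  have hdetAT : DetBy (I₁ ∪ I₂) (S_A ∩ S_T) := by
    intro ω ω' hag
    have h1 := hdetA ω ω' (fun n hn => hag n (Finset.mem_union_left _ hn))
    have h2 := hdetT ω ω' (fun n hn => hag n (Finset.mem_union_right _ hn))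
    simp only [Set.mem_inter_iff]
    exact and_congr h1 h2
  have hmsA : MeasurableSet S_A := (measurable_binMap τ) (measurableSet_cyl _ _)
  have hmsT : MeasurableSet S_T := (measurable_binMap τ) (measurableSet_cyl _ _)
  have hsplit : Finset.Icc lo hi = Finset.Icc lo (c - 1) ∪ Finset.Icc c hi := by
    ext n; simp only [Finset.mem_Icc, Finset.mem_union]; omega
  have hpre : binMap τ ⁻¹' cyl (Finset.Icc lo hi) y = S_A ∩ S_T := by
    rw [hsplit, cyl_union, Set.preimage_inter]
  rw [hpre]
  rw [decomp P (I₁ ∪ I₂) (S_A ∩ S_T) hdetAT (hmsA.inter hmsT)]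
  rw [decomp P I₂ S_T hdetT hmsT]
  have hIeq : I₁ ∪ I₂ = Finset.Icc (lo * (τ:ℤ)) (hi * (τ:ℤ) + τ - 1) := by
    rw [hI₁, hI₂]
    ext n
    simp only [Finset.mem_Icc, Finset.mem_union]
    omega
  -- the per-term identity
  have step1 : ∀ (u₁ : {n // n ∈ I₁} → Pat N) (u₂ : {n // n ∈ I₂} → Pat N),
      (@ite _ (extI (I₁ ∪ I₂) (glue I₁ I₂ (u₁, u₂)) ∈ S_A ∩ S_T) (Classical.propDecidable _)
        (P (cyl (I₁ ∪ I₂) (extI (I₁ ∪ I₂) (glue I₁ I₂ (u₁, u₂))))) 0)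
        * P (cyl (Finset.Icc (c * (τ:ℤ)) (c * (τ:ℤ) + τ - 1)) (fun _ => zPat N))
      = (if extI I₁ u₁ ∈ S_A
          then P (cyl (Finset.Icc (lo * (τ:ℤ)) (c * (τ:ℤ) + τ - 1)) (extI I₁ u₁)) else 0)
        * (if extI I₂ u₂ ∈ S_T then P (cyl I₂ (extI I₂ u₂)) else 0) := by
    intro u₁ u₂
    have hmemA : (extI (I₁ ∪ I₂) (glue I₁ I₂ (u₁, u₂)) ∈ S_A) ↔ (extI I₁ u₁ ∈ S_A) :=
      hdetA _ _ (fun n hn => extI_glue_left u₁ u₂ hn)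
    have hmemT : (extI (I₁ ∪ I₂) (glue I₁ I₂ (u₁, u₂)) ∈ S_T) ↔ (extI I₂ u₂ ∈ S_T) :=
      hdetT _ _ (fun n hn => extI_glue_right hdisj u₁ u₂ hn)
    by_cases c₁ : extI I₁ u₁ ∈ S_A
    · by_cases c₂ : extI I₂ u₂ ∈ S_T
      · rw [if_pos (Set.mem_inter (hmemA.mpr c₁) (hmemT.mpr c₂)), if_pos c₁, if_pos c₂]
        set w : Conf N := extI (I₁ ∪ I₂) (glue I₁ I₂ (u₁, u₂)) with hw
        -- block is all-false
        have hbinz : binMap τ (extI I₂ u₂) c = zPat N := by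
          have h := c₂ c (by rw [Finset.mem_Icc]; omega)
          rw [h, hy]
        have hblock : ∀ n ∈ Finset.Icc (c * (τ:ℤ)) (c * (τ:ℤ) + τ - 1),
            extI I₂ u₂ n = zPat N := window_false hbinz
        have hsub : ∀ n ∈ Finset.Icc (c * (τ:ℤ)) (c * (τ:ℤ) + τ - 1), n ∈ I₂ := by
          intro n hn
          rw [Finset.mem_Icc] at hn
          rw [hI₂, Finset.mem_Icc]
          omega
        have hwblock : ∀ n ∈ Finset.Icc (c * (τ:ℤ)) (c * (τ:ℤ) + τ - 1), w n = zPat N := by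
          intro n hn
          rw [hw, extI_glue_right hdisj u₁ u₂ (hsub n hn)]
          exact hblock n hn
        have e2 : P (cyl (Finset.Icc (c * (τ:ℤ)) (c * (τ:ℤ) + τ - 1)) w)
            = P (cyl (Finset.Icc (c * (τ:ℤ)) (c * (τ:ℤ) + τ - 1)) (fun _ => zPat N)) :=
          congrArg P (cyl_congr hwblock)
        have e3 : cyl (Finset.Icc (lo * (τ:ℤ)) (c * (τ:ℤ) + τ - 1)) w
            = cyl (Finset.Icc (lo * (τ:ℤ)) (c * (τ:ℤ) + τ - 1)) (extI I₁ u₁) := by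
          apply cyl_congr
          intro n hn
          rw [Finset.mem_Icc] at hn
          by_cases h1 : n ≤ c * (τ:ℤ) - 1
          · have hn1 : n ∈ I₁ := by rw [hI₁, Finset.mem_Icc]; omega
            rw [hw, extI_glue_left u₁ u₂ hn1]
          · have hn2 : n ∈ Finset.Icc (c * (τ:ℤ)) (c * (τ:ℤ) + τ - 1) := by
              rw [Finset.mem_Icc]; omega
            rw [hwblock n hn2, extI_not_mem]
            rw [hI₁, Finset.mem_Icc]; omega
        have e4 : cyl (Finset.Icc (c * (τ:ℤ)) (hi * (τ:ℤ) + τ - 1)) w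
            = cyl I₂ (extI I₂ u₂) := by
          show cyl I₂ w = cyl I₂ (extI I₂ u₂)
          apply cyl_congr
          intro n hn
          rw [hw, extI_glue_right hdisj u₁ u₂ hn]
        have bi := block_indep P hshift hD hτD hpos hMarkov w (lo * (τ:ℤ)) (c * (τ:ℤ))
          (hi * (τ:ℤ) + τ - 1) hup (by omega)
        rw [hIeq, ← e2, bi, e3, e4]
      · rw [if_neg (fun h => c₂ (hmemT.mp h.2)), if_neg c₂]
        simp
    · rw [if_neg (fun h => c₁ (hmemA.mp h.1)), if_neg c₁]
      simp
  -- assemble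
  rw [Finset.sum_mul, ← Equiv.sum_comp (Equiv.ofBijective _ (glue_bijective hdisj))]
  refine Eq.trans (Fintype.sum_prod_type _) ?_
  refine Eq.trans (Finset.sum_congr rfl fun u₁ _ => Finset.sum_congr rfl fun u₂ _ =>
    by exact step1 u₁ u₂) ?_
  exact (Finset.sum_mul_sum _ _ _ _).symm

end

end VLM

open VLM

/-- **Proposition 1** (variable-length memory of the binned chain).
If `τ ≥ D` and the finite past `x` on `{-m, …, -1}` has its first occurrence of the
empty pattern `z` (going back from `-1`) exactly at position `-ℓ`, then conditioning
the binned chain on the whole past `{-m, …, -1}` equals conditioning on `{-ℓ, …, -1}`. -/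
theorem binned_chain_variable_length_memory
    {N D τ : ℕ} (hN : 1 ≤ N) (hD : 1 ≤ D) (hτD : D ≤ τ)
    (P : Measure (Conf N)) [IsProbabilityMeasure P]
    (hshift : Measure.map shiftMap P = P)
    (hpos : PosCyl P) (hMarkov : MarkovOrder P D)
    (m : ℕ) (hm : 1 ≤ m) (x : ℤ → Pat N) (ℓ : ℕ)
    (hℓ1 : 1 ≤ ℓ) (hℓm : ℓ ≤ m)
    (hz : x (-(ℓ : ℤ)) = zPat N)
    (hnz : ∀ j : ℕ, 1 ≤ j → j < ℓ → x (-(j : ℤ)) ≠ zPat N)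
    (a : Pat N) :
    condProb (Measure.map (binMap τ) P) {ω | ω 0 = a}
        (cyl (Finset.Icc (-(m : ℤ)) (-1)) x)
      = condProb (Measure.map (binMap τ) P) {ω | ω 0 = a}
        (cyl (Finset.Icc (-(ℓ : ℤ)) (-1)) x) := by
  classical
  have hτ1 : 1 ≤ τ := hD.trans hτD
  set x' : ℤ → Pat N := Function.update x 0 a with hx'
  have hx'0 : x' 0 = a := Function.update_self 0 a x
  have hx'n : ∀ n : ℤ, n ≠ 0 → x' n = x n := fun n hn => Function.update_of_ne hn a x
  have hECm : {ω : Conf N | ω 0 = a} ∩ cyl (Finset.Icc (-(m:ℤ)) (-1)) x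
      = cyl (Finset.Icc (-(m:ℤ)) 0) x' := by
    rw [← cyl_insert_zero (s := -(m:ℤ)) (by omega) x', hx'0]
    congr 1
    exact cyl_congr fun n hn => (hx'n n (by rw [Finset.mem_Icc] at hn; omega)).symm
  have hECl : {ω : Conf N | ω 0 = a} ∩ cyl (Finset.Icc (-(ℓ:ℤ)) (-1)) x
      = cyl (Finset.Icc (-(ℓ:ℤ)) 0) x' := by
    rw [← cyl_insert_zero (s := -(ℓ:ℤ)) (by omega) x', hx'0]
    congr 1
    exact cyl_congr fun n hn => (hx'n n (by rw [Finset.mem_Icc] at hn; omega)).symm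
  have hyz' : x' (-(ℓ:ℤ)) = zPat N := by rw [hx'n _ (by omega)]; exact hz
  have K1 := key_core P hshift hD hτD hpos hMarkov (-(m:ℤ)) (-(ℓ:ℤ)) 0
    (by omega) (by omega) x' hyz'
  have K2 := key_core P hshift hD hτD hpos hMarkov (-(m:ℤ)) (-(ℓ:ℤ)) (-1)
    (by omega) (by omega) x hz
  have hGx : cyl (Finset.Icc (-(m:ℤ)) (-(ℓ:ℤ) - 1)) x'
      = cyl (Finset.Icc (-(m:ℤ)) (-(ℓ:ℤ) - 1)) x :=
    cyl_congr fun n hn => hx'n n (by rw [Finset.mem_Icc] at hn; omega)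
  rw [hGx] at K1
  set Z := P (cyl (Finset.Icc (-(ℓ:ℤ) * τ) (-(ℓ:ℤ) * τ + τ - 1))
    (fun _ => zPat N)) with hZ
  set A1 := P (binMap τ ⁻¹' cyl (Finset.Icc (-(m:ℤ)) 0) x') with hA1
  set A2 := P (binMap τ ⁻¹' cyl (Finset.Icc (-(m:ℤ)) (-1)) x) with hA2
  set B1 := P (binMap τ ⁻¹' cyl (Finset.Icc (-(ℓ:ℤ)) 0) x') with hB1
  set B2 := P (binMap τ ⁻¹' cyl (Finset.Icc (-(ℓ:ℤ)) (-1)) x) with hB2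
  obtain ⟨G, hG1, hG2⟩ : ∃ g, A1 * Z = g * B1 ∧ A2 * Z = g * B2 := ⟨_, K1, K2⟩
  have hZ0 : Z ≠ 0 := by rw [hZ]; exact (hpos _ _).ne'
  have hZt : Z ≠ ⊤ := by rw [hZ]; exact measure_ne_top P _
  have cross : A1 * B2 = B1 * A2 := by
    apply (ENNReal.mul_left_inj hZ0 hZt).mp
    calc A1 * B2 * Z = (A1 * Z) * B2 := by ring
    _ = (G * B1) * B2 := by rw [hG1]
    _ = B1 * (G * B2) := by ring
    _ = B1 * (A2 * Z) := by rw [hG2]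
    _ = B1 * A2 * Z := by ring
  have hms1 : MeasurableSet ({ω : Conf N | ω 0 = a} ∩ cyl (Finset.Icc (-(m:ℤ)) (-1)) x) :=
    (measurableSet_fiber a).inter (measurableSet_cyl _ _)
  have hms2 : MeasurableSet ({ω : Conf N | ω 0 = a} ∩ cyl (Finset.Icc (-(ℓ:ℤ)) (-1)) x) :=
    (measurableSet_fiber a).inter (measurableSet_cyl _ _)
  have hA2pos : 0 < A2.toReal := by
    rw [hA2]
    exact ENNReal.toReal_pos (pos_binPre hτ1 P hpos _ _ x).ne' (measure_ne_top P _)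
  have hB2pos : 0 < B2.toReal := by
    rw [hB2]
    exact ENNReal.toReal_pos (pos_binPre hτ1 P hpos _ _ x).ne' (measure_ne_top P _)
  unfold condProb
  rw [Measure.map_apply (measurable_binMap τ) hms1,
      Measure.map_apply (measurable_binMap τ) (measurableSet_cyl _ _),
      Measure.map_apply (measurable_binMap τ) hms2,
      Measure.map_apply (measurable_binMap τ) (measurableSet_cyl _ _),
      hECm, hECl, ← hA1, ← hA2, ← hB1, ← hB2]
  rw [div_eq_div_iff hA2pos.ne' hB2pos.ne']
  have hc := congrArg ENNReal.toReal cross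
  rw [ENNReal.toReal_mul, ENNReal.toReal_mul] at hc
  linarith [hc]
end

section
/- Conditional independence of the binned present from the far past given a past ending in an empty window (key identity in the proof of Proposition 1). Assume τ ≥ D. Let ℓ ≥ 1 and x : {−ℓ,…,−1} → A with x(−ℓ) = z, and set C = {X₋ℓ = x(−ℓ),…,X₋₁ = x(−1)} ⊆ Ω. Then for every a ∈ A and every finite cylinder event A₀ depending only on the coordinates Xₙ with n ≤ −ℓ−1, one has P⁽ᵇ⁾({X₀ = a} ∩ A₀ ∩ C) · P⁽ᵇ⁾(C) = P⁽ᵇ⁾({X₀ = a} ∩ C) · P⁽ᵇ⁾(A₀ ∩ C). -/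
open MeasureTheory Filter

/-! ### Auxiliary material -/

namespace BinAux

variable {N : ℕ}

/-- Cylinders are measurable. -/
lemma cyl_measurableSet (s : Finset ℤ) (v : ℤ → Pat N) : MeasurableSet (cyl s v) := by
  have h : cyl s v = ⋂ n ∈ (s : Set ℤ), (fun ω : Conf N => ω n) ⁻¹' {v n} := by
    ext ω; simp [cyl]
  rw [h]
  exact MeasurableSet.biInter s.countable_toSet
    (fun n _ => (measurable_pi_apply n) (MeasurableSet.singleton _))

lemma measurable_shiftMap : Measurable (shiftMap (N := N)) :=
  measurable_pi_lambda _ (fun n => measurable_pi_apply (n + 1))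

lemma measurable_any (l : List ℕ) (g : ℕ → ℤ) (k : Fin N) :
    Measurable (fun ω : Conf N => l.any fun i => ω (g i) k) := by
  induction l with
  | nil => simpa using measurable_const
  | cons a t ih =>
      have h1 : Measurable (fun ω : Conf N => ω (g a) k) :=
        (measurable_pi_apply k).comp (measurable_pi_apply (g a))
      have h2 : Measurable (fun ω : Conf N =>
          ((fun ω : Conf N => ω (g a) k) ω, (fun ω : Conf N => t.any fun i => ω (g i) k) ω)) :=
        h1.prodMk ih
      have h3 : Measurable (fun p : Bool × Bool => p.1 || p.2) := measurable_of_finite _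
      have : (fun ω : Conf N => (a :: t).any fun i => ω (g i) k)
          = (fun p : Bool × Bool => p.1 || p.2) ∘ (fun ω : Conf N =>
              (ω (g a) k, t.any fun i => ω (g i) k)) := by
        funext ω; simp [List.any_cons]
      rw [this]
      exact h3.comp h2

lemma measurable_binMap (τ : ℕ) : Measurable (binMap (N := N) τ) := by
  apply measurable_pi_lambda
  intro m
  apply measurable_pi_lambda
  intro k
  exact measurable_any (List.range τ) (fun i => m * (τ : ℤ) + (i : ℤ)) k

/-- A set determined by the coordinates in `T`. -/
def Det (T : Finset ℤ) (E : Set (Conf N)) : Prop :=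
  ∀ ω ω' : Conf N, (∀ n ∈ T, ω n = ω' n) → ω ∈ E → ω' ∈ E

lemma Det.mono {T T' : Finset ℤ} {E : Set (Conf N)} (h : Det T E) (hs : T ⊆ T') :
    Det T' E := fun ω ω' hag => h ω ω' (fun n hn => hag n (hs hn))

lemma Det.inter {T : Finset ℤ} {E F : Set (Conf N)} (hE : Det T E) (hF : Det T F) :
    Det T (E ∩ F) := fun ω ω' hag hm => ⟨hE ω ω' hag hm.1, hF ω ω' hag hm.2⟩

/-- Extension of a partial configuration on `T` by the all-false pattern. -/
def extFn (T : Finset ℤ) (v : {n // n ∈ T} → Pat N) : ℤ → Pat N :=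
  fun n => if h : n ∈ T then v ⟨n, h⟩ else zPat N

lemma extFn_mem {T : Finset ℤ} (v : {n // n ∈ T} → Pat N) {n : ℤ} (h : n ∈ T) :
    extFn T v n = v ⟨n, h⟩ := by simp [extFn, h]

/-- The family of restrictions whose extensions lie in `E`. -/
noncomputable def VSet (T : Finset ℤ) (E : Set (Conf N)) : Finset ({n // n ∈ T} → Pat N) :=
  @Finset.filter _ (fun v => extFn T v ∈ E) (Classical.decPred _) Finset.univ

lemma mem_VSet {T : Finset ℤ} {E : Set (Conf N)} (v : {n // n ∈ T} → Pat N) :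
    v ∈ VSet T E ↔ extFn T v ∈ E := by
  classical
  simp [VSet]

lemma cyl_congr {T : Finset ℤ} {v v' : ℤ → Pat N} (h : ∀ n ∈ T, v n = v' n) :
    cyl T v = cyl T v' := by
  ext ω
  constructor <;> intro H n hn
  · exact (H n hn).trans (h n hn)
  · exact (H n hn).trans (h n hn).symm

lemma cyl_inter (T1 T2 : Finset ℤ) (v : ℤ → Pat N) :
    cyl T1 v ∩ cyl T2 v = cyl (T1 ∪ T2) v := by
  ext ω
  simp only [cyl, Set.mem_inter_iff, Set.mem_setOf_eq, Finset.mem_union]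
  constructor
  · rintro ⟨h1, h2⟩ n (hn | hn)
    · exact h1 n hn
    · exact h2 n hn
  · intro h
    exact ⟨fun n hn => h n (Or.inl hn), fun n hn => h n (Or.inr hn)⟩

/-- Decomposition of a `T`-determined set into disjoint cylinders on `T`. -/
lemma decomp (P : Measure (Conf N)) (T : Finset ℤ) (E X : Set (Conf N))
    (hE : Det T E) (hX : MeasurableSet X) :
    P (E ∩ X) = ∑ v ∈ VSet T E, P (cyl T (extFn T v) ∩ X) := by
  classical
  have hset : E ∩ X = ⋃ v ∈ VSet T E, (cyl T (extFn T v) ∩ X) := by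
    ext ω
    simp only [Set.mem_inter_iff, Set.mem_iUnion, exists_prop]
    constructor
    · rintro ⟨hE', hX'⟩
      refine ⟨fun t => ω t.1, ?_, ?_, hX'⟩
      · rw [mem_VSet]
        exact hE ω _ (fun n hn => by simp [extFn, hn]) hE'
      · intro n hn
        simp [extFn, hn]
    · rintro ⟨v, hv, hc, hX'⟩
      rw [mem_VSet] at hv
      exact ⟨hE _ ω (fun n hn => (hc n hn).symm) hv, hX'⟩
  rw [hset]
  refine measure_biUnion_finset ?_ ?_
  · intro v1 h1 v2 h2 hne
    refine Set.disjoint_left.mpr ?_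
    rintro ω ⟨hc1, _⟩ ⟨hc2, _⟩
    apply hne
    funext t
    have e1 := hc1 t.1 t.2
    have e2 := hc2 t.1 t.2
    rw [extFn_mem _ t.2] at e1
    rw [extFn_mem _ t.2] at e2
    rw [← e1, ← e2]
  · exact fun v _ => (cyl_measurableSet T _).inter hX

section Shift

variable {D : ℕ} (P : Measure (Conf N)) [IsProbabilityMeasure P]

/-- One-step shift of a cylinder on an interval. -/
lemma shift_step (hshift : Measure.map shiftMap P = P)
    (a b : ℤ) (v v' : ℤ → Pat N) (hv : ∀ n, v' n = v (n - 1)) :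
    P (cyl (Finset.Icc a b) v) = P (cyl (Finset.Icc (a + 1) (b + 1)) v') := by
  have hpre : shiftMap ⁻¹' (cyl (Finset.Icc a b) v)
      = cyl (Finset.Icc (a + 1) (b + 1)) v' := by
    ext ω
    simp only [Set.mem_preimage, cyl, Set.mem_setOf_eq, Finset.mem_Icc, shiftMap]
    constructor
    · intro h n hn
      have := h (n - 1) (by omega)
      rw [hv n]
      simpa using this
    · intro h n hn
      have := h (n + 1) (by omega)
      rw [hv (n + 1)] at this
      simpa using this
  calc P (cyl (Finset.Icc a b) v)
      = (Measure.map shiftMap P) (cyl (Finset.Icc a b) v) := by rw [hshift]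
    _ = P (shiftMap ⁻¹' (cyl (Finset.Icc a b) v)) :=
        Measure.map_apply measurable_shiftMap (cyl_measurableSet _ _)
    _ = P (cyl (Finset.Icc (a + 1) (b + 1)) v') := by rw [hpre]

lemma shift_step_down (hshift : Measure.map shiftMap P = P)
    (a b : ℤ) (v v' : ℤ → Pat N) (hv : ∀ n, v' n = v (n + 1)) :
    P (cyl (Finset.Icc a b) v) = P (cyl (Finset.Icc (a - 1) (b - 1)) v') := by
  have := shift_step P hshift (a - 1) (b - 1) v' v
    (fun n => by rw [hv (n - 1)]; congr 1; ring)
  rw [show a - 1 + 1 = a by ring, show b - 1 + 1 = b by ring] at this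
  exact this.symm

/-- Shift invariance for interval cylinders, by any integer amount. -/
lemma shift_Icc (hshift : Measure.map shiftMap P = P) (t : ℤ) :
    ∀ (a b : ℤ) (v v' : ℤ → Pat N), (∀ n, v' n = v (n - t)) →
      P (cyl (Finset.Icc a b) v) = P (cyl (Finset.Icc (a + t) (b + t)) v') := by
  induction t using Int.induction_on with
  | zero =>
      intro a b v v' hv
      rw [show a + 0 = a by ring, show b + 0 = b by ring]
      refine congrArg P (cyl_congr ?_)
      intro n _
      rw [hv n]
      congr 1
      ring
  | succ i ih =>
      intro a b v v' hv
      have h1 := ih a b v (fun n => v (n - i)) (fun n => rfl)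
      have h2 := shift_step P hshift (a + i) (b + i) (fun n => v (n - i)) v'
        (fun n => by rw [hv n]; congr 1; ring)
      rw [h1, h2, show a + i + 1 = a + ((i : ℤ) + 1) by ring,
        show b + i + 1 = b + ((i : ℤ) + 1) by ring]
  | pred i ih =>
      intro a b v v' hv
      have h1 := ih a b v (fun n => v (n - (-(i : ℤ)))) (fun n => rfl)
      have h2 := shift_step_down P hshift (a + (-(i : ℤ))) (b + (-(i : ℤ)))
        (fun n => v (n - (-(i : ℤ)))) v' (fun n => by rw [hv n]; congr 1; ring)
      rw [h1, h2, show a + (-(i : ℤ)) - 1 = a + (-(i : ℤ) - 1) by ring,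
        show b + (-(i : ℤ)) - 1 = b + (-(i : ℤ) - 1) by ring]

end Shift

section Markov

variable {D : ℕ} (P : Measure (Conf N)) [IsProbabilityMeasure P]

lemma inter_present (w : ℤ → Pat N) (m : ℤ) (hm : m ≤ 0) :
    {ω : Conf N | ω 0 = w 0} ∩ cyl (Finset.Icc m (-1)) w = cyl (Finset.Icc m 0) w := by
  ext ω
  simp only [Set.mem_inter_iff, Set.mem_setOf_eq, cyl, Finset.mem_Icc]
  constructor
  · rintro ⟨h0, h⟩ n ⟨h1, h2⟩
    rcases eq_or_lt_of_le h2 with h3 | h3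
    · rw [h3]; exact h0
    · exact h n ⟨h1, by omega⟩
  · intro h
    exact ⟨h 0 ⟨hm, le_refl 0⟩, fun n hn => h n ⟨hn.1, by omega⟩⟩

/-- The basic (unshifted) Markov cross-multiplication. -/
lemma markov_cross (hpos : PosCyl P) (hMarkov : MarkovOrder P D) (hD : 1 ≤ D)
    (w : ℤ → Pat N) (m : ℕ) (hm : D ≤ m) :
    P (cyl (Finset.Icc (-(m : ℤ)) 0) w) * P (cyl (Finset.Icc (-(D : ℤ)) (-1)) w)
      = P (cyl (Finset.Icc (-(D : ℤ)) 0) w) * P (cyl (Finset.Icc (-(m : ℤ)) (-1)) w) := by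
  have h1 := hMarkov (w 0) m hm w
  unfold condProb at h1
  rw [inter_present w (-(m : ℤ)) (by omega), inter_present w (-(D : ℤ)) (by omega)] at h1
  have hb : 0 < (P (cyl (Finset.Icc (-(m : ℤ)) (-1)) w)).toReal :=
    ENNReal.toReal_pos (hpos _ _).ne' (measure_ne_top P _)
  have hd : 0 < (P (cyl (Finset.Icc (-(D : ℤ)) (-1)) w)).toReal :=
    ENNReal.toReal_pos (hpos _ _).ne' (measure_ne_top P _)
  rw [div_eq_div_iff hb.ne' hd.ne'] at h1
  rw [← ENNReal.toReal_mul, ← ENNReal.toReal_mul] at h1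
  exact (ENNReal.toReal_eq_toReal_iff'
    (ENNReal.mul_ne_top (measure_ne_top P _) (measure_ne_top P _))
    (ENNReal.mul_ne_top (measure_ne_top P _) (measure_ne_top P _))).mp h1

/-- Shifted one-step Markov cross-multiplication. -/
lemma markov_step (hshift : Measure.map shiftMap P = P)
    (hpos : PosCyl P) (hMarkov : MarkovOrder P D) (hD : 1 ≤ D)
    (w : ℤ → Pat N) (t p : ℤ) (hp : p ≤ t - D) :
    P (cyl (Finset.Icc p t) w) * P (cyl (Finset.Icc (t - D) (t - 1)) w)
      = P (cyl (Finset.Icc (t - D) t) w) * P (cyl (Finset.Icc p (t - 1)) w) := by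
  set w' : ℤ → Pat N := fun n => w (n + t) with hw'
  have hsh : ∀ a b : ℤ, P (cyl (Finset.Icc (a - t) (b - t)) w') = P (cyl (Finset.Icc a b) w) := by
    intro a b
    have := shift_Icc P hshift t (a - t) (b - t) w' w
      (fun n => by rw [hw']; simp only []; congr 1; ring)
    rw [show a - t + t = a by ring, show b - t + t = b by ring] at this
    exact this
  set m : ℕ := (t - p).toNat with hm
  have hmz : (m : ℤ) = t - p := Int.toNat_of_nonneg (by omega)
  have hDm : D ≤ m := by omega
  have key := markov_cross P hpos hMarkov hD w' m hDm
  rw [show (-(m : ℤ)) = p - t by omega] at key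
  rw [show (-(D : ℤ)) = (t - D) - t by ring] at key
  rw [show (0 : ℤ) = t - t by ring, show (-1 : ℤ) = (t - 1) - t by ring] at key
  rw [hsh p t, hsh (t - D) (t - 1), hsh (t - D) t, hsh p (t - 1)] at key
  exact key

lemma ennreal_mul_right_cancel {x y a : ENNReal} (h0 : a ≠ 0) (ht : a ≠ ⊤)
    (h : x * a = y * a) : x = y := by
  have h2 := congrArg (· * a⁻¹) h
  simpa [mul_assoc, ENNReal.mul_inv_cancel h0 ht] using h2

/-- A block of length at least `D` makes past and future cylinders conditionally
independent (cylinder version, on intervals). -/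
lemma markov_split (hshift : Measure.map shiftMap P = P)
    (hpos : PosCyl P) (hMarkov : MarkovOrder P D) (hD : 1 ≤ D)
    (w : ℤ → Pat N) (p c e : ℤ) (hpc : p ≤ c) (hce : c + D ≤ e + 1) :
    ∀ q, e ≤ q →
      P (cyl (Finset.Icc p q) w) * P (cyl (Finset.Icc c e) w)
        = P (cyl (Finset.Icc c q) w) * P (cyl (Finset.Icc p e) w) := by
  refine Int.le_induction (mul_comm _ _) ?_
  intro q hq ih
  have h1 := markov_step P hshift hpos hMarkov hD w (q + 1) p (by omega)
  have h2 := markov_step P hshift hpos hMarkov hD w (q + 1) c (by omega)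
  rw [show q + 1 - 1 = q by ring] at h1 h2
  set A1 := P (cyl (Finset.Icc (q + 1 - D) q) w) with hA1
  set B1 := P (cyl (Finset.Icc (q + 1 - D) (q + 1)) w) with hB1
  have hA1ne : A1 ≠ 0 := (hpos _ _).ne'
  have hA1top : A1 ≠ ⊤ := measure_ne_top P _
  apply ennreal_mul_right_cancel hA1ne hA1top
  calc P (cyl (Finset.Icc p (q + 1)) w) * P (cyl (Finset.Icc c e) w) * A1
      = (P (cyl (Finset.Icc p (q + 1)) w) * A1) * P (cyl (Finset.Icc c e) w) := by ring
    _ = (B1 * P (cyl (Finset.Icc p q) w)) * P (cyl (Finset.Icc c e) w) := by rw [h1]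
    _ = B1 * (P (cyl (Finset.Icc p q) w) * P (cyl (Finset.Icc c e) w)) := by ring
    _ = B1 * (P (cyl (Finset.Icc c q) w) * P (cyl (Finset.Icc p e) w)) := by rw [ih]
    _ = (B1 * P (cyl (Finset.Icc c q) w)) * P (cyl (Finset.Icc p e) w) := by ring
    _ = (P (cyl (Finset.Icc c (q + 1)) w) * A1) * P (cyl (Finset.Icc p e) w) := by rw [h2]
    _ = P (cyl (Finset.Icc c (q + 1)) w) * P (cyl (Finset.Icc p e) w) * A1 := by ring

/-- Combination of past, block and future boundary conditions. -/
def comb3 (c e : ℤ) (vG w vH : ℤ → Pat N) : ℤ → Pat N :=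
  fun n => if n < c then vG n else if n ≤ e then w n else vH n

/-- Conditional independence across a block of length ≥ `D`:
event version, for events determined by past/future coordinates. -/
lemma split (hshift : Measure.map shiftMap P = P)
    (hpos : PosCyl P) (hMarkov : MarkovOrder P D) (hD : 1 ≤ D)
    (w : ℤ → Pat N) (p c e q : ℤ) (hpc : p ≤ c) (hce : c + D ≤ e + 1) (heq : e ≤ q)
    (G H : Set (Conf N)) (hG : Det (Finset.Icc p (c - 1)) G)
    (hH : Det (Finset.Icc (e + 1) q) H)
    (hGm : MeasurableSet G) (hHm : MeasurableSet H) :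
    P (G ∩ cyl (Finset.Icc c e) w ∩ H) * P (cyl (Finset.Icc c e) w)
      = P (G ∩ cyl (Finset.Icc c e) w) * P (cyl (Finset.Icc c e) w ∩ H) := by
  classical
  set TG := Finset.Icc p (c - 1) with hTG
  set TH := Finset.Icc (e + 1) q with hTH
  set Z := cyl (Finset.Icc c e) w with hZ
  have hZm : MeasurableSet Z := cyl_measurableSet _ _
  -- auxiliary set identities
  have hIcc1 : TG ∪ Finset.Icc c e = Finset.Icc p e := by
    ext n; simp only [hTG, Finset.mem_union, Finset.mem_Icc]; omega
  have hIcc2 : Finset.Icc c e ∪ TH = Finset.Icc c q := by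
    ext n; simp only [hTH, Finset.mem_union, Finset.mem_Icc]; omega
  have hIcc3 : Finset.Icc p e ∪ TH = Finset.Icc p q := by
    ext n; simp only [hTH, Finset.mem_union, Finset.mem_Icc]; omega
  -- per-term cylinder computations
  have cylG : ∀ g : {n // n ∈ TG} → Pat N, ∀ h : {n // n ∈ TH} → Pat N,
      cyl TG (extFn TG g) ∩ Z = cyl (Finset.Icc p e) (comb3 c e (extFn TG g) w (extFn TH h)) := by
    intro g h
    rw [hZ, show cyl TG (extFn TG g) = cyl TG (comb3 c e (extFn TG g) w (extFn TH h)) from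
        cyl_congr (fun n hn => by
          rw [hTG, Finset.mem_Icc] at hn
          simp only [comb3, if_pos (show n < c by omega)]),
      show cyl (Finset.Icc c e) w = cyl (Finset.Icc c e) (comb3 c e (extFn TG g) w (extFn TH h)) from
        cyl_congr (fun n hn => by
          rw [Finset.mem_Icc] at hn
          simp only [comb3, if_neg (show ¬ n < c by omega), if_pos hn.2]),
      cyl_inter, hIcc1]
  have cylH : ∀ g : {n // n ∈ TG} → Pat N, ∀ h : {n // n ∈ TH} → Pat N,
      Z ∩ cyl TH (extFn TH h) = cyl (Finset.Icc c q) (comb3 c e (extFn TG g) w (extFn TH h)) := by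
    intro g h
    rw [hZ, show cyl TH (extFn TH h) = cyl TH (comb3 c e (extFn TG g) w (extFn TH h)) from
        cyl_congr (fun n hn => by
          rw [hTH, Finset.mem_Icc] at hn
          simp only [comb3, if_neg (show ¬ n < c by omega), if_neg (show ¬ n ≤ e by omega)]),
      show cyl (Finset.Icc c e) w = cyl (Finset.Icc c e) (comb3 c e (extFn TG g) w (extFn TH h)) from
        cyl_congr (fun n hn => by
          rw [Finset.mem_Icc] at hn
          simp only [comb3, if_neg (show ¬ n < c by omega), if_pos hn.2]),
      cyl_inter, hIcc2]
  have cylGH : ∀ g : {n // n ∈ TG} → Pat N, ∀ h : {n // n ∈ TH} → Pat N,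
      cyl TH (extFn TH h) ∩ (cyl TG (extFn TG g) ∩ Z)
        = cyl (Finset.Icc p q) (comb3 c e (extFn TG g) w (extFn TH h)) := by
    intro g h
    rw [cylG g h,
      show cyl TH (extFn TH h) = cyl TH (comb3 c e (extFn TG g) w (extFn TH h)) from
        cyl_congr (fun n hn => by
          rw [hTH, Finset.mem_Icc] at hn
          simp only [comb3, if_neg (show ¬ n < c by omega), if_neg (show ¬ n ≤ e by omega)]),
      Set.inter_comm, cyl_inter, hIcc3]
  -- independence of the two boundary pieces
  have cylGonly : ∀ g : {n // n ∈ TG} → Pat N, ∀ h h' : {n // n ∈ TH} → Pat N,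
      cyl (Finset.Icc p e) (comb3 c e (extFn TG g) w (extFn TH h))
        = cyl (Finset.Icc p e) (comb3 c e (extFn TG g) w (extFn TH h')) := by
    intro g h h'
    refine cyl_congr (fun n hn => ?_)
    rw [Finset.mem_Icc] at hn
    by_cases hc1 : n < c
    · simp only [comb3, if_pos hc1]
    · simp only [comb3, if_neg hc1, if_pos hn.2]
  have cylHonly : ∀ g g' : {n // n ∈ TG} → Pat N, ∀ h : {n // n ∈ TH} → Pat N,
      cyl (Finset.Icc c q) (comb3 c e (extFn TG g) w (extFn TH h))
        = cyl (Finset.Icc c q) (comb3 c e (extFn TG g') w (extFn TH h)) := by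
    intro g g' h
    refine cyl_congr (fun n hn => ?_)
    rw [Finset.mem_Icc] at hn
    simp only [comb3, if_neg (show ¬ n < c by omega)]
  -- decompositions
  have hGZH : G ∩ Z ∩ H = G ∩ (Z ∩ H) := by rw [Set.inter_assoc]
  have decG1 : P (G ∩ (Z ∩ H)) = ∑ g ∈ VSet TG G, P (cyl TG (extFn TG g) ∩ (Z ∩ H)) :=
    decomp P TG G (Z ∩ H) hG (hZm.inter hHm)
  have decG2 : P (G ∩ Z) = ∑ g ∈ VSet TG G, P (cyl TG (extFn TG g) ∩ Z) :=
    decomp P TG G Z hG hZm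
  have decH1 : ∀ X : Set (Conf N), MeasurableSet X →
      P (X ∩ H) = ∑ h ∈ VSet TH H, P (cyl TH (extFn TH h) ∩ X) := by
    intro X hX
    rw [Set.inter_comm]
    exact decomp P TH H X hH hX
  -- fix an arbitrary future boundary used for G-only cylinders
  have main : P (G ∩ (Z ∩ H)) * P Z = P (G ∩ Z) * P (Z ∩ H) := by
    rw [decG1, decG2, decH1 Z hZm]
    have hterm : ∀ g ∈ VSet TG G, P (cyl TG (extFn TG g) ∩ (Z ∩ H))
        = ∑ h ∈ VSet TH H, P (cyl (Finset.Icc p q) (comb3 c e (extFn TG g) w (extFn TH h))) := by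
      intro g _
      rw [show cyl TG (extFn TG g) ∩ (Z ∩ H) = (cyl TG (extFn TG g) ∩ Z) ∩ H by
        rw [Set.inter_assoc]]
      rw [decH1 _ ((cyl_measurableSet _ _).inter hZm)]
      refine Finset.sum_congr rfl (fun h _ => ?_)
      rw [cylGH g h]
    rw [Finset.sum_congr rfl hterm]
    rw [Finset.sum_mul]
    have hterm2 : ∀ g ∈ VSet TG G,
        (∑ h ∈ VSet TH H, P (cyl (Finset.Icc p q) (comb3 c e (extFn TG g) w (extFn TH h)))) * P Z
        = ∑ h ∈ VSet TH H, P (cyl TG (extFn TG g) ∩ Z)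
            * P (cyl (Finset.Icc c q) (comb3 c e (extFn TG g) w (extFn TH h))) := by
      intro g hg
      rw [Finset.sum_mul]
      refine Finset.sum_congr rfl (fun h hh => ?_)
      have hZeq : P Z = P (cyl (Finset.Icc c e) (comb3 c e (extFn TG g) w (extFn TH h))) := by
        rw [hZ]
        exact congrArg P (cyl_congr (fun n hn => by
          rw [Finset.mem_Icc] at hn
          simp only [comb3, if_neg (show ¬ n < c by omega), if_pos hn.2]))
      rw [hZeq, markov_split P hshift hpos hMarkov hD _ p c e hpc hce q heq, cylG g h]
      ring
    rw [Finset.sum_congr rfl hterm2]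
    -- now sum over h of (P(cylG g ∩ Z) * P (Icc c q ...)) ; separate the sums
    have hsep : ∀ g ∈ VSet TG G, ∀ h ∈ VSet TH H,
        P (cyl (Finset.Icc c q) (comb3 c e (extFn TG g) w (extFn TH h))) = P (Z ∩ cyl TH (extFn TH h)) := by
      intro g _ h _
      rw [← cylH g h]
    calc ∑ g ∈ VSet TG G, ∑ h ∈ VSet TH H,
          P (cyl TG (extFn TG g) ∩ Z)
            * P (cyl (Finset.Icc c q) (comb3 c e (extFn TG g) w (extFn TH h)))
        = ∑ g ∈ VSet TG G, ∑ h ∈ VSet TH H,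
            P (cyl TG (extFn TG g) ∩ Z) * P (cyl TH (extFn TH h) ∩ Z) := by
          refine Finset.sum_congr rfl (fun g hg => Finset.sum_congr rfl (fun h hh => ?_))
          rw [hsep g hg h hh, Set.inter_comm Z (cyl TH (extFn TH h))]
      _ = (∑ g ∈ VSet TG G, P (cyl TG (extFn TG g) ∩ Z))
            * (∑ h ∈ VSet TH H, P (cyl TH (extFn TH h) ∩ Z)) := by
          rw [Finset.sum_mul_sum]
  rw [hGZH]
  exact main

end Markov

/-! ### Preimage computations for the binning map -/

lemma binMap_apply_congr {τ : ℕ} (m : ℤ) {ω ω' : Conf N}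
    (h : ∀ n ∈ Finset.Icc (m * (τ : ℤ)) (m * (τ : ℤ) + (τ : ℤ) - 1), ω n = ω' n) :
    binMap τ ω m = binMap τ ω' m := by
  funext k
  simp only [binMap]
  rw [Bool.eq_iff_iff]
  simp only [List.any_eq_true, List.mem_range]
  constructor
  · rintro ⟨i, hi, hspike⟩
    refine ⟨i, hi, ?_⟩
    rw [← h (m * (τ : ℤ) + (i : ℤ)) (by rw [Finset.mem_Icc]; omega)]
    exact hspike
  · rintro ⟨i, hi, hspike⟩
    refine ⟨i, hi, ?_⟩
    rw [h (m * (τ : ℤ) + (i : ℤ)) (by rw [Finset.mem_Icc]; omega)]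
    exact hspike

lemma det_preimage_cyl (τ : ℕ) (S : Finset ℤ) (u : ℤ → Pat N) (T : Finset ℤ)
    (hT : ∀ n ∈ S, Finset.Icc (n * (τ : ℤ)) (n * (τ : ℤ) + (τ : ℤ) - 1) ⊆ T) :
    Det T (binMap τ ⁻¹' cyl S u) := by
  intro ω ω' hag hω n hn
  rw [← binMap_apply_congr n (fun j hj => hag j (hT n hn hj))]
  exact hω n hn

lemma preimage_single_z (τ : ℕ) (m : ℤ) :
    binMap (N := N) τ ⁻¹' cyl {m} (fun _ => zPat N)
      = cyl (Finset.Icc (m * (τ : ℤ)) (m * (τ : ℤ) + (τ : ℤ) - 1)) (fun _ => zPat N) := by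
  ext ω
  simp only [Set.mem_preimage, cyl, Set.mem_setOf_eq, Finset.mem_singleton, Finset.mem_Icc]
  constructor
  · intro h n hn
    have hb := h m rfl
    funext k
    have hbk : binMap τ ω m k = false := by rw [hb]; rfl
    simp only [binMap, List.any_eq_false, List.mem_range, Bool.not_eq_true] at hbk
    have hi : (n - m * (τ : ℤ)).toNat < τ := by omega
    have := hbk (n - m * (τ : ℤ)).toNat hi
    rw [show m * (τ : ℤ) + ((n - m * (τ : ℤ)).toNat : ℤ) = n by omega] at this
    exact this
  · intro h n hn
    rw [hn]
    funext k
    show binMap τ ω m k = false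
    simp only [binMap, List.any_eq_false, List.mem_range, Bool.not_eq_true]
    intro i hi
    have := h (m * (τ : ℤ) + (i : ℤ)) (by omega)
    exact congrFun this k

lemma present_eq_cyl (a : Pat N) : {ω : Conf N | ω 0 = a} = cyl {0} (fun _ => a) := by
  ext ω
  simp [cyl]

lemma cyl_Icc_split (ℓ : ℕ) (hℓ : 1 ≤ ℓ) (x : ℤ → Pat N) :
    cyl (Finset.Icc (-(ℓ : ℤ)) (-1)) x
      = cyl {-(ℓ : ℤ)} x ∩ cyl (Finset.Icc (-(ℓ : ℤ) + 1) (-1)) x := by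
  ext ω
  simp only [cyl, Set.mem_inter_iff, Set.mem_setOf_eq, Finset.mem_Icc, Finset.mem_singleton]
  constructor
  · intro h
    refine ⟨fun n hn => by rw [hn]; exact h _ (by omega), fun n hn => h n (by omega)⟩
  · rintro ⟨h1, h2⟩ n hn
    rcases eq_or_lt_of_le hn.1 with h3 | h3
    · rw [← h3]; exact h1 _ rfl
    · exact h2 n ⟨by omega, hn.2⟩

end BinAux

open BinAux

/-- Conditional independence of the binned present from the far past given a past
ending in an empty window: if `x(-ℓ) = z`, `C = {X₋ℓ = x(-ℓ), …, X₋₁ = x(-1)}` and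
`A₀` is a finite cylinder depending only on coordinates `n ≤ -ℓ - 1`, then
`P⁽ᵇ⁾({X₀ = a} ∩ A₀ ∩ C) ⬝ P⁽ᵇ⁾(C) = P⁽ᵇ⁾({X₀ = a} ∩ C) ⬝ P⁽ᵇ⁾(A₀ ∩ C)`. -/
theorem binned_conditional_independence_given_empty_window
    {N D τ : ℕ} (hN : 1 ≤ N) (hD : 1 ≤ D) (hτD : D ≤ τ)
    (P : Measure (Conf N)) [IsProbabilityMeasure P]
    (hshift : Measure.map shiftMap P = P)
    (hpos : PosCyl P) (hMarkov : MarkovOrder P D)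
    (ℓ : ℕ) (hℓ : 1 ≤ ℓ) (x : ℤ → Pat N) (hz : x (-(ℓ : ℤ)) = zPat N)
    (s : Finset ℤ) (hs : ∀ n ∈ s, n ≤ -(ℓ : ℤ) - 1) (u : ℤ → Pat N)
    (a : Pat N) :
    (Measure.map (binMap τ) P)
        (({ω | ω 0 = a} ∩ cyl s u) ∩ cyl (Finset.Icc (-(ℓ : ℤ)) (-1)) x)
      * (Measure.map (binMap τ) P) (cyl (Finset.Icc (-(ℓ : ℤ)) (-1)) x)
    = (Measure.map (binMap τ) P)
        ({ω | ω 0 = a} ∩ cyl (Finset.Icc (-(ℓ : ℤ)) (-1)) x)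
      * (Measure.map (binMap τ) P) (cyl s u ∩ cyl (Finset.Icc (-(ℓ : ℤ)) (-1)) x) := by
  classical
  have hτ1 : 1 ≤ τ := le_trans hD hτD
  have hτZ : (1 : ℤ) ≤ (τ : ℤ) := by exact_mod_cast hτ1
  have hDZ : (1 : ℤ) ≤ (D : ℤ) := by exact_mod_cast hD
  have hτDZ : (D : ℤ) ≤ (τ : ℤ) := by exact_mod_cast hτD
  have hℓZ : (1 : ℤ) ≤ (ℓ : ℤ) := by exact_mod_cast hℓ
  -- abbreviations
  set c : ℤ := -(ℓ : ℤ) * (τ : ℤ) with hc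
  set e : ℤ := c + (τ : ℤ) - 1 with he
  set q : ℤ := (τ : ℤ) - 1 with hq
  set p : ℤ := ((insert (-(ℓ : ℤ) - 1) s).min' (Finset.insert_nonempty _ _)) * (τ : ℤ) with hp
  have hmin : (insert (-(ℓ : ℤ) - 1) s).min' (Finset.insert_nonempty _ _) ≤ -(ℓ : ℤ) - 1 :=
    Finset.min'_le _ _ (Finset.mem_insert_self _ _)
  have hptop : p ≤ (-(ℓ : ℤ) - 1) * (τ : ℤ) :=
    mul_le_mul_of_nonneg_right hmin (by omega)
  have hpc : p ≤ c := by
    have : (-(ℓ : ℤ) - 1) * (τ : ℤ) = c - (τ : ℤ) := by rw [hc]; ring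
    omega
  have hce : c + (D : ℤ) ≤ e + 1 := by omega
  have heq : e ≤ q := by
    have : -(ℓ : ℤ) * (τ : ℤ) ≤ (-1 : ℤ) * (τ : ℤ) :=
      mul_le_mul_of_nonneg_right (by omega) (by omega)
    omega
  have hbm : Measurable (binMap (N := N) τ) := measurable_binMap τ
  -- the events
  set F : Set (Conf N) := binMap τ ⁻¹' cyl {0} (fun _ => a) with hF
  set G : Set (Conf N) := binMap τ ⁻¹' cyl s u with hG
  set M : Set (Conf N) := binMap τ ⁻¹' cyl (Finset.Icc (-(ℓ : ℤ) + 1) (-1)) x with hM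
  set Z : Set (Conf N) := cyl (Finset.Icc c e) (fun _ => zPat N) with hZdef
  -- preimage of the conditioning cylinder
  have hpreC : binMap τ ⁻¹' cyl (Finset.Icc (-(ℓ : ℤ)) (-1)) x = Z ∩ M := by
    rw [cyl_Icc_split ℓ hℓ x, Set.preimage_inter]
    congr 1
    rw [show cyl {-(ℓ : ℤ)} x = cyl {-(ℓ : ℤ)} (fun _ => zPat N) from
      cyl_congr (fun n hn => by
        rw [Finset.mem_singleton] at hn
        rw [hn, hz])]
    rw [preimage_single_z τ (-(ℓ : ℤ))]
  -- measurability
  have hFm : MeasurableSet F := hbm (cyl_measurableSet _ _)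
  have hGm : MeasurableSet G := hbm (cyl_measurableSet _ _)
  have hMm : MeasurableSet M := hbm (cyl_measurableSet _ _)
  have hZm : MeasurableSet Z := cyl_measurableSet _ _
  -- determinedness
  have hDetG : Det (Finset.Icc p (c - 1)) G := by
    rw [hG]
    refine det_preimage_cyl τ s u _ (fun n hn => ?_)
    intro j hj
    rw [Finset.mem_Icc] at hj ⊢
    have h1 : ((insert (-(ℓ : ℤ) - 1) s).min' (Finset.insert_nonempty _ _)) ≤ n :=
      Finset.min'_le _ _ (Finset.mem_insert_of_mem hn)
    have h2 : p ≤ n * (τ : ℤ) := mul_le_mul_of_nonneg_right h1 (by omega)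
    have h3 : n * (τ : ℤ) ≤ (-(ℓ : ℤ) - 1) * (τ : ℤ) :=
      mul_le_mul_of_nonneg_right (hs n hn) (by omega)
    have h4 : (-(ℓ : ℤ) - 1) * (τ : ℤ) = c - (τ : ℤ) := by rw [hc]; ring
    omega
  have hDetF : Det (Finset.Icc (e + 1) q) F := by
    rw [hF]
    refine det_preimage_cyl τ {0} (fun _ => a) _ (fun n hn => ?_)
    rw [Finset.mem_singleton] at hn
    subst hn
    intro j hj
    rw [Finset.mem_Icc] at hj ⊢
    have h1 : e + 1 ≤ 0 := by
      have : (-(ℓ : ℤ) + 1) * (τ : ℤ) ≤ 0 * (τ : ℤ) :=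
        mul_le_mul_of_nonneg_right (by omega) (by omega)
      have h2 : (-(ℓ : ℤ) + 1) * (τ : ℤ) = e + 1 := by rw [he, hc]; ring
      omega
    omega
  have hDetM : Det (Finset.Icc (e + 1) q) M := by
    rw [hM]
    refine det_preimage_cyl τ _ x _ (fun n hn => ?_)
    rw [Finset.mem_Icc] at hn
    intro j hj
    rw [Finset.mem_Icc] at hj ⊢
    have h1 : (-(ℓ : ℤ) + 1) * (τ : ℤ) ≤ n * (τ : ℤ) :=
      mul_le_mul_of_nonneg_right (by omega) (by omega)
    have h2 : n * (τ : ℤ) ≤ (-1 : ℤ) * (τ : ℤ) :=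
      mul_le_mul_of_nonneg_right (by omega) (by omega)
    have h3 : (-(ℓ : ℤ) + 1) * (τ : ℤ) = e + 1 := by rw [he, hc]; ring
    omega
  have hDetH : Det (Finset.Icc (e + 1) q) (F ∩ M) := hDetF.inter hDetM
  -- rewrite the goal through the preimages
  rw [Measure.map_apply hbm
      ((((present_eq_cyl a ▸ cyl_measurableSet {0} (fun _ => a)).inter
        (cyl_measurableSet s u))).inter (cyl_measurableSet _ x)),
    Measure.map_apply hbm (cyl_measurableSet _ x),
    Measure.map_apply hbm
      ((present_eq_cyl a ▸ cyl_measurableSet {0} (fun _ => a)).inter (cyl_measurableSet _ x)),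
    Measure.map_apply hbm ((cyl_measurableSet s u).inter (cyl_measurableSet _ x))]
  rw [Set.preimage_inter, Set.preimage_inter, Set.preimage_inter, Set.preimage_inter, hpreC]
  rw [present_eq_cyl a]
  -- now the goal is in terms of F, G, Z, M
  have hsetA : (binMap τ ⁻¹' cyl {0} (fun _ => a) ∩ binMap τ ⁻¹' cyl s u) ∩ (Z ∩ M)
      = G ∩ Z ∩ (F ∩ M) := by
    rw [← hF, ← hG]
    ext ω; simp only [Set.mem_inter_iff]; tauto
  have hsetB : binMap τ ⁻¹' cyl {0} (fun _ => a) ∩ (Z ∩ M) = Z ∩ (F ∩ M) := by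
    rw [← hF]
    ext ω; simp only [Set.mem_inter_iff]; tauto
  have hsetC : binMap τ ⁻¹' cyl s u ∩ (Z ∩ M) = G ∩ Z ∩ M := by
    rw [← hG]
    ext ω; simp only [Set.mem_inter_iff]; tauto
  rw [hsetA, hsetB, hsetC]
  -- apply the splitting lemma twice
  have E1 := split P hshift hpos hMarkov hD (fun _ => zPat N) p c e q hpc hce heq
    G (F ∩ M) hDetG hDetH hGm (hFm.inter hMm)
  have E2 := split P hshift hpos hMarkov hD (fun _ => zPat N) p c e q hpc hce heq
    G M hDetG hDetM hGm hMm
  rw [← hZdef] at E1 E2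
  -- final algebra
  set α := P (G ∩ Z ∩ (F ∩ M)) with hα
  set β := P Z with hβ
  set γ := P (G ∩ Z) with hγ
  set δ := P (Z ∩ (F ∩ M)) with hδ
  set ε := P (G ∩ Z ∩ M) with hε
  set ζ := P (Z ∩ M) with hζ
  -- E1 : α * β = γ * δ, E2 : ε * β = γ * ζ; goal : α * ζ = δ * ε
  by_cases hγ0 : γ = 0
  · have hα0 : α = 0 := by
      have : α ≤ γ := measure_mono Set.inter_subset_left
      exact le_antisymm (hγ0 ▸ this) zero_le
    have hε0 : ε = 0 := by
      have : ε ≤ γ := measure_mono Set.inter_subset_left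
      exact le_antisymm (hγ0 ▸ this) zero_le
    rw [hα0, hε0, zero_mul, mul_zero]
  · have hβ0 : β ≠ 0 := (hpos _ _).ne'
    have hβt : β ≠ ⊤ := measure_ne_top P _
    have hγt : γ ≠ ⊤ := measure_ne_top P _
    have hcancel : (α * ζ) * (β * γ) = (δ * ε) * (β * γ) := by
      calc (α * ζ) * (β * γ) = (α * β) * (ζ * γ) := by ring
        _ = (γ * δ) * (ζ * γ) := by rw [E1]
        _ = δ * (γ * ζ) * γ := by ring
        _ = δ * (ε * β) * γ := by rw [E2]
        _ = (δ * ε) * (β * γ) := by ring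
    exact ennreal_mul_right_cancel (by exact mul_ne_zero hβ0 hγ0)
      (ENNReal.mul_ne_top hβt hγt) hcancel
end

section
/- Proposition 2 (exponential continuity rate of the binned transition kernel, finite-past form). There exist constants C > 0 and α > 0 (depending on N, D, τ and P) such that for every k ≥ 1, every m, m' ≥ k, every a ∈ A, and all finite pasts x : {−m,…,−1} → A and y : {−m',…,−1} → A satisfying x(−j) = y(−j) for all 1 ≤ j ≤ k, one has |P⁽ᵇ⁾(X₀ = a | X₋ₘ = x(−m),…,X₋₁ = x(−1)) − P⁽ᵇ⁾(X₀ = a | X₋ₘ' = y(−m'),…,X₋₁ = y(−1))| ≤ C·e^{−αk}. -/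
open MeasureTheory Filter

namespace Prop2

variable {N : ℕ}

/-- cylinder anchored at `n`, prescribing coordinates `n, n+1, …, n+l.length-1`. -/
def cylAt (n : ℤ) (l : List (Pat N)) : Set (Conf N) :=
  {ω | ∀ i < l.length, ω (n + i) = l.getD i (zPat N)}

lemma mem_cylAt {n : ℤ} {l : List (Pat N)} {ω : Conf N} :
    ω ∈ cylAt n l ↔ ∀ i < l.length, ω (n + i) = l.getD i (zPat N) := Iff.rfl

lemma cylAt_nil (n : ℤ) : (cylAt n ([] : List (Pat N))) = Set.univ := by
  ext ω; simp [cylAt]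

lemma cylAt_append (n : ℤ) (l l' : List (Pat N)) :
    cylAt n (l ++ l') = cylAt n l ∩ cylAt (n + l.length) l' := by
  ext ω
  simp only [cylAt, Set.mem_setOf_eq, Set.mem_inter_iff, List.length_append]
  constructor
  · intro h
    refine ⟨fun i hi => ?_, fun i hi => ?_⟩
    · rw [← List.getD_append l l' (zPat N) i hi]
      exact h i (by omega)
    · have := h (l.length + i) (by omega)
      rw [List.getD_append_right l l' (zPat N) _ (by omega)] at this
      simpa [add_assoc, Nat.add_sub_cancel_left] using this
  · rintro ⟨h1, h2⟩ i hi
    by_cases hil : i < l.length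
    · rw [List.getD_append l l' (zPat N) i hil]; exact h1 i hil
    · push_neg at hil
      rw [List.getD_append_right l l' (zPat N) _ hil]
      have := h2 (i - l.length) (by omega)
      have harith : n + ↑l.length + ↑(i - l.length) = n + (i : ℤ) := by
        push_cast [Nat.cast_sub hil]; ring
      rwa [harith] at this

instance : MeasurableSingletonClass (Pat N) := by infer_instance

lemma measurableSet_cylAt (n : ℤ) (l : List (Pat N)) : MeasurableSet (cylAt n l) := by
  have : cylAt n l = ⋂ i ∈ Finset.range l.length,
      (fun ω : Conf N => ω (n + i)) ⁻¹' {l.getD i (zPat N)} := by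
    ext ω; simp [cylAt]
  rw [this]
  exact MeasurableSet.biInter (Finset.range l.length).countable_toSet
    (fun i _ => (measurable_pi_apply _) (measurableSet_singleton _))

lemma measurable_shiftMap : Measurable (shiftMap (N := N)) :=
  measurable_pi_lambda _ (fun n => measurable_pi_apply (n + 1))

lemma measurableSet_sym (a : Pat N) : MeasurableSet {ω : Conf N | ω 0 = a} := by
  have : {ω : Conf N | ω 0 = a} = (fun ω : Conf N => ω 0) ⁻¹' {a} := rfl
  rw [this]; exact (measurable_pi_apply _) (measurableSet_singleton _)

lemma measurable_binMap (τ : ℕ) : Measurable (binMap (N := N) τ) := by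
  apply measurable_pi_lambda
  intro m
  apply measurable_pi_lambda
  intro k
  have key : ∀ L : List ℕ, Measurable fun ω : Conf N => L.any fun i => ω (m * (τ : ℤ) + (i : ℤ)) k := by
    intro L
    induction L with
    | nil => exact measurable_const
    | cons j L ih =>
      have h1 : Measurable fun ω : Conf N => ω (m * (τ : ℤ) + (j : ℤ)) k :=
        (measurable_pi_apply k).comp (measurable_pi_apply _)
      have hp : MeasurableSet {ω : Conf N | ω (m * (τ : ℤ) + (j : ℤ)) k = true} :=
        h1 (by trivial : MeasurableSet {true})
      have : (fun ω : Conf N => (j :: L).any fun i => ω (m * (τ : ℤ) + (i : ℤ)) k)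
          = fun ω => if ω (m * (τ : ℤ) + (j : ℤ)) k = true then true
              else L.any fun i => ω (m * (τ : ℤ) + (i : ℤ)) k := by
        funext ω; by_cases h : ω (m * (τ : ℤ) + (j : ℤ)) k = true <;> simp [h]
      rw [this]
      exact Measurable.ite hp measurable_const ih
  exact key (List.range τ)

end Prop2
section Part2
namespace Prop2
open MeasureTheory

variable {N : ℕ} {P : Measure (Conf N)} [IsProbabilityMeasure P]

/-- probability of the word `l` (anchored anywhere, by stationarity). -/
noncomputable def pw (P : Measure (Conf N)) (l : List (Pat N)) : ℝ := (P (cylAt 0 l)).toReal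

lemma cylAt_shift (n : ℤ) (l : List (Pat N)) :
    shiftMap ⁻¹' (cylAt n l) = cylAt (n + 1) l := by
  ext ω
  simp only [Set.mem_preimage, mem_cylAt, shiftMap]
  constructor
  · intro h i hi; have := h i hi; rwa [show n + (i : ℤ) + 1 = n + 1 + (i : ℤ) by ring] at this
  · intro h i hi; have := h i hi; rwa [show n + 1 + (i : ℤ) = n + (i : ℤ) + 1 by ring] at this

variable (hshift : Measure.map shiftMap P = P)
include hshift

lemma P_cylAt_eq (n : ℤ) (l : List (Pat N)) : P (cylAt n l) = (P (cylAt 0 l)) := by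
  have step : ∀ m : ℤ, P (cylAt (m + 1) l) = P (cylAt m l) := by
    intro m
    conv_rhs => rw [← hshift]
    rw [Measure.map_apply measurable_shiftMap (measurableSet_cylAt m l), cylAt_shift]
  have step' : ∀ m : ℤ, P (cylAt m l) = P (cylAt (m + 1) l) := fun m => (step m).symm
  induction n using Int.induction_on with
  | zero => rfl
  | succ i ih => rw [step]; exact ih
  | pred i ih =>
    have h2 := step (-(i:ℤ) - 1)
    rw [show -(i:ℤ) - 1 + 1 = -(i:ℤ) by ring] at h2
    rw [← h2]; exact ih

lemma pw_eq (n : ℤ) (l : List (Pat N)) : (P (cylAt n l)).toReal = pw P l := by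
  rw [P_cylAt_eq hshift]; rfl

omit hshift

lemma pw_nil : pw P ([] : List (Pat N)) = 1 := by
  simp [pw, cylAt_nil]

lemma pw_le_one (l : List (Pat N)) : pw P l ≤ 1 := by
  rw [show (1:ℝ) = (P Set.univ).toReal by simp]
  exact ENNReal.toReal_mono (measure_ne_top _ _) (measure_mono (Set.subset_univ _))

omit [IsProbabilityMeasure P] in
lemma pw_nonneg (l : List (Pat N)) : 0 ≤ pw P l := ENNReal.toReal_nonneg

variable (hpos : PosCyl P)
include hpos

lemma pw_pos (l : List (Pat N)) : 0 < pw P l := by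
  rcases Nat.eq_zero_or_pos l.length with h0 | h1
  · rw [List.length_eq_zero_iff.mp h0, pw_nil]; norm_num
  · have key : cylAt (0:ℤ) l =
        cyl (Finset.Icc (0:ℤ) ((l.length : ℤ) - 1)) (fun i => l.getD i.toNat (zPat N)) := by
      ext ω
      simp only [mem_cylAt, cyl, Set.mem_setOf_eq, Finset.mem_Icc]
      constructor
      · rintro h i ⟨hi0, hi1⟩
        have h' := h i.toNat (by omega)
        rwa [zero_add, Int.toNat_of_nonneg hi0] at h'
      · intro h i hi
        have := h (i : ℤ) ⟨by positivity, by omega⟩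
        simpa using this
    rw [pw, key]
    exact ENNReal.toReal_pos (hpos _ _).ne' (measure_ne_top _ _)

lemma pw_ne_zero (l : List (Pat N)) : pw P l ≠ 0 := (pw_pos hpos l).ne'

end Prop2
end Part2
section Part3
namespace Prop2
open MeasureTheory

set_option linter.unusedSectionVars false

variable {N : ℕ} {P : Measure (Conf N)} [IsProbabilityMeasure P]

lemma mem_cylAt_single {n : ℤ} {c : Pat N} {ω : Conf N} : ω ∈ cylAt n [c] ↔ ω n = c := by
  constructor
  · intro h; have := h 0 (by simp); simpa using this
  · intro h i hi
    have : i = 0 := by simpa [Nat.lt_one_iff] using hi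
    subst this; simpa using h

lemma measure_cyl_sum (n : ℤ) (l : List (Pat N)) :
    (P (cylAt n l)).toReal = ∑ c : Pat N, (P (cylAt n (l ++ [c]))).toReal := by
  have hdisj : ((Finset.univ : Finset (Pat N)) : Set (Pat N)).PairwiseDisjoint
      (fun c => cylAt n (l ++ [c])) := by
    intro c _ c' _ hne
    simp only [Function.onFun]
    rw [Set.disjoint_left]
    intro ω h1 h2
    rw [cylAt_append] at h1 h2
    exact hne ((mem_cylAt_single.mp h1.2).symm.trans (mem_cylAt_single.mp h2.2))
  have hU : cylAt n l = ⋃ c ∈ (Finset.univ : Finset (Pat N)), cylAt n (l ++ [c]) := by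
    ext ω
    simp only [Set.mem_iUnion, Finset.mem_univ, Set.mem_iUnion, exists_prop, true_and]
    constructor
    · intro h
      exact ⟨ω (n + l.length), by rw [cylAt_append]; exact ⟨h, mem_cylAt_single.mpr rfl⟩⟩
    · rintro ⟨c, hc⟩
      rw [cylAt_append] at hc; exact hc.1
  rw [hU, measure_biUnion_finset hdisj (fun c _ => measurableSet_cylAt _ _),
    ENNReal.toReal_sum (fun c _ => measure_ne_top _ _)]

lemma pw_sum_right (l : List (Pat N)) : pw P l = ∑ c : Pat N, pw P (l ++ [c]) :=
  measure_cyl_sum 0 l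

variable (hshift : Measure.map shiftMap P = P)
include hshift

lemma pw_sum_left (l : List (Pat N)) : pw P l = ∑ z : Pat N, pw P (z :: l) := by
  have h0 : pw P l = ∑ z : Pat N, (P (cylAt (-1) ([z] ++ l))).toReal := by
    have h1 : pw P l = (P (cylAt 0 l)).toReal := rfl
    have h2 : ∀ z : Pat N, cylAt (-1 : ℤ) ([z] ++ l) = cylAt (-1 : ℤ) [z] ∩ cylAt 0 l := by
      intro z
      rw [cylAt_append]; norm_num
    -- similar disjoint-union argument, prepending
    have hdisj : ((Finset.univ : Finset (Pat N)) : Set (Pat N)).PairwiseDisjoint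
        (fun z => cylAt (-1 : ℤ) ([z] ++ l)) := by
      intro c _ c' _ hne
      simp only [Function.onFun]
      rw [Set.disjoint_left]
      intro ω hm1 hm2
      rw [h2] at hm1 hm2
      exact hne ((mem_cylAt_single.mp hm1.1).symm.trans (mem_cylAt_single.mp hm2.1))
    have hU : cylAt 0 l = ⋃ z ∈ (Finset.univ : Finset (Pat N)), cylAt (-1 : ℤ) ([z] ++ l) := by
      ext ω
      simp only [Set.mem_iUnion, Finset.mem_univ, exists_prop, true_and]
      constructor
      · intro h
        exact ⟨ω (-1), by rw [h2]; exact ⟨mem_cylAt_single.mpr rfl, h⟩⟩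
      · rintro ⟨z, hz⟩
        rw [h2] at hz; exact hz.2
    rw [h1, hU, measure_biUnion_finset hdisj (fun c _ => measurableSet_cylAt _ _),
      ENNReal.toReal_sum (fun c _ => measure_ne_top _ _)]
  rw [h0]
  exact Finset.sum_congr rfl (fun z _ => pw_eq hshift (-1) ([z] ++ l))

omit hshift

lemma sum_word_zero (f : List (Pat N) → ℝ) :
    ∑ u : Fin 0 → Pat N, f (List.ofFn u) = f [] := by simp

lemma sum_word_succ (n : ℕ) (f : List (Pat N) → ℝ) :
    ∑ u : Fin (n + 1) → Pat N, f (List.ofFn u)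
      = ∑ c : Pat N, ∑ u : Fin n → Pat N, f (c :: List.ofFn u) := by
  rw [← Equiv.sum_comp (Fin.consEquiv (fun _ : Fin (n+1) => Pat N))
    (fun u => f (List.ofFn u)), Fintype.sum_prod_type]
  refine Finset.sum_congr rfl (fun c _ => Finset.sum_congr rfl (fun u _ => ?_))
  congr 1
  simp [Fin.consEquiv, List.ofFn_succ]

lemma sum_word_cast {m n : ℕ} (h : m = n) (f : List (Pat N) → ℝ) :
    ∑ u : Fin m → Pat N, f (List.ofFn u) = ∑ u : Fin n → Pat N, f (List.ofFn u) := by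
  subst h; rfl

lemma sum_word_split (m n : ℕ) (f : List (Pat N) → ℝ) :
    ∑ u : Fin (m + n) → Pat N, f (List.ofFn u)
      = ∑ u₁ : Fin m → Pat N, ∑ u₂ : Fin n → Pat N, f (List.ofFn u₁ ++ List.ofFn u₂) := by
  induction m generalizing f with
  | zero =>
    rw [sum_word_cast (show 0 + n = n by omega) f]
    rw [show (∑ u₁ : Fin 0 → Pat N, ∑ u₂ : Fin n → Pat N, f (List.ofFn u₁ ++ List.ofFn u₂))
      = ∑ u₂ : Fin n → Pat N, f (List.ofFn u₂) from
        sum_word_zero (fun s => ∑ u₂ : Fin n → Pat N, f (s ++ List.ofFn u₂))]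
  | succ m ih =>
    rw [sum_word_cast (show m + 1 + n = (m + n) + 1 by omega) f, sum_word_succ _ f]
    rw [sum_word_succ m (fun s => ∑ u₂ : Fin n → Pat N, f (s ++ List.ofFn u₂))]
    refine Finset.sum_congr rfl (fun c _ => ?_)
    exact ih (fun s => f (c :: s))

variable (hshift : Measure.map shiftMap P = P)
include hshift

lemma pw_sum_right_many (r : ℕ) (l : List (Pat N)) :
    pw P l = ∑ c : Fin r → Pat N, pw P (l ++ List.ofFn c) := by
  induction r generalizing l with
  | zero => rw [sum_word_zero (fun s => pw P (l ++ s))]; simp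
  | succ r ih =>
    rw [sum_word_succ r (fun s => pw P (l ++ s))]
    rw [pw_sum_right (P := P) l]
    refine Finset.sum_congr rfl (fun c _ => ?_)
    rw [ih (l ++ [c])]
    refine Finset.sum_congr rfl (fun u _ => ?_)
    congr 1
    simp

lemma pw_sum_left_many (r : ℕ) (l : List (Pat N)) :
    pw P l = ∑ z : Fin r → Pat N, pw P (List.ofFn z ++ l) := by
  induction r with
  | zero => rw [sum_word_zero (fun s => pw P (s ++ l))]; simp
  | succ r ih =>
    rw [sum_word_succ r (fun s => pw P (s ++ l))]
    rw [Finset.sum_comm]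
    rw [ih]
    refine Finset.sum_congr rfl (fun z _ => ?_)
    exact pw_sum_left hshift (List.ofFn z ++ l)

end Prop2
end Part3
section Part4
namespace Prop2
open MeasureTheory

set_option linter.unusedSectionVars false

variable {N : ℕ} {P : Measure (Conf N)} [IsProbabilityMeasure P]

lemma getD_drop' (l : List (Pat N)) (k j : ℕ) :
    (l.drop k).getD j (zPat N) = l.getD (k + j) (zPat N) := by
  rw [List.getD_eq_getElem?_getD, List.getD_eq_getElem?_getD, List.getElem?_drop]

/-- the last `D` symbols of a word. -/
def sufD (D : ℕ) (l : List (Pat N)) : List (Pat N) := l.drop (l.length - D)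

lemma length_sufD {D : ℕ} {l : List (Pat N)} (h : D ≤ l.length) :
    (sufD D l).length = D := by
  simp only [sufD, List.length_drop]; omega

/-- finite past of a list, as a `ℤ → Pat N` assignment ending at `-1`. -/
def wpast (m : ℕ) (l : List (Pat N)) : ℤ → Pat N :=
  fun n => l.getD (n + m).toNat (zPat N)

lemma cyl_Icc_eq (m : ℕ) (hm : 1 ≤ m) (l : List (Pat N)) (hl : l.length = m)
    (w : ℤ → Pat N) (hw : ∀ i : ℕ, i < m → w (-(m:ℤ) + i) = l.getD i (zPat N)) :
    cyl (Finset.Icc (-(m:ℤ)) (-1)) w = cylAt (-(m:ℤ)) l := by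
  ext ω
  simp only [cyl, Set.mem_setOf_eq, Finset.mem_Icc, mem_cylAt, hl]
  constructor
  · intro h i hi
    have hn : -(m:ℤ) ≤ -(m:ℤ) + i ∧ -(m:ℤ) + i ≤ -1 := by omega
    rw [h _ hn, hw i hi]
  · rintro h n ⟨hn1, hn2⟩
    have hi : (n + m).toNat < m := by omega
    have hn : n = -(m:ℤ) + ((n + m).toNat : ℕ) := by omega
    rw [hn, h _ hi, ← hw _ hi]

lemma wpast_spec (m : ℕ) (l : List (Pat N)) (i : ℕ) (hi : i < m) :
    wpast m l (-(m:ℤ) + i) = l.getD i (zPat N) := by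
  unfold wpast
  congr 1
  omega

lemma wpast_spec_D (D m : ℕ) (hD : D ≤ m) (l : List (Pat N)) (hl : l.length = m)
    (i : ℕ) (hi : i < D) :
    wpast m l (-(D:ℤ) + i) = (sufD D l).getD i (zPat N) := by
  unfold wpast sufD
  rw [getD_drop']
  congr 1
  omega

lemma inter_sym_cylAt (a : Pat N) (m : ℕ) (l : List (Pat N)) (hl : l.length = m) :
    {ω : Conf N | ω 0 = a} ∩ cylAt (-(m:ℤ)) l = cylAt (-(m:ℤ)) (l ++ [a]) := by
  rw [cylAt_append, hl]
  have h0 : -(m:ℤ) + (m : ℤ) = 0 := by ring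
  rw [h0]
  have : {ω : Conf N | ω 0 = a} = cylAt (0:ℤ) [a] := by
    ext ω; rw [mem_cylAt_single]; rfl
  rw [this, Set.inter_comm]

variable (hshift : Measure.map shiftMap P = P) (hpos : PosCyl P)
include hshift hpos

lemma markov_step {D : ℕ} (hD : 1 ≤ D) (hMarkov : MarkovOrder P D)
    (l : List (Pat N)) (hl : D ≤ l.length) (c : Pat N) :
    pw P (l ++ [c]) * pw P (sufD D l) = pw P (sufD D l ++ [c]) * pw P l := by
  have hm1 : 1 ≤ l.length := le_trans hD hl
  have h := hMarkov c l.length hl (wpast l.length l)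
  rw [cyl_Icc_eq l.length hm1 l rfl _ (wpast_spec l.length l)] at h
  rw [cyl_Icc_eq D hD (sufD D l) (length_sufD hl) _
    (wpast_spec_D D l.length hl l rfl)] at h
  unfold condProb at h
  rw [inter_sym_cylAt c l.length l rfl, inter_sym_cylAt c D (sufD D l) (length_sufD hl)] at h
  rw [pw_eq hshift, pw_eq hshift, pw_eq hshift, pw_eq hshift] at h
  rw [div_eq_div_iff (pw_ne_zero hpos l) (pw_ne_zero hpos (sufD D l))] at h
  exact h

omit hshift hpos in
lemma sufD_append {D : ℕ} (l v : List (Pat N)) (hl : D ≤ l.length) :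
    sufD D (l ++ v) = sufD D (sufD D l ++ v) := by
  unfold sufD
  have hzlen : (l.drop (l.length - D)).length = D := by
    rw [List.length_drop]; omega
  rcases le_or_gt D v.length with hv | hv
  · have e1 : (l ++ v).length - D = l.length + (v.length - D) := by
      rw [List.length_append]; omega
    have e2 : (l.drop (l.length - D) ++ v).length - D
        = (l.drop (l.length - D)).length + (v.length - D) := by
      rw [List.length_append, hzlen]; omega
    rw [e1, e2, List.drop_length_add_append, List.drop_length_add_append]
  · have e1 : (l ++ v).length - D = l.length + v.length - D := by
      rw [List.length_append]
    have e2 : (l.drop (l.length - D) ++ v).length - D = v.length := by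
      rw [List.length_append, hzlen]; omega
    rw [e1, e2, List.drop_append_of_le_length (by omega),
      List.drop_append_of_le_length (by rw [hzlen]; omega), List.drop_drop]
    congr 2
    omega

lemma markov_chain {D : ℕ} (hD : 1 ≤ D) (hMarkov : MarkovOrder P D)
    (l v : List (Pat N)) (hl : D ≤ l.length) :
    pw P (l ++ v) * pw P (sufD D l) = pw P (sufD D l ++ v) * pw P l := by
  induction v using List.reverseRecOn with
  | nil => simp only [List.append_nil]; ring
  | append_singleton v c ih =>
    have hzl : D ≤ (sufD D l).length := by rw [length_sufD hl]
    have hlen1 : D ≤ (l ++ v).length := by rw [List.length_append]; omega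
    have hlen2 : D ≤ (sufD D l ++ v).length := by rw [List.length_append]; omega
    have e1 := markov_step hshift hpos hD hMarkov (l ++ v) hlen1 c
    have e2 := markov_step hshift hpos hD hMarkov (sufD D l ++ v) hlen2 c
    have hsuf : sufD D (l ++ v) = sufD D (sufD D l ++ v) := sufD_append l v hl
    rw [hsuf] at e1
    set z' := sufD D (sufD D l ++ v) with hz'
    have hz : 0 < pw P z' := pw_pos hpos z'
    have f1 : pw P ((l ++ v) ++ [c]) = pw P (z' ++ [c]) * pw P (l ++ v) / pw P z' := by
      rw [eq_div_iff hz.ne']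
      simpa using e1
    have f2 : pw P ((sufD D l ++ v) ++ [c])
        = pw P (z' ++ [c]) * pw P (sufD D l ++ v) / pw P z' := by
      rw [eq_div_iff hz.ne']
      simpa using e2
    rw [show l ++ (v ++ [c]) = (l ++ v) ++ [c] by simp,
      show sufD D l ++ (v ++ [c]) = (sufD D l ++ v) ++ [c] by simp, f1, f2]
    field_simp
    linear_combination pw P (z' ++ [c]) * ih

end Prop2
end Part4
section Part5
namespace Prop2
open MeasureTheory

set_option linter.unusedSectionVars false

variable {N : ℕ} {P : Measure (Conf N)} [IsProbabilityMeasure P]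

/-- the binned symbol of one window (a list of patterns). -/
def bin1 (c : List (Pat N)) : Pat N := fun k => c.any (fun p => p k)

/-- `u` is an original word realizing the binned word `s` (windows of size `τ`). -/
def Matches (τ : ℕ) (s u : List (Pat N)) : Prop :=
  ∀ i < s.length, bin1 ((u.drop (i * τ)).take τ) = s.getD i (zPat N)

instance (τ : ℕ) (s u : List (Pat N)) : Decidable (Matches τ s u) := by
  unfold Matches; exact Nat.decidableBallLT _ _

lemma getD_ofFn {m : ℕ} (u : Fin m → Pat N) {j : ℕ} (hj : j < m) :
    (List.ofFn u).getD j (zPat N) = u ⟨j, hj⟩ := by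
  rw [List.getD_eq_getElem _ _ (by simpa using hj), List.getElem_ofFn]

lemma bin1_window (l : List (Pat N)) (b e : ℕ) (h : b + e ≤ l.length) (k : Fin N) :
    bin1 ((l.drop b).take e) k
      = (List.range e).any fun r => l.getD (b + r) (zPat N) k := by
  rw [Bool.eq_iff_iff, bin1, List.any_eq_true, List.any_eq_true]
  constructor
  · rintro ⟨x, hx, hxk⟩
    rcases List.mem_iff_getElem.mp hx with ⟨j, hj, hxj⟩
    have hje : j < e := by
      have := hj; simp only [List.length_take, List.length_drop] at this; omega
    refine ⟨j, List.mem_range.mpr hje, ?_⟩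
    rw [List.getD_eq_getElem _ _ (by omega : b + j < l.length)]
    rw [List.getElem_take, List.getElem_drop] at hxj
    rwa [hxj]
  · rintro ⟨r, hr, hrk⟩
    have hre : r < e := List.mem_range.mp hr
    have hbl : b + r < l.length := by omega
    have hlen : r < ((l.drop b).take e).length := by
      simp only [List.length_take, List.length_drop]; omega
    refine ⟨((l.drop b).take e)[r], List.getElem_mem hlen, ?_⟩
    rw [List.getElem_take, List.getElem_drop]
    rwa [List.getD_eq_getElem _ _ hbl] at hrk

variable (τ : ℕ)

lemma binMap_preimage_cylAt (n : ℤ) (s : List (Pat N)) :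
    binMap τ ⁻¹' (cylAt n s)
      = ⋃ u ∈ Finset.univ.filter
          (fun u : Fin (s.length * τ) → Pat N => Matches τ s (List.ofFn u)),
        cylAt (n * τ) (List.ofFn u) := by
  ext ω
  simp only [Set.mem_preimage, mem_cylAt, Set.mem_iUnion, Finset.mem_filter,
    Finset.mem_univ, true_and, exists_prop]
  constructor
  · intro h
    refine ⟨fun j => ω (n * τ + j), ?_, ?_⟩
    · intro i hi
      funext k
      rw [bin1_window _ _ _ (by simp only [List.length_ofFn]; have h1 := Nat.mul_le_mul_right τ hi; rw [Nat.succ_mul] at h1; omega)]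
      have := congrFun (h i hi) k
      rw [← this]
      show _ = binMap τ ω (n + i) k
      unfold binMap
      rw [Bool.eq_iff_iff, List.any_eq_true, List.any_eq_true]
      constructor
      · rintro ⟨r, hr, hrk⟩
        have hre : r < τ := List.mem_range.mp hr
        refine ⟨r, hr, ?_⟩
        rw [getD_ofFn _ (show i * τ + r < s.length * τ by
          have : i + 1 ≤ s.length := hi; nlinarith)] at hrk
        have harith : (n + (i:ℤ)) * (τ:ℤ) + (r:ℤ) = n * τ + ((i * τ + r : ℕ) : ℤ) := by
          push_cast; ring
        rwa [harith]
      · rintro ⟨r, hr, hrk⟩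
        have hre : r < τ := List.mem_range.mp hr
        refine ⟨r, hr, ?_⟩
        rw [getD_ofFn _ (show i * τ + r < s.length * τ by
          have : i + 1 ≤ s.length := hi; nlinarith)]
        have harith : (n + (i:ℤ)) * (τ:ℤ) + (r:ℤ) = n * τ + ((i * τ + r : ℕ) : ℤ) := by
          push_cast; ring
        rwa [harith] at hrk
    · intro j hj
      rw [getD_ofFn _ (by simpa using hj)]
  · rintro ⟨u, hu, hω⟩ i hi
    funext k
    show binMap τ ω (n + i) k = _
    have hm := congrFun (hu i hi) k
    rw [← hm, bin1_window _ _ _ (by simp only [List.length_ofFn]; have h1 := Nat.mul_le_mul_right τ hi; rw [Nat.succ_mul] at h1; omega)]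
    unfold binMap
    rw [Bool.eq_iff_iff, List.any_eq_true, List.any_eq_true]
    constructor
    · rintro ⟨r, hr, hrk⟩
      refine ⟨r, hr, ?_⟩
      have hlt : i * τ + r < s.length * τ := by
        have h1 := Nat.mul_le_mul_right τ hi
        rw [Nat.succ_mul] at h1
        have hre := List.mem_range.mp hr
        omega
      have harith : (n + (i:ℤ)) * (τ:ℤ) + (r:ℤ) = n * τ + ((i * τ + r : ℕ) : ℤ) := by
        push_cast; ring
      rw [harith, hω _ (by simpa using hlt)] at hrk
      exact hrk
    · rintro ⟨r, hr, hrk⟩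
      refine ⟨r, hr, ?_⟩
      have hlt : i * τ + r < s.length * τ := by
        have h1 := Nat.mul_le_mul_right τ hi
        rw [Nat.succ_mul] at h1
        have hre := List.mem_range.mp hr
        omega
      have harith : (n + (i:ℤ)) * (τ:ℤ) + (r:ℤ) = n * τ + ((i * τ + r : ℕ) : ℤ) := by
        push_cast; ring
      rw [harith, hω _ (by simpa using hlt)]
      exact hrk

/-- the `T`-function: probability that, after the fixed word `z`, one sees an original
word realizing the binned word `t`. (Unnormalized by `pw P z`.) -/
noncomputable def TT (P : Measure (Conf N)) (τ : ℕ) (z : List (Pat N)) (t : List (Pat N)) : ℝ :=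
  ∑ v : Fin (t.length * τ) → Pat N,
    if Matches τ t (List.ofFn v) then pw P (z ++ List.ofFn v) else 0

variable (hshift : Measure.map shiftMap P = P)
include hshift

lemma binned_cyl_eq (n : ℤ) (s : List (Pat N)) :
    ((Measure.map (binMap τ) P) (cylAt n s)).toReal = TT P τ [] s := by
  rw [Measure.map_apply (measurable_binMap τ) (measurableSet_cylAt _ _),
    binMap_preimage_cylAt]
  have hdisj : (↑(Finset.univ.filter
      (fun u : Fin (s.length * τ) → Pat N => Matches τ s (List.ofFn u))) :
        Set (Fin (s.length * τ) → Pat N)).PairwiseDisjoint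
      (fun u => cylAt (n * τ) (List.ofFn u)) := by
    intro u _ u' _ hne
    simp only [Function.onFun]
    rw [Set.disjoint_left]
    intro ω h1 h2
    apply hne
    funext j
    have e1 := h1 j.val (by simpa using j.isLt)
    have e2 := h2 j.val (by simpa using j.isLt)
    rw [getD_ofFn _ (by simpa using j.isLt)] at e1 e2
    simp only [Fin.eta] at e1 e2
    rw [← e1, ← e2]
  rw [measure_biUnion_finset hdisj (fun u _ => measurableSet_cylAt _ _),
    ENNReal.toReal_sum (fun u _ => measure_ne_top _ _)]
  rw [Finset.sum_filter]
  unfold TT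
  refine Finset.sum_congr rfl (fun u _ => ?_)
  by_cases h : Matches τ s (List.ofFn u)
  · rw [if_pos h, if_pos h, List.nil_append, pw_eq hshift]
  · rw [if_neg h, if_neg h]

end Prop2
end Part5
section Part6
namespace Prop2
open MeasureTheory

set_option linter.unusedSectionVars false

variable {N : ℕ} {P : Measure (Conf N)} [IsProbabilityMeasure P]

lemma matches_append {τ : ℕ} (w t L₁ L₂ : List (Pat N)) (h₁ : L₁.length = w.length * τ) :
    Matches τ (w ++ t) (L₁ ++ L₂) ↔ Matches τ w L₁ ∧ Matches τ t L₂ := by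
  have hwin1 : ∀ i < w.length,
      ((L₁ ++ L₂).drop (i * τ)).take τ = (L₁.drop (i * τ)).take τ := by
    intro i hi
    have hmul : i * τ + τ ≤ L₁.length := by
      rw [h₁]
      have h1 := Nat.mul_le_mul_right τ hi
      rw [Nat.succ_mul] at h1; omega
    rw [List.drop_append_of_le_length (by omega), List.take_append_of_le_length]
    rw [List.length_drop]; omega
  have hwin2 : ∀ i' : ℕ,
      ((L₁ ++ L₂).drop ((w.length + i') * τ)).take τ = (L₂.drop (i' * τ)).take τ := by
    intro i'
    have : (w.length + i') * τ = L₁.length + i' * τ := by rw [h₁]; ring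
    rw [this, List.drop_length_add_append]
  constructor
  · intro h
    constructor
    · intro i hi
      have := h i (by rw [List.length_append]; omega)
      rwa [hwin1 i hi, List.getD_append _ _ _ _ hi] at this
    · intro i' hi'
      have := h (w.length + i') (by rw [List.length_append]; omega)
      rwa [hwin2 i', List.getD_append_right _ _ _ _ (by omega),
        Nat.add_sub_cancel_left] at this
  · rintro ⟨hw, ht⟩ i hi
    rw [List.length_append] at hi
    rcases lt_or_ge i w.length with hiw | hiw
    · rw [hwin1 i hiw, List.getD_append _ _ _ _ hiw]
      exact hw i hiw
    · obtain ⟨i', rfl⟩ : ∃ i', i = w.length + i' := ⟨i - w.length, by omega⟩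
      rw [hwin2 i', List.getD_append_right _ _ _ _ (by omega), Nat.add_sub_cancel_left]
      exact ht i' (by omega)

lemma sufD_append_right {D : ℕ} (x y : List (Pat N)) (hy : D ≤ y.length) :
    sufD D (x ++ y) = sufD D y := by
  unfold sufD
  have h1 : (x ++ y).length - D = x.length + (y.length - D) := by
    rw [List.length_append]; omega
  rw [h1, List.drop_length_add_append]

variable {D τ : ℕ} (hshift : Measure.map shiftMap P = P) (hpos : PosCyl P)
  (hD : 1 ≤ D) (hMarkov : MarkovOrder P D)
include hshift hpos hD hMarkov

lemma TT_split (z w t : List (Pat N)) (hz : D ≤ z.length) :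
    TT P τ z (w ++ t) = ∑ u₁ : Fin (w.length * τ) → Pat N,
      (if Matches τ w (List.ofFn u₁) then
        pw P (z ++ List.ofFn u₁) * TT P τ (sufD D (z ++ List.ofFn u₁)) t
          / pw P (sufD D (z ++ List.ofFn u₁)) else 0) := by
  unfold TT
  rw [sum_word_cast (show (w ++ t).length * τ = w.length * τ + t.length * τ by
      rw [List.length_append]; ring)
    (fun l => if Matches τ (w ++ t) l then pw P (z ++ l) else 0)]
  rw [sum_word_split (w.length * τ) (t.length * τ)
    (fun l => if Matches τ (w ++ t) l then pw P (z ++ l) else 0)]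
  refine Finset.sum_congr rfl (fun u₁ _ => ?_)
  by_cases hM : Matches τ w (List.ofFn u₁)
  · rw [if_pos hM]
    set L := z ++ List.ofFn u₁ with hL
    have hLlen : D ≤ L.length := by
      rw [hL, List.length_append]; omega
    have hpw := pw_pos hpos (sufD D L)
    rw [eq_div_iff hpw.ne']
    rw [Finset.sum_mul, Finset.mul_sum]
    refine Finset.sum_congr rfl (fun u₂ _ => ?_)
    by_cases hM2 : Matches τ t (List.ofFn u₂)
    · rw [if_pos ((matches_append w t _ _ (by simp)).mpr ⟨hM, hM2⟩), if_pos hM2]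
      have harr : z ++ (List.ofFn u₁ ++ List.ofFn u₂) = L ++ List.ofFn u₂ := by
        rw [hL, List.append_assoc]
      rw [harr, markov_chain hshift hpos hD hMarkov L (List.ofFn u₂) hLlen]
      ring
    · rw [if_neg (fun hc => hM2 ((matches_append w t _ _ (by simp)).mp hc).2),
        if_neg hM2]
      ring
  · rw [if_neg hM]
    refine Finset.sum_eq_zero (fun u₂ _ => ?_)
    rw [if_neg (fun hc => hM ((matches_append w t _ _ (by simp)).mp hc).1)]

omit hD hMarkov in
lemma TT_nil_decomp (s : List (Pat N)) :
    TT P τ [] s = ∑ z : Fin D → Pat N, TT P τ (List.ofFn z) s := by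
  unfold TT
  rw [Finset.sum_comm]
  refine Finset.sum_congr rfl (fun v _ => ?_)
  by_cases hM : Matches τ s (List.ofFn v)
  · simp only [if_pos hM]
    rw [List.nil_append]
    exact pw_sum_left_many hshift D (List.ofFn v)
  · simp only [if_neg hM, Finset.sum_const_zero]

end Prop2
end Part6
section Part7
namespace Prop2
open MeasureTheory

set_option linter.unusedSectionVars false

variable {N : ℕ} {P : Measure (Conf N)} [IsProbabilityMeasure P]

/-- canonical realizing word of a binned word: spike pattern at the start of each window. -/
def ub (τ : ℕ) (t : List (Pat N)) : Fin (t.length * τ) → Pat N :=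
  fun j => if j.val % τ = 0 then t.getD (j.val / τ) (zPat N) else zPat N

lemma ofFn_getD {n : ℕ} (l : List (Pat N)) (hl : l.length = n) :
    List.ofFn (fun i : Fin n => l.getD i.val (zPat N)) = l := by
  apply List.ext_getElem (by simp [hl])
  intro j h1 h2
  rw [List.getElem_ofFn]
  exact List.getD_eq_getElem l (zPat N) h2

lemma matches_ub {τ : ℕ} (hτ : 1 ≤ τ) (t : List (Pat N)) :
    Matches τ t (List.ofFn (ub τ t)) := by
  intro i hi
  funext k
  have hlen : i * τ + τ ≤ (List.ofFn (ub τ t)).length := by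
    simp only [List.length_ofFn]
    have h1 := Nat.mul_le_mul_right τ hi
    rw [Nat.succ_mul] at h1; omega
  rw [bin1_window _ _ _ hlen]
  rw [Bool.eq_iff_iff, List.any_eq_true]
  constructor
  · rintro ⟨r, hr, hrk⟩
    have hre : r < τ := List.mem_range.mp hr
    have hlt : i * τ + r < t.length * τ := by
      have h1 := Nat.mul_le_mul_right τ hi
      rw [Nat.succ_mul] at h1; omega
    rw [getD_ofFn _ hlt] at hrk
    unfold ub at hrk
    rcases Nat.eq_zero_or_pos r with hr0 | hr0
    · subst hr0
      simp only [Nat.add_zero, Nat.mul_mod_left, if_pos rfl,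
        Nat.mul_div_cancel i (by omega : 0 < τ)] at hrk
      exact hrk
    · exfalso
      have hmod : (i * τ + r) % τ = r := by
        rw [mul_comm, Nat.mul_add_mod, Nat.mod_eq_of_lt hre]
      rw [if_neg (show ¬(i * τ + r) % τ = 0 by rw [hmod]; omega)] at hrk
      exact Bool.false_ne_true hrk
  · intro hk
    refine ⟨0, List.mem_range.mpr (by omega), ?_⟩
    have hlt : i * τ + 0 < t.length * τ := by
      have h1 := Nat.mul_le_mul_right τ hi
      rw [Nat.succ_mul] at h1; omega
    rw [getD_ofFn _ hlt]
    unfold ub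
    simp only [Nat.add_zero, Nat.mul_mod_left, if_pos rfl,
      Nat.mul_div_cancel i (by omega : 0 < τ)]
    exact hk

variable {D τ : ℕ} (hshift : Measure.map shiftMap P = P) (hpos : PosCyl P)
  (hD : 1 ≤ D) (hτ : 1 ≤ τ) (hMarkov : MarkovOrder P D)

omit hD hMarkov in
include hpos hτ in
lemma TT_pos (z t : List (Pat N)) : 0 < TT P τ z t := by
  unfold TT
  refine Finset.sum_pos' (fun v _ => ?_) ⟨ub τ t, Finset.mem_univ _, ?_⟩
  · by_cases h : Matches τ t (List.ofFn v)
    · rw [if_pos h]; exact pw_nonneg _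
    · rw [if_neg h]
  · rw [if_pos (matches_ub hτ t)]
    exact pw_pos hpos _

omit hD hMarkov in
lemma TT_nonneg (z t : List (Pat N)) : 0 ≤ TT P τ z t := by
  unfold TT
  refine Finset.sum_nonneg (fun v _ => ?_)
  by_cases h : Matches τ t (List.ofFn v)
  · rw [if_pos h]; exact pw_nonneg _
  · rw [if_neg h]

include hshift in
omit hD hMarkov in
lemma TT_mono (a : Pat N) (z t : List (Pat N)) :
    TT P τ z (t ++ [a]) ≤ TT P τ z t := by
  conv_lhs => unfold TT
  rw [sum_word_cast (show (t ++ [a]).length * τ = t.length * τ + 1 * τ by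
      rw [List.length_append, List.length_singleton]; ring)
    (fun l => if Matches τ (t ++ [a]) l then pw P (z ++ l) else 0)]
  rw [sum_word_split (t.length * τ) (1 * τ)
    (fun l => if Matches τ (t ++ [a]) l then pw P (z ++ l) else 0)]
  unfold TT
  refine Finset.sum_le_sum (fun u _ => ?_)
  by_cases hM : Matches τ t (List.ofFn u)
  · rw [if_pos hM]
    have hsum := pw_sum_right_many hshift (1 * τ) (z ++ List.ofFn u)
    rw [hsum]
    refine Finset.sum_le_sum (fun c _ => ?_)
    by_cases h2 : Matches τ (t ++ [a]) (List.ofFn u ++ List.ofFn c)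
    · rw [if_pos h2, ← List.append_assoc]
    · rw [if_neg h2]; exact pw_nonneg _
  · refine Finset.sum_nonpos (fun c _ => ?_) |>.trans (by rw [if_neg hM])
    rcases (em (Matches τ (t ++ [a]) (List.ofFn u ++ List.ofFn c))) with h2 | h2
    · exfalso
      exact hM ((matches_append t [a] _ _ (by simp)).mp h2).1
    · rw [if_neg h2]

/-- binned conditional probability of seeing `a` next, given the word `z` then binned `t`. -/
noncomputable def GG (P : Measure (Conf N)) (τ : ℕ) (a : Pat N) (z t : List (Pat N)) : ℝ :=
  TT P τ z (t ++ [a]) / TT P τ z t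

omit hD hMarkov in
include hpos hτ in
lemma GG_nonneg (a : Pat N) (z t : List (Pat N)) : 0 ≤ GG P τ a z t :=
  div_nonneg (TT_nonneg z (t ++ [a])) (TT_nonneg z t)

omit hD hMarkov in
include hshift hpos hτ in
lemma GG_le_one (a : Pat N) (z t : List (Pat N)) : GG P τ a z t ≤ 1 :=
  div_le_one_of_le₀ (TT_mono hshift a z t) (TT_nonneg z t)

/-- unnormalized weight in the decomposition of `TT z (t₀ ++ t)`. -/
noncomputable def wt (P : Measure (Conf N)) (τ D : ℕ) (z t₀ t : List (Pat N))
    (u₁ : Fin (t₀.length * τ) → Pat N) : ℝ :=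
  if Matches τ t₀ (List.ofFn u₁) then
    pw P (z ++ List.ofFn u₁) * TT P τ (sufD D (z ++ List.ofFn u₁)) t
      / pw P (sufD D (z ++ List.ofFn u₁)) else 0

omit hD hMarkov in
include hpos hτ in
lemma wt_nonneg (z t₀ t : List (Pat N)) (u₁ : Fin (t₀.length * τ) → Pat N) :
    0 ≤ wt P τ D z t₀ t u₁ := by
  unfold wt
  by_cases h : Matches τ t₀ (List.ofFn u₁)
  · rw [if_pos h]
    exact div_nonneg (mul_nonneg (pw_nonneg _) (TT_nonneg _ _)) (pw_nonneg _)
  · rw [if_neg h]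

include hshift hpos hD hMarkov in
lemma wt_sum (z t₀ t : List (Pat N)) (hz : D ≤ z.length) :
    ∑ u₁ : Fin (t₀.length * τ) → Pat N, wt P τ D z t₀ t u₁ = TT P τ z (t₀ ++ t) := by
  rw [TT_split hshift hpos hD hMarkov z t₀ t hz]
  rfl

include hshift hpos hD hτ hMarkov in
lemma GG_split (a : Pat N) (z t₀ t : List (Pat N)) (hz : D ≤ z.length) :
    GG P τ a z (t₀ ++ t) = ∑ u₁ : Fin (t₀.length * τ) → Pat N,
      (wt P τ D z t₀ t u₁ / TT P τ z (t₀ ++ t))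
        * GG P τ a (sufD D (z ++ List.ofFn u₁)) t := by
  unfold GG
  rw [show (t₀ ++ t) ++ [a] = t₀ ++ (t ++ [a]) from (List.append_assoc _ _ _)]
  rw [TT_split hshift hpos hD hMarkov z t₀ (t ++ [a]) hz]
  rw [Finset.sum_div]
  refine Finset.sum_congr rfl (fun u₁ _ => ?_)
  unfold wt
  by_cases hM : Matches τ t₀ (List.ofFn u₁)
  · rw [if_pos hM, if_pos hM]
    have h1 := (TT_pos hpos hτ (sufD D (z ++ List.ofFn u₁)) t).ne'
    have h2 := (pw_pos hpos (sufD D (z ++ List.ofFn u₁))).ne'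
    have h3 := (TT_pos hpos hτ z (t₀ ++ t)).ne'
    field_simp
  · rw [if_neg hM, if_neg hM]
    simp

end Prop2
end Part7
section Part8
namespace Prop2
open MeasureTheory

set_option linter.unusedSectionVars false

lemma convex_mem {ι : Type*} [Fintype ι] (w h : ι → ℝ) (lo hi : ℝ)
    (hw0 : ∀ i, 0 ≤ w i) (hw1 : ∑ i, w i = 1) (hh : ∀ i, lo ≤ h i ∧ h i ≤ hi) :
    lo ≤ ∑ i, w i * h i ∧ ∑ i, w i * h i ≤ hi := by
  constructor
  · have : ∑ i, w i * lo ≤ ∑ i, w i * h i :=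
      Finset.sum_le_sum (fun i _ => mul_le_mul_of_nonneg_left (hh i).1 (hw0 i))
    rwa [← Finset.sum_mul, hw1, one_mul] at this
  · have : ∑ i, w i * h i ≤ ∑ i, w i * hi :=
      Finset.sum_le_sum (fun i _ => mul_le_mul_of_nonneg_left (hh i).2 (hw0 i))
    rwa [← Finset.sum_mul, hw1, one_mul] at this

lemma convex_contract {ι : Type*} [Fintype ι] (w w' h : ι → ℝ) (δ lo hi : ℝ)
    (hw0' : ∀ i, 0 ≤ w' i) (hw1 : ∑ i, w i = 1) (hw1' : ∑ i, w' i = 1)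
    (hcmp : ∀ i, δ * w' i ≤ w i) (hh : ∀ i, lo ≤ h i ∧ h i ≤ hi) (hδ0 : 0 ≤ δ) :
    (∑ i, w i * h i) - (∑ i, w' i * h i) ≤ (1 - δ) * (hi - lo) := by
  have expand : (∑ i, w i * h i) - (∑ i, w' i * h i)
      = (∑ i, (w i - δ * w' i) * h i) - (1 - δ) * (∑ i, w' i * h i) := by
    rw [Finset.mul_sum, ← Finset.sum_sub_distrib, ← Finset.sum_sub_distrib]
    exact Finset.sum_congr rfl (fun i _ => by ring)
  have key1 : ∑ i, (w i - δ * w' i) * h i ≤ (1 - δ) * hi := by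
    have h1 : ∑ i, (w i - δ * w' i) * h i ≤ ∑ i, (w i - δ * w' i) * hi :=
      Finset.sum_le_sum (fun i _ =>
        mul_le_mul_of_nonneg_left (hh i).2 (by linarith [hcmp i]))
    have h2 : ∑ i, (w i - δ * w' i) * hi = (1 - δ) * hi := by
      rw [← Finset.sum_mul, Finset.sum_sub_distrib, ← Finset.mul_sum, hw1, hw1']
      ring
    linarith
  have key2 : lo ≤ ∑ i, w' i * h i := (convex_mem w' h lo hi hw0' hw1' hh).1
  have hδ1 : δ ≤ 1 := by
    have h3 := Finset.sum_le_sum (fun i (_ : i ∈ Finset.univ) => hcmp i)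
    rw [← Finset.mul_sum, hw1, hw1'] at h3
    simpa using h3
  rw [expand]
  nlinarith [key1, key2, mul_le_mul_of_nonneg_left key2 (by linarith : (0:ℝ) ≤ 1 - δ)]

variable {N : ℕ} {P : Measure (Conf N)} [IsProbabilityMeasure P]
variable {D τ : ℕ} (hshift : Measure.map shiftMap P = P) (hpos : PosCyl P)
  (hD : 1 ≤ D) (hτ : 1 ≤ τ) (hMarkov : MarkovOrder P D)

include hpos in
lemma exists_eps : ∃ ε : ℝ, 0 < ε ∧ ε < 1 ∧
    ∀ l : List (Pat N), l.length = D + D * τ → ε ≤ pw P l := by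
  obtain ⟨u₀, -, hmin⟩ := Finset.exists_min_image
    (Finset.univ : Finset (Fin (D + D * τ) → Pat N))
    (fun u => pw P (List.ofFn u)) Finset.univ_nonempty
  refine ⟨pw P (List.ofFn u₀) / 2, by linarith [pw_pos hpos (List.ofFn u₀)], ?_, ?_⟩
  · linarith [pw_le_one (P := P) (List.ofFn u₀), pw_pos hpos (List.ofFn u₀)]
  · intro l hl
    have h1 := hmin (fun i : Fin (D + D * τ) => l.getD i.val (zPat N)) (Finset.mem_univ _)
    rw [ofFn_getD l hl] at h1
    linarith [pw_pos hpos (List.ofFn u₀)]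

variable (ε : ℝ) (hε1 : 0 < ε) (hε2 : ε < 1)
  (hε3 : ∀ l : List (Pat N), l.length = D + D * τ → ε ≤ pw P l)

lemma sufD_indep (z t₀ : List (Pat N)) (hz : z.length = D) (ht₀ : t₀.length = D)
    (hτ' : 1 ≤ τ) (u₁ : Fin (t₀.length * τ) → Pat N) :
    sufD D (z ++ List.ofFn u₁) = sufD D (List.ofFn u₁) := by
  apply sufD_append_right
  rw [List.length_ofFn, ht₀]
  exact Nat.le_mul_of_pos_right D (by omega)

include hpos hτ hε1 hε3 in
lemma wt_comp (a' : Unit) (z z' t₀ t : List (Pat N)) (hz : z.length = D) (hz' : z'.length = D)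
    (ht₀ : t₀.length = D) (u₁ : Fin (t₀.length * τ) → Pat N) :
    ε * wt P τ D z' t₀ t u₁ ≤ wt P τ D z t₀ t u₁ := by
  unfold wt
  by_cases hM : Matches τ t₀ (List.ofFn u₁)
  · rw [if_pos hM, if_pos hM]
    rw [sufD_indep z t₀ hz ht₀ hτ u₁, sufD_indep z' t₀ hz' ht₀ hτ u₁]
    set S := sufD D (List.ofFn u₁)
    have hc : 0 ≤ TT P τ S t / pw P S := div_nonneg (TT_nonneg _ _) (pw_nonneg _)
    have hlen : (z ++ List.ofFn u₁).length = D + D * τ := by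
      rw [List.length_append, List.length_ofFn, hz, ht₀]
    have hlen' : (z' ++ List.ofFn u₁).length = D + D * τ := by
      rw [List.length_append, List.length_ofFn, hz', ht₀]
    have h1 : ε * pw P (z' ++ List.ofFn u₁) ≤ pw P (z ++ List.ofFn u₁) := by
      have := hε3 _ hlen
      have h2 := pw_le_one (P := P) (z' ++ List.ofFn u₁)
      nlinarith
    calc ε * (pw P (z' ++ List.ofFn u₁) * TT P τ S t / pw P S)
        = (ε * pw P (z' ++ List.ofFn u₁)) * (TT P τ S t / pw P S) := by ring
      _ ≤ pw P (z ++ List.ofFn u₁) * (TT P τ S t / pw P S) :=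
          mul_le_mul_of_nonneg_right h1 hc
      _ = pw P (z ++ List.ofFn u₁) * TT P τ S t / pw P S := by ring
  · rw [if_neg hM, if_neg hM, mul_zero]

include hshift hpos hD hτ hMarkov hε1 hε3 in
lemma TT_comp (z z' t₀ t : List (Pat N)) (hz : z.length = D) (hz' : z'.length = D)
    (ht₀ : t₀.length = D) :
    ε * TT P τ z' (t₀ ++ t) ≤ TT P τ z (t₀ ++ t) := by
  rw [← wt_sum hshift hpos hD hMarkov z t₀ t (by omega),
    ← wt_sum hshift hpos hD hMarkov z' t₀ t (by omega), Finset.mul_sum]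
  exact Finset.sum_le_sum (fun u₁ _ => wt_comp hpos hτ ε hε1 hε3 () z z' t₀ t hz hz' ht₀ u₁)

/-- oscillation of the binned kernel over all order-`D` hidden states. -/
noncomputable def Osc (P : Measure (Conf N)) (τ D : ℕ) (a : Pat N) (t : List (Pat N)) : ℝ :=
  (Finset.univ.sup' Finset.univ_nonempty (fun z : Fin D → Pat N => GG P τ a (List.ofFn z) t))
    - (Finset.univ.inf' Finset.univ_nonempty (fun z : Fin D → Pat N => GG P τ a (List.ofFn z) t))

include hpos hτ in
lemma Osc_nonneg (a : Pat N) (t : List (Pat N)) : 0 ≤ Osc P τ D a t := by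
  unfold Osc
  have := Finset.inf'_le (fun z : Fin D → Pat N => GG P τ a (List.ofFn z) t)
    (Finset.mem_univ (fun _ => zPat N))
  have := Finset.le_sup' (fun z : Fin D → Pat N => GG P τ a (List.ofFn z) t)
    (Finset.mem_univ (fun _ => zPat N))
  linarith

include hshift hpos hτ in
lemma Osc_le_one (a : Pat N) (t : List (Pat N)) : Osc P τ D a t ≤ 1 := by
  unfold Osc
  have h1 : Finset.univ.sup' Finset.univ_nonempty
      (fun z : Fin D → Pat N => GG P τ a (List.ofFn z) t) ≤ 1 :=
    Finset.sup'_le _ _ (fun z _ => GG_le_one hshift hpos hτ a (List.ofFn z) t)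
  have h2 : (0:ℝ) ≤ Finset.univ.inf' Finset.univ_nonempty
      (fun z : Fin D → Pat N => GG P τ a (List.ofFn z) t) :=
    Finset.le_inf' _ _ (fun z _ => GG_nonneg hpos hτ a (List.ofFn z) t)
  linarith

include hshift hpos hD hτ hMarkov hε1 hε2 hε3 in
lemma GG_bound_contract (a : Pat N) (t₀ t : List (Pat N)) (ht₀ : t₀.length = D)
    (z z' : Fin D → Pat N) :
    GG P τ a (List.ofFn z) (t₀ ++ t) - GG P τ a (List.ofFn z') (t₀ ++ t)
      ≤ (1 - ε ^ 2) * Osc P τ D a t := by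
  set lo := Finset.univ.inf' Finset.univ_nonempty
    (fun z : Fin D → Pat N => GG P τ a (List.ofFn z) t) with hlo
  set hi := Finset.univ.sup' Finset.univ_nonempty
    (fun z : Fin D → Pat N => GG P τ a (List.ofFn z) t) with hhi
  have hOsc : Osc P τ D a t = hi - lo := rfl
  have hzlen : (List.ofFn z).length = D := by simp
  have hzlen' : (List.ofFn z').length = D := by simp
  -- the common value function
  set h : (Fin (t₀.length * τ) → Pat N) → ℝ :=
    fun u₁ => GG P τ a (sufD D (List.ofFn u₁)) t with hdefh
  have hsuflen : ∀ u₁ : Fin (t₀.length * τ) → Pat N, (sufD D (List.ofFn u₁)).length = D := by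
    intro u₁
    apply length_sufD
    rw [List.length_ofFn, ht₀]
    exact Nat.le_mul_of_pos_right D (by omega)
  have hh : ∀ u₁ : Fin (t₀.length * τ) → Pat N, lo ≤ h u₁ ∧ h u₁ ≤ hi := by
    intro u₁
    have hconv : List.ofFn (fun i : Fin D => (sufD D (List.ofFn u₁)).getD i.val (zPat N))
        = sufD D (List.ofFn u₁) := ofFn_getD _ (hsuflen u₁)
    constructor
    · have := Finset.inf'_le (fun z : Fin D → Pat N => GG P τ a (List.ofFn z) t)
        (Finset.mem_univ (fun i : Fin D => (sufD D (List.ofFn u₁)).getD i.val (zPat N)))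
      rwa [hconv] at this
    · have := Finset.le_sup' (fun z : Fin D → Pat N => GG P τ a (List.ofFn z) t)
        (Finset.mem_univ (fun i : Fin D => (sufD D (List.ofFn u₁)).getD i.val (zPat N)))
      rwa [hconv] at this
  -- weights
  set w : (Fin (t₀.length * τ) → Pat N) → ℝ :=
    fun u₁ => wt P τ D (List.ofFn z) t₀ t u₁ / TT P τ (List.ofFn z) (t₀ ++ t) with hdefw
  set w' : (Fin (t₀.length * τ) → Pat N) → ℝ :=
    fun u₁ => wt P τ D (List.ofFn z') t₀ t u₁ / TT P τ (List.ofFn z') (t₀ ++ t) with hdefw'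
  have hTz : 0 < TT P τ (List.ofFn z) (t₀ ++ t) := TT_pos hpos hτ _ _
  have hTz' : 0 < TT P τ (List.ofFn z') (t₀ ++ t) := TT_pos hpos hτ _ _
  have hGsplit : GG P τ a (List.ofFn z) (t₀ ++ t) = ∑ u₁, w u₁ * h u₁ := by
    rw [GG_split hshift hpos hD hτ hMarkov a (List.ofFn z) t₀ t (by omega)]
    refine Finset.sum_congr rfl (fun u₁ _ => ?_)
    rw [hdefh, hdefw]
    rw [sufD_indep (List.ofFn z) t₀ hzlen ht₀ hτ u₁]
  have hGsplit' : GG P τ a (List.ofFn z') (t₀ ++ t) = ∑ u₁, w' u₁ * h u₁ := by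
    rw [GG_split hshift hpos hD hτ hMarkov a (List.ofFn z') t₀ t (by omega)]
    refine Finset.sum_congr rfl (fun u₁ _ => ?_)
    rw [hdefh, hdefw']
    rw [sufD_indep (List.ofFn z') t₀ hzlen' ht₀ hτ u₁]
  have hw1 : ∑ u₁, w u₁ = 1 := by
    rw [hdefw, ← Finset.sum_div, wt_sum hshift hpos hD hMarkov _ t₀ t (by omega),
      div_self hTz.ne']
  have hw1' : ∑ u₁, w' u₁ = 1 := by
    rw [hdefw', ← Finset.sum_div, wt_sum hshift hpos hD hMarkov _ t₀ t (by omega),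
      div_self hTz'.ne']
  have hw0' : ∀ u₁, 0 ≤ w' u₁ :=
    fun u₁ => div_nonneg (wt_nonneg hpos hτ _ t₀ t u₁) hTz'.le
  have hcmp : ∀ u₁, ε ^ 2 * w' u₁ ≤ w u₁ := by
    intro u₁
    have h1 := wt_comp hpos hτ ε hε1 hε3 () (List.ofFn z) (List.ofFn z') t₀ t hzlen hzlen' ht₀ u₁
    have h2 := TT_comp hshift hpos hD hτ hMarkov ε hε1 hε3 (List.ofFn z') (List.ofFn z) t₀ t hzlen' hzlen ht₀
    have ha' : 0 ≤ wt P τ D (List.ofFn z') t₀ t u₁ := wt_nonneg hpos hτ _ t₀ t u₁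
    have ha : 0 ≤ wt P τ D (List.ofFn z) t₀ t u₁ := wt_nonneg hpos hτ _ t₀ t u₁
    have key := mul_le_mul h1 h2
      (by positivity : (0:ℝ) ≤ ε * TT P τ (List.ofFn z) (t₀ ++ t)) ha
    simp only [hdefw, hdefw']
    rw [← mul_div_assoc, div_le_div_iff₀ hTz' hTz]
    nlinarith [key]
  have := convex_contract w w' h (ε ^ 2) lo hi hw0' hw1 hw1' hcmp hh (by positivity)
  rw [hGsplit, hGsplit', hOsc]
  exact this

end Prop2
end Part8
section Part9
namespace Prop2
open MeasureTheory

set_option linter.unusedSectionVars false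

variable {N : ℕ} {P : Measure (Conf N)} [IsProbabilityMeasure P]
variable {D τ : ℕ} (hshift : Measure.map shiftMap P = P) (hpos : PosCyl P)
  (hD : 1 ≤ D) (hτ : 1 ≤ τ) (hMarkov : MarkovOrder P D)
variable (ε : ℝ) (hε1 : 0 < ε) (hε2 : ε < 1)
  (hε3 : ∀ l : List (Pat N), l.length = D + D * τ → ε ≤ pw P l)

include hshift hpos hD hτ hMarkov hε1 hε2 hε3 in
lemma Osc_contract (a : Pat N) (t₀ t : List (Pat N)) (ht₀ : t₀.length = D) :
    Osc P τ D a (t₀ ++ t) ≤ (1 - ε ^ 2) * Osc P τ D a t := by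
  have key : ∀ z z' : Fin D → Pat N,
      GG P τ a (List.ofFn z) (t₀ ++ t) - GG P τ a (List.ofFn z') (t₀ ++ t)
        ≤ (1 - ε ^ 2) * Osc P τ D a t :=
    fun z z' => GG_bound_contract hshift hpos hD hτ hMarkov ε hε1 hε2 hε3 a t₀ t ht₀ z z'
  have h1 : ∀ z : Fin D → Pat N,
      GG P τ a (List.ofFn z) (t₀ ++ t) - (1 - ε ^ 2) * Osc P τ D a t
        ≤ Finset.univ.inf' Finset.univ_nonempty
          (fun z' : Fin D → Pat N => GG P τ a (List.ofFn z') (t₀ ++ t)) := by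
    intro z
    exact Finset.le_inf' _ _ (fun z' _ => by linarith [key z z'])
  have h2 : Finset.univ.sup' Finset.univ_nonempty
      (fun z : Fin D → Pat N => GG P τ a (List.ofFn z) (t₀ ++ t))
        ≤ Finset.univ.inf' Finset.univ_nonempty
          (fun z' : Fin D → Pat N => GG P τ a (List.ofFn z') (t₀ ++ t))
          + (1 - ε ^ 2) * Osc P τ D a t :=
    Finset.sup'_le _ _ (fun z _ => by linarith [h1 z])
  have hOsc2 : Osc P τ D a (t₀ ++ t)
      = Finset.univ.sup' Finset.univ_nonempty
          (fun z : Fin D → Pat N => GG P τ a (List.ofFn z) (t₀ ++ t))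
        - Finset.univ.inf' Finset.univ_nonempty
          (fun z' : Fin D → Pat N => GG P τ a (List.ofFn z') (t₀ ++ t)) := rfl
  rw [hOsc2]
  linarith

include hshift hpos hD hτ hMarkov hε1 hε2 hε3 in
lemma Osc_iter (a : Pat N) : ∀ n : ℕ, ∀ t : List (Pat N), t.length = n →
    Osc P τ D a t ≤ (1 - ε ^ 2) ^ (n / D) := by
  intro n
  induction n using Nat.strong_induction_on with
  | _ n ih =>
    intro t ht
    have hβ : (0:ℝ) ≤ 1 - ε ^ 2 := by nlinarith
    rcases lt_or_ge n D with h | h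
    · rw [Nat.div_eq_of_lt h, pow_zero]
      exact Osc_le_one hshift hpos hτ a t
    · have htake : (t.take D).length = D := by rw [List.length_take, ht]; omega
      have hdrop : (t.drop D).length = n - D := by rw [List.length_drop, ht]
      calc Osc P τ D a t = Osc P τ D a (t.take D ++ t.drop D) := by
            rw [List.take_append_drop]
        _ ≤ (1 - ε ^ 2) * Osc P τ D a (t.drop D) :=
            Osc_contract hshift hpos hD hτ hMarkov ε hε1 hε2 hε3 a _ _ htake
        _ ≤ (1 - ε ^ 2) * (1 - ε ^ 2) ^ ((n - D) / D) :=
            mul_le_mul_of_nonneg_left (ih (n - D) (by omega) _ hdrop) hβ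
        _ = (1 - ε ^ 2) ^ ((n - D) / D + 1) := by rw [pow_succ]; ring
        _ = (1 - ε ^ 2) ^ (n / D) := by rw [Nat.div_eq_sub_div (by omega) h]

include hshift hpos hD hτ hMarkov in
lemma TT_split_GG (a : Pat N) (z w t : List (Pat N)) (hz : D ≤ z.length) :
    TT P τ z (w ++ (t ++ [a]))
      = ∑ u₁ : Fin (w.length * τ) → Pat N,
          wt P τ D z w t u₁ * GG P τ a (sufD D (z ++ List.ofFn u₁)) t := by
  rw [TT_split hshift hpos hD hMarkov z w (t ++ [a]) hz]
  refine Finset.sum_congr rfl (fun u₁ _ => ?_)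
  unfold wt GG
  by_cases hM : Matches τ w (List.ofFn u₁)
  · rw [if_pos hM, if_pos hM]
    have h1 := (TT_pos hpos hτ (sufD D (z ++ List.ofFn u₁)) t).ne'
    have h2 := (pw_pos hpos (sufD D (z ++ List.ofFn u₁))).ne'
    field_simp
  · rw [if_neg hM, if_neg hM, zero_mul]

include hshift hpos hD hτ hMarkov in
lemma master_mem (a : Pat N) (w t : List (Pat N)) :
    Finset.univ.inf' Finset.univ_nonempty
        (fun z : Fin D → Pat N => GG P τ a (List.ofFn z) t)
      ≤ TT P τ [] ((w ++ t) ++ [a]) / TT P τ [] (w ++ t)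
    ∧ TT P τ [] ((w ++ t) ++ [a]) / TT P τ [] (w ++ t)
      ≤ Finset.univ.sup' Finset.univ_nonempty
        (fun z : Fin D → Pat N => GG P τ a (List.ofFn z) t) := by
  set lo := Finset.univ.inf' Finset.univ_nonempty
    (fun z : Fin D → Pat N => GG P τ a (List.ofFn z) t) with hlo
  set hi := Finset.univ.sup' Finset.univ_nonempty
    (fun z : Fin D → Pat N => GG P τ a (List.ofFn z) t) with hhi
  have hnum : TT P τ [] ((w ++ t) ++ [a])
      = ∑ z : Fin D → Pat N, ∑ u₁ : Fin (w.length * τ) → Pat N,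
          wt P τ D (List.ofFn z) w t u₁
            * GG P τ a (sufD D (List.ofFn z ++ List.ofFn u₁)) t := by
    rw [List.append_assoc, TT_nil_decomp hshift hpos]
    exact Finset.sum_congr rfl (fun z _ =>
      TT_split_GG hshift hpos hD hτ hMarkov a (List.ofFn z) w t (by simp))
  have hden : TT P τ [] (w ++ t)
      = ∑ z : Fin D → Pat N, ∑ u₁ : Fin (w.length * τ) → Pat N,
          wt P τ D (List.ofFn z) w t u₁ := by
    rw [TT_nil_decomp hshift hpos]
    exact Finset.sum_congr rfl (fun z _ =>
      (wt_sum hshift hpos hD hMarkov (List.ofFn z) w t (by simp)).symm)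
  have hub : ∀ (z : Fin D → Pat N) (u₁ : Fin (w.length * τ) → Pat N),
      lo ≤ GG P τ a (sufD D (List.ofFn z ++ List.ofFn u₁)) t
        ∧ GG P τ a (sufD D (List.ofFn z ++ List.ofFn u₁)) t ≤ hi := by
    intro z u₁
    have hslen : (sufD D (List.ofFn z ++ List.ofFn u₁)).length = D :=
      length_sufD (by rw [List.length_append, List.length_ofFn]; omega)
    have hconv : List.ofFn (fun i : Fin D =>
        (sufD D (List.ofFn z ++ List.ofFn u₁)).getD i.val (zPat N))
        = sufD D (List.ofFn z ++ List.ofFn u₁) := ofFn_getD _ hslen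
    constructor
    · have := Finset.inf'_le (fun z : Fin D → Pat N => GG P τ a (List.ofFn z) t)
        (Finset.mem_univ (fun i : Fin D =>
          (sufD D (List.ofFn z ++ List.ofFn u₁)).getD i.val (zPat N)))
      rwa [hconv] at this
    · have := Finset.le_sup' (fun z : Fin D → Pat N => GG P τ a (List.ofFn z) t)
        (Finset.mem_univ (fun i : Fin D =>
          (sufD D (List.ofFn z ++ List.ofFn u₁)).getD i.val (zPat N)))
      rwa [hconv] at this
  have hwt0 : ∀ (z : Fin D → Pat N) (u₁ : Fin (w.length * τ) → Pat N),
      0 ≤ wt P τ D (List.ofFn z) w t u₁ :=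
    fun z u₁ => wt_nonneg hpos hτ _ w t u₁
  have hdenpos : 0 < TT P τ [] (w ++ t) := TT_pos hpos hτ _ _
  constructor
  · rw [le_div_iff₀ hdenpos, hnum, hden, Finset.mul_sum]
    refine Finset.sum_le_sum (fun z _ => ?_)
    rw [Finset.mul_sum]
    refine Finset.sum_le_sum (fun u₁ _ => ?_)
    rw [mul_comm lo _]
    exact mul_le_mul_of_nonneg_left (hub z u₁).1 (hwt0 z u₁)
  · rw [div_le_iff₀ hdenpos, hnum, hden, Finset.mul_sum]
    refine Finset.sum_le_sum (fun z _ => ?_)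
    rw [Finset.mul_sum]
    refine Finset.sum_le_sum (fun u₁ _ => ?_)
    rw [mul_comm hi _]
    exact mul_le_mul_of_nonneg_left (hub z u₁).2 (hwt0 z u₁)

end Prop2
end Part9
section Part10
namespace Prop2
open MeasureTheory

set_option linter.unusedSectionVars false

variable {N : ℕ} {P : Measure (Conf N)} [IsProbabilityMeasure P]
variable {D τ : ℕ}

/-- the list of values of a finite past `x(-m), …, x(-1)`. -/
def xlist (m : ℕ) (x : ℤ → Pat N) : List (Pat N) :=
  List.ofFn (fun i : Fin m => x (-(m:ℤ) + i))

lemma xlist_length (m : ℕ) (x : ℤ → Pat N) : (xlist m x).length = m := by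
  simp [xlist]

variable (hshift : Measure.map shiftMap P = P)
include hshift

lemma condProb_eq (m : ℕ) (hm : 1 ≤ m) (a : Pat N) (x : ℤ → Pat N) :
    condProb (Measure.map (binMap τ) P) {ω | ω 0 = a}
        (cyl (Finset.Icc (-(m:ℤ)) (-1)) x)
      = TT P τ [] (xlist m x ++ [a]) / TT P τ [] (xlist m x) := by
  have hw : ∀ i : ℕ, i < m → x (-(m:ℤ) + i) = (xlist m x).getD i (zPat N) := by
    intro i hi
    rw [xlist, getD_ofFn _ hi]
  have hcy : cyl (Finset.Icc (-(m:ℤ)) (-1)) x = cylAt (-(m:ℤ)) (xlist m x) :=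
    cyl_Icc_eq m hm (xlist m x) (xlist_length m x) x hw
  unfold condProb
  rw [hcy, inter_sym_cylAt a m (xlist m x) (xlist_length m x),
    binned_cyl_eq τ hshift (-(m:ℤ)) (xlist m x ++ [a]),
    binned_cyl_eq τ hshift (-(m:ℤ)) (xlist m x)]

omit hshift

lemma xlist_suffix (k m : ℕ) (hkm : k ≤ m) (x : ℤ → Pat N) :
    (xlist m x).drop (m - k) = xlist k x := by
  apply List.ext_getElem
  · rw [List.length_drop, xlist_length, xlist_length]; omega
  · intro j h1 h2
    rw [List.getElem_drop]
    have hj : j < k := by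
      rw [List.length_drop, xlist_length] at h1; omega
    simp only [xlist, List.getElem_ofFn, Fin.val_mk]
    exact congrArg x (by omega)

lemma xlist_eq_of_agree (k : ℕ) (x y : ℤ → Pat N)
    (hxy : ∀ j : ℕ, 1 ≤ j → j ≤ k → x (-(j : ℤ)) = y (-(j : ℤ))) :
    xlist k x = xlist k y := by
  unfold xlist
  congr 1
  funext i
  have h1 : -(k:ℤ) + (i : ℤ) = -((k - i.val : ℕ) : ℤ) := by
    have := i.isLt; push_cast [Nat.cast_sub this.le]; ring
  rw [h1]
  exact hxy (k - i.val) (by have := i.isLt; omega) (by omega)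

end Prop2
end Part10
/-- **Proposition 2** (exponential continuity rate of the binned transition kernel,
finite-past form): there are `C > 0` and `α > 0` such that whenever two finite pasts
of lengths `m, m' ≥ k` agree on the last `k` coordinates, the corresponding binned
conditional probabilities of the present symbol differ by at most `C e^{-αk}`. -/
theorem binned_kernel_exponential_continuity
    {N D τ : ℕ} (hN : 1 ≤ N) (hD : 1 ≤ D) (hτ : 1 ≤ τ)
    (P : Measure (Conf N)) [IsProbabilityMeasure P]
    (hshift : Measure.map shiftMap P = P)
    (hpos : PosCyl P) (hMarkov : MarkovOrder P D) :
    ∃ C > (0 : ℝ), ∃ α > (0 : ℝ),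
      ∀ k : ℕ, 1 ≤ k → ∀ m m' : ℕ, k ≤ m → k ≤ m' →
        ∀ a : Pat N, ∀ x y : ℤ → Pat N,
          (∀ j : ℕ, 1 ≤ j → j ≤ k → x (-(j : ℤ)) = y (-(j : ℤ))) →
          |condProb (Measure.map (binMap τ) P) {ω | ω 0 = a}
              (cyl (Finset.Icc (-(m : ℤ)) (-1)) x)
            - condProb (Measure.map (binMap τ) P) {ω | ω 0 = a}
              (cyl (Finset.Icc (-(m' : ℤ)) (-1)) y)|
          ≤ C * Real.exp (-α * (k : ℝ)) := by
  classical
  obtain ⟨ε, hε1, hε2, hε3⟩ := Prop2.exists_eps (D := D) (τ := τ) hpos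
  set β : ℝ := 1 - ε ^ 2 with hβdef
  have hβ0 : 0 < β := by nlinarith
  have hβ1 : β < 1 := by nlinarith
  have hD0R : (0:ℝ) < (D:ℝ) := by exact_mod_cast hD
  have hlog : Real.log β < 0 := Real.log_neg hβ0 hβ1
  refine ⟨1 / β, by positivity, -Real.log β / (D:ℝ),
    div_pos (by linarith) hD0R, ?_⟩
  intro k hk m m' hm hm' a x y hxy
  have hFx := Prop2.condProb_eq (τ := τ) hshift m (le_trans hk hm) a x
  have hFy := Prop2.condProb_eq (τ := τ) hshift m' (le_trans hk hm') a y
  set t := Prop2.xlist k x with htdef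
  have htlen : t.length = k := Prop2.xlist_length k x
  have hx_split : Prop2.xlist m x = (Prop2.xlist m x).take (m - k) ++ t := by
    rw [htdef, ← Prop2.xlist_suffix k m hm x, List.take_append_drop]
  have hy_split : Prop2.xlist m' y = (Prop2.xlist m' y).take (m' - k) ++ t := by
    rw [htdef, Prop2.xlist_eq_of_agree k x y hxy,
      ← Prop2.xlist_suffix k m' hm' y, List.take_append_drop]
  rw [hx_split] at hFx
  rw [hy_split] at hFy
  have h1 := Prop2.master_mem hshift hpos hD hτ hMarkov a
    ((Prop2.xlist m x).take (m - k)) t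
  have h2 := Prop2.master_mem hshift hpos hD hτ hMarkov a
    ((Prop2.xlist m' y).take (m' - k)) t
  have hOsc : Prop2.Osc P τ D a t
      = Finset.univ.sup' Finset.univ_nonempty
          (fun z : Fin D → Pat N => Prop2.GG P τ a (List.ofFn z) t)
        - Finset.univ.inf' Finset.univ_nonempty
          (fun z : Fin D → Pat N => Prop2.GG P τ a (List.ofFn z) t) := rfl
  have habs : |condProb (Measure.map (binMap τ) P) {ω | ω 0 = a}
        (cyl (Finset.Icc (-(m : ℤ)) (-1)) x)
      - condProb (Measure.map (binMap τ) P) {ω | ω 0 = a}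
        (cyl (Finset.Icc (-(m' : ℤ)) (-1)) y)| ≤ Prop2.Osc P τ D a t := by
    rw [hFx, hFy, abs_sub_le_iff, hOsc]
    constructor
    · linarith [h1.2, h2.1]
    · linarith [h1.1, h2.2]
  have hdecay : Prop2.Osc P τ D a t ≤ β ^ (k / D) :=
    Prop2.Osc_iter hshift hpos hD hτ hMarkov ε hε1 hε2 hε3 a k t htlen
  -- numeric estimate
  have hq : (k:ℝ)/(D:ℝ) - 1 ≤ ((k / D : ℕ) : ℝ) := by
    have hdm := Nat.div_add_mod k D
    have hmod : k % D < D := Nat.mod_lt k (by omega)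
    rw [sub_le_iff_le_add, div_le_iff₀ hD0R]
    have hdm' : (D:ℝ) * ((k / D : ℕ):ℝ) + ((k % D : ℕ):ℝ) = (k:ℝ) := by exact_mod_cast hdm
    have hmod' : ((k % D : ℕ):ℝ) < (D:ℝ) := by exact_mod_cast hmod
    nlinarith [hdm', hmod']
  have hmain : β ^ (k / D) ≤ 1 / β * Real.exp (-(-Real.log β / (D:ℝ)) * (k:ℝ)) := by
    have hr1 : β ^ ((k / D : ℕ) : ℝ) ≤ β ^ ((k:ℝ)/(D:ℝ) - 1) :=
      Real.rpow_le_rpow_of_exponent_ge hβ0 hβ1.le hq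
    rw [Real.rpow_natCast] at hr1
    have hr2 : β ^ ((k:ℝ)/(D:ℝ) - 1 : ℝ)
        = 1 / β * Real.exp (-(-Real.log β / (D:ℝ)) * (k:ℝ)) := by
      rw [Real.rpow_def_of_pos hβ0]
      have harg : Real.log β * ((k:ℝ)/(D:ℝ) - 1)
          = (-(-Real.log β / (D:ℝ)) * (k:ℝ)) + (- Real.log β) := by
        field_simp
        ring
      rw [harg, Real.exp_add, Real.exp_neg, Real.exp_log hβ0]
      ring
    linarith [hr1, hr2.le, hr2.ge]
  calc |condProb (Measure.map (binMap τ) P) {ω | ω 0 = a}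
        (cyl (Finset.Icc (-(m : ℤ)) (-1)) x)
      - condProb (Measure.map (binMap τ) P) {ω | ω 0 = a}
        (cyl (Finset.Icc (-(m' : ℤ)) (-1)) y)|
      ≤ Prop2.Osc P τ D a t := habs
    _ ≤ β ^ (k / D) := hdecay
    _ ≤ 1 / β * Real.exp (-(-Real.log β / (D:ℝ)) * (k:ℝ)) := hmain
end

section
/- Strong non-nullness of the specification of the binned measure. There exists a constant c > 0 such that for all m, n ≥ 1, all a ∈ A and all ω ∈ Ω, P⁽ᵇ⁾(X₀ = a | X₋ₘ = ω(−m),…,X₋₁ = ω(−1), X₁ = ω(1),…,Xₙ = ω(n)) ≥ c, where the conditional probability is the ratio of the corresponding cylinder probabilities under P⁽ᵇ⁾. -/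
open MeasureTheory Filter

-- Section 1: measurability and cylinder basics
namespace BinPf
variable {N : ℕ}

lemma cyl_eq_iInter (s : Finset ℤ) (v : ℤ → Pat N) :
    cyl (N := N) s v = ⋂ n ∈ s, (fun ω : Conf N => ω n) ⁻¹' {v n} := by
  ext ω; simp [cyl]

lemma measurable_cyl (s : Finset ℤ) (v : ℤ → Pat N) : MeasurableSet (cyl (N := N) s v) := by
  rw [cyl_eq_iInter]
  exact MeasurableSet.biInter s.countable_toSet fun n _ =>
    (measurable_pi_apply n) (measurableSet_singleton _)

lemma cyl_congr {s : Finset ℤ} {v v' : ℤ → Pat N} (h : ∀ n ∈ s, v n = v' n) :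
    cyl (N := N) s v = cyl s v' := by
  ext ω
  exact ⟨fun hh n hn => (hh n hn).trans (h n hn), fun hh n hn => (hh n hn).trans (h n hn).symm⟩

lemma cyl_inter_cyl {s t : Finset ℤ} (hst : ∀ n, ¬ (n ∈ s ∧ n ∈ t)) (v u : ℤ → Pat N) :
    cyl (N := N) s v ∩ cyl t u = cyl (s ∪ t) (fun n => if n ∈ t then u n else v n) := by
  ext ω
  simp only [cyl, Set.mem_inter_iff, Set.mem_setOf_eq, Finset.mem_union]
  constructor
  · rintro ⟨h1, h2⟩ n hn
    by_cases h : n ∈ t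
    · simp [h, h2 n h]
    · simp [h, h1 n (hn.resolve_right h)]
  · intro h
    refine ⟨fun n hn => ?_, fun n hn => ?_⟩
    · have := h n (Or.inl hn)
      simpa [if_neg (fun ht => hst n ⟨hn, ht⟩)] using this
    · simpa [if_pos hn] using h n (Or.inr hn)

lemma measurable_shiftMap : Measurable (shiftMap (N := N)) :=
  measurable_pi_lambda _ fun n => measurable_pi_apply _

lemma list_any_congr (l : List ℕ) (f g : ℕ → Bool) (h : ∀ i ∈ l, f i = g i) :
    l.any f = l.any g := by
  induction l with
  | nil => simp
  | cons b t ih =>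
    simp only [List.any_cons, h b (by simp), ih (fun i hi => h i (by simp [hi]))]

lemma binMap_congr_at (τ : ℕ) (x y : Conf N) (j : ℤ)
    (h : ∀ i : ℕ, i < τ → x (j * (τ : ℤ) + (i : ℤ)) = y (j * (τ : ℤ) + (i : ℤ))) :
    binMap τ x j = binMap τ y j := by
  funext k
  unfold binMap
  apply list_any_congr
  intro i hi
  rw [h i (List.mem_range.mp hi)]

lemma measurable_binMap (τ : ℕ) : Measurable (binMap (N := N) τ) := by
  apply measurable_pi_lambda
  intro m
  have h1 : Measurable (fun ω : Conf N => fun i : Fin τ => ω (m * (τ : ℤ) + (i : ℤ))) :=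
    measurable_pi_lambda _ fun i => measurable_pi_apply _
  have h2 : Measurable (fun p : Fin τ → Pat N =>
      (fun k => (List.range τ).any fun i =>
        if h : i < τ then p ⟨i, h⟩ k else false : Pat N)) :=
    measurable_of_countable _
  have : (fun ω : Conf N => binMap τ ω m) = (fun p : Fin τ → Pat N =>
      (fun k => (List.range τ).any fun i =>
        if h : i < τ then p ⟨i, h⟩ k else false : Pat N)) ∘
      (fun ω : Conf N => fun i : Fin τ => ω (m * (τ : ℤ) + (i : ℤ))) := by
    funext ω
    funext k
    simp only [binMap, Function.comp]
    apply list_any_congr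
    intro i hi
    rw [dif_pos (List.mem_range.mp hi)]
  rw [this]
  exact h2.comp h1

end BinPf
-- Section 2: shift invariance of cylinder probabilities
namespace BinPf
variable {N : ℕ}

lemma shift_preimage_cyl (s : Finset ℤ) (v : ℤ → Pat N) :
    shiftMap ⁻¹' cyl (N := N) s v = cyl (s.image (· + 1)) (fun n => v (n - 1)) := by
  ext ω
  simp only [cyl, Set.mem_preimage, Set.mem_setOf_eq, Finset.mem_image, shiftMap]
  constructor
  · rintro h n ⟨mm, hm, rfl⟩
    simpa using h mm hm
  · intro h n hn
    simpa using h (n + 1) ⟨n, hn, rfl⟩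

variable (P : Measure (Conf N)) (hshift : Measure.map shiftMap P = P)

include hshift in
lemma shift_cyl_one (s : Finset ℤ) (v : ℤ → Pat N) :
    P (cyl s v) = P (cyl (s.image (· + 1)) (fun n => v (n - 1))) := by
  conv_lhs => rw [← hshift]
  rw [Measure.map_apply measurable_shiftMap (measurable_cyl s v), shift_preimage_cyl]

include hshift in
lemma shift_cyl_nat (k : ℕ) (s : Finset ℤ) (v : ℤ → Pat N) :
    P (cyl s v) = P (cyl (s.image (· + (k : ℤ))) (fun n => v (n - k))) := by
  induction k with
  | zero => simp
  | succ k ih =>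
    rw [ih, shift_cyl_one P hshift]
    rw [Finset.image_image]
    have h1 : ((· + (1:ℤ)) ∘ (· + (k:ℤ))) = (· + ((k:ℤ)+1)) := by
      funext x; simp; ring
    have h2 : (fun n : ℤ => v (n - 1 - k)) = (fun n => v (n - ((k:ℤ)+1))) := by
      funext n; congr 1; ring
    rw [show ((k:ℕ)+1 : ℕ) = k+1 from rfl]
    push_cast
    rw [h1]
    congr 1
    apply cyl_congr
    intro n _
    congr 1
    ring

include hshift in
lemma shift_cyl_Icc (k : ℤ) (a b : ℤ) (v : ℤ → Pat N) :
    P (cyl (Finset.Icc a b) v) = P (cyl (Finset.Icc (a + k) (b + k)) (fun n => v (n - k))) := by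
  have himg : ∀ (c : ℤ) (x y : ℤ), (Finset.Icc x y).image (· + c) = Finset.Icc (x + c) (y + c) := by
    intro c x y
    ext n
    simp only [Finset.mem_image, Finset.mem_Icc]
    constructor
    · rintro ⟨m, hm, rfl⟩; omega
    · intro h; exact ⟨n - c, by omega, by ring⟩
  rcases le_or_gt 0 k with hk | hk
  · obtain ⟨k', rfl⟩ : ∃ k' : ℕ, k = k' := ⟨k.toNat, (Int.toNat_of_nonneg hk).symm⟩
    rw [shift_cyl_nat P hshift k', himg]
  · obtain ⟨k', hk'⟩ : ∃ k' : ℕ, k = -k' := ⟨(-k).toNat, by omega⟩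
    subst hk'
    rw [shift_cyl_nat P hshift k' (Finset.Icc (a + -(k':ℤ)) (b + -(k':ℤ))), himg]
    have : (a + -(k':ℤ) + k') = a := by ring
    rw [this, show (b + -(k':ℤ) + k') = b by ring]
    congr 1
    apply cyl_congr
    intro n _
    congr 1
    ring

end BinPf
-- Section 3: conditional probabilities q, the constant delta
namespace BinPf
variable {N : ℕ}

/-- one-sided conditional probability of present given the previous `ℓ` symbols. -/
noncomputable def q (P : Measure (Conf N)) (ℓ : ℕ) (a : Pat N) (w : ℤ → Pat N) : ℝ :=
  condProb P {ω | ω 0 = a} (cyl (Finset.Icc (-(ℓ : ℤ)) (-1)) w)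

lemma setOf_inter_cyl (ℓ : ℕ) (hℓ : 1 ≤ ℓ) (a : Pat N) (w : ℤ → Pat N) :
    {ω : Conf N | ω 0 = a} ∩ cyl (Finset.Icc (-(ℓ : ℤ)) (-1)) w
      = cyl (Finset.Icc (-(ℓ : ℤ)) 0) (Function.update w 0 a) := by
  ext ω
  simp only [Set.mem_inter_iff, Set.mem_setOf_eq, cyl, Finset.mem_Icc]
  constructor
  · rintro ⟨h0, h1⟩ n hn
    rcases eq_or_lt_of_le hn.2 with h | h
    · subst h; simpa [Function.update]
    · rw [Function.update_of_ne (by omega)]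
      exact h1 n ⟨hn.1, by omega⟩
  · intro h
    refine ⟨?_, fun n hn => ?_⟩
    · have := h 0 ⟨by omega, le_refl 0⟩
      simpa [Function.update] using this
    · have := h n ⟨hn.1, by omega⟩
      rwa [Function.update_of_ne (by omega)] at this

variable (P : Measure (Conf N)) [IsProbabilityMeasure P]

lemma condProb_nonneg (E C : Set (Conf N)) : 0 ≤ condProb P E C :=
  div_nonneg ENNReal.toReal_nonneg ENNReal.toReal_nonneg

lemma condProb_le_one (E C : Set (Conf N)) : condProb P E C ≤ 1 := by
  unfold condProb
  rcases eq_or_ne ((P C).toReal) 0 with h | h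
  · simp [h]
  · rw [div_le_one (lt_of_le_of_ne ENNReal.toReal_nonneg (Ne.symm h))]
    exact ENNReal.toReal_mono (measure_ne_top P C) (measure_mono Set.inter_subset_right)

variable (hpos : PosCyl P)

include hpos in
lemma pr_cyl_pos (s : Finset ℤ) (v : ℤ → Pat N) : 0 < (P (cyl s v)).toReal :=
  ENNReal.toReal_pos (hpos s v).ne' (measure_ne_top P _)

include hpos in
lemma q_pos (ℓ : ℕ) (hℓ : 1 ≤ ℓ) (a : Pat N) (w : ℤ → Pat N) : 0 < q P ℓ a w := by
  unfold q condProb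
  rw [setOf_inter_cyl ℓ hℓ]
  exact div_pos (pr_cyl_pos P hpos _ _) (pr_cyl_pos P hpos _ _)

/-- embedding of a word of length `D` as (the relevant part of) a configuration. -/
def emb (D : ℕ) (u : Fin D → Pat N) : ℤ → Pat N := fun n =>
  if h : (n + D).toNat < D then u ⟨(n + D).toNat, h⟩ else zPat N

/-- restriction of a configuration to the window `[-D, -1]`, as a word. -/
def res (D : ℕ) (w : ℤ → Pat N) : Fin D → Pat N := fun i => w ((i : ℤ) - D)

lemma emb_res (D : ℕ) (w : ℤ → Pat N) {n : ℤ} (hn : -(D : ℤ) ≤ n ∧ n ≤ -1) :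
    emb D (res D w) n = w n := by
  unfold emb res
  rw [dif_pos (by omega)]
  show w ((((n + (D : ℤ)).toNat : ℕ) : ℤ) - D) = w n
  rw [show (((n + (D : ℤ)).toNat : ℕ) : ℤ) - D = n by omega]

variable (D : ℕ) (hD : 1 ≤ D)

/-- The uniform lower bound for one-sided conditional probabilities on histories
of length between 1 and `D`. -/
noncomputable def delta : ℝ :=
  Finset.inf' Finset.univ
    ⟨((⟨0, hD⟩ : Fin D), (zPat N, fun _ => zPat N)), Finset.mem_univ _⟩
    (fun p : Fin D × Pat N × (Fin D → Pat N) => q P ((p.1 : ℕ) + 1) p.2.1 (emb D p.2.2))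

include hpos in
lemma delta_pos : 0 < delta P D hD := by
  unfold delta
  refine (Finset.lt_inf'_iff _).2 ?_
  intro p _
  exact q_pos P hpos _ (by omega) _ _

include hpos in
lemma delta_le_q (ℓ : ℕ) (hℓ1 : 1 ≤ ℓ) (hℓD : ℓ ≤ D) (a : Pat N) (w : ℤ → Pat N) :
    delta P D hD ≤ q P ℓ a w := by
  have hq : q P ℓ a w = q P ℓ a (emb D (res D w)) := by
    unfold q
    rw [cyl_congr (fun n hn => ?_)]
    rw [Finset.mem_Icc] at hn
    rw [emb_res D w ⟨by omega, hn.2⟩]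
  rw [hq]
  have h2 := Finset.inf'_le (s := (Finset.univ : Finset (Fin D × Pat N × (Fin D → Pat N))))
    (fun p : Fin D × Pat N × (Fin D → Pat N) => q P ((p.1 : ℕ) + 1) p.2.1 (emb D p.2.2))
    (Finset.mem_univ ((⟨ℓ - 1, by omega⟩ : Fin D), (a, res D w)))
  simp only [Fin.val_mk, Nat.sub_add_cancel hℓ1] at h2
  exact le_trans (le_of_eq rfl) h2

include hpos in
lemma delta_le_one : delta P D hD ≤ 1 := by
  calc delta P D hD ≤ q P 1 (zPat N) (fun _ => zPat N) := delta_le_q P hpos D hD 1 le_rfl hD _ _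
    _ ≤ 1 := condProb_le_one P _ _

variable (hMarkov : MarkovOrder P D)

include hpos hMarkov in
lemma delta_le_q_all (ℓ : ℕ) (hℓ1 : 1 ≤ ℓ) (a : Pat N) (w : ℤ → Pat N) :
    delta P D hD ≤ q P ℓ a w := by
  rcases le_or_gt ℓ D with h | h
  · exact delta_le_q P hpos D hD ℓ hℓ1 h a w
  · have : q P ℓ a w = q P D a w := hMarkov a ℓ h.le w
    rw [this]
    exact delta_le_q P hpos D hD D hD le_rfl a w

end BinPf
-- Section 4: peeling and the comparison lemma
namespace BinPf
variable {N : ℕ} (P : Measure (Conf N)) [IsProbabilityMeasure P]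
  (hshift : Measure.map shiftMap P = P) (hpos : PosCyl P)

/-- real-valued cylinder probability -/
noncomputable def pr (P : Measure (Conf N)) (s : Finset ℤ) (w : ℤ → Pat N) : ℝ :=
  (P (cyl s w)).toReal

include hpos in
lemma pr_pos (s : Finset ℤ) (w : ℤ → Pat N) : 0 < pr P s w :=
  ENNReal.toReal_pos (hpos s w).ne' (measure_ne_top P _)

lemma pr_mono_Icc {a b b' : ℤ} (hb : b' ≤ b) (w : ℤ → Pat N) :
    pr P (Finset.Icc a b) w ≤ pr P (Finset.Icc a b') w := by
  apply ENNReal.toReal_mono (measure_ne_top P _)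
  apply measure_mono
  intro ω hω n hn
  rw [Finset.mem_Icc] at hn
  exact hω n (Finset.mem_Icc.mpr ⟨hn.1, hn.2.trans hb⟩)

lemma pr_congr {s : Finset ℤ} {w w' : ℤ → Pat N} (h : ∀ n ∈ s, w n = w' n) :
    pr P s w = pr P s w' := by
  unfold pr
  rw [cyl_congr h]

include hshift hpos in
lemma peel (L t : ℤ) (hLt : L ≤ t - 1) (w : ℤ → Pat N) :
    pr P (Finset.Icc L t) w
      = q P (t - L).toNat (w t) (fun n => w (n + t)) * pr P (Finset.Icc L (t - 1)) w := by
  have hnum : {ω : Conf N | ω 0 = w t} ∩ cyl (Finset.Icc (L - t) (-1)) (fun n => w (n + t))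
      = cyl (Finset.Icc (L - t) 0) (fun n => w (n + t)) := by
    ext ω
    simp only [Set.mem_inter_iff, Set.mem_setOf_eq, cyl, Finset.mem_Icc]
    constructor
    · rintro ⟨h0, h1⟩ n hn
      rcases eq_or_lt_of_le hn.2 with h | h
      · subst h; simpa using h0
      · exact h1 n ⟨hn.1, by omega⟩
    · intro h
      refine ⟨by simpa using h 0 ⟨by omega, le_refl 0⟩, fun n hn => h n ⟨hn.1, by omega⟩⟩
  have hshift1 : P (cyl (Finset.Icc (L - t) 0) (fun n => w (n + t))) = P (cyl (Finset.Icc L t) w) := by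
    rw [shift_cyl_Icc P hshift t (L - t) 0]
    rw [show L - t + t = L by ring, show (0 : ℤ) + t = t by ring]
    congr 1
    apply cyl_congr
    intro n _
    rw [show n - t + t = n by ring]
  have hshift2 : P (cyl (Finset.Icc (L - t) (-1)) (fun n => w (n + t)))
      = P (cyl (Finset.Icc L (t - 1)) w) := by
    rw [shift_cyl_Icc P hshift t (L - t) (-1)]
    rw [show L - t + t = L by ring, show (-1 : ℤ) + t = t - 1 by ring]
    congr 1
    apply cyl_congr
    intro n _
    rw [show n - t + t = n by ring]
  unfold q condProb
  rw [show -(((t - L).toNat : ℕ) : ℤ) = L - t by omega]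
  rw [hnum, hshift1, hshift2]
  unfold pr
  have hne : (P (cyl (Finset.Icc L (t - 1)) w)).toReal ≠ 0 :=
    (pr_pos P hpos (Finset.Icc L (t - 1)) w).ne'
  rw [div_mul_cancel₀ _ hne]

variable (D : ℕ) (hD : 1 ≤ D) (hMarkov : MarkovOrder P D)

include hshift hpos hMarkov in
lemma peel_many (L : ℤ) (hL : L ≤ -1) (w : ℤ → Pat N) :
    ∀ k : ℕ, delta P D hD ^ k * pr P (Finset.Icc L (-1)) w
      ≤ pr P (Finset.Icc L (-1 + (k : ℤ))) w := by
  intro k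
  induction k with
  | zero => simp
  | succ k ih =>
    have hpeel := peel P hshift hpos L (-1 + ((k : ℤ) + 1)) (by omega) w
    rw [show (-1 + (((k : ℕ) + 1 : ℕ) : ℤ)) = -1 + ((k : ℤ) + 1) by push_cast; ring] at *
    rw [hpeel, show (-1 + ((k : ℤ) + 1) - 1) = -1 + (k : ℤ) by ring] at *
    have hq := delta_le_q_all P hpos D hD hMarkov ((-1 + ((k : ℤ) + 1)) - L).toNat
      (by omega) (w (-1 + ((k : ℤ) + 1))) (fun n => w (n + (-1 + ((k : ℤ) + 1))))
    calc delta P D hD ^ (k + 1) * pr P (Finset.Icc L (-1)) w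
        = delta P D hD * (delta P D hD ^ k * pr P (Finset.Icc L (-1)) w) := by ring
      _ ≤ delta P D hD * pr P (Finset.Icc L (-1 + (k : ℤ))) w :=
          mul_le_mul_of_nonneg_left ih (delta_pos P hpos D hD).le
      _ ≤ q P ((-1 + ((k : ℤ) + 1)) - L).toNat (w (-1 + ((k : ℤ) + 1)))
            (fun n => w (n + (-1 + ((k : ℤ) + 1)))) * pr P (Finset.Icc L (-1 + (k : ℤ))) w :=
          mul_le_mul_of_nonneg_right hq (pr_pos P hpos _ _).le

include hshift hpos hMarkov in
lemma compare (τ : ℕ) (hτ : 1 ≤ τ) (L : ℤ) (hL : L ≤ -1) (w w' : ℤ → Pat N)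
    (hw : ∀ n : ℤ, n < 0 ∨ (τ : ℤ) ≤ n → w n = w' n) :
    ∀ k : ℕ, delta P D hD ^ (τ + D) * pr P (Finset.Icc L ((τ : ℤ) - 1 + k)) w'
      ≤ pr P (Finset.Icc L ((τ : ℤ) - 1 + k)) w := by
  have hbase : ∀ k : ℕ, k ≤ D → delta P D hD ^ (τ + D) * pr P (Finset.Icc L ((τ : ℤ) - 1 + k)) w'
      ≤ pr P (Finset.Icc L ((τ : ℤ) - 1 + k)) w := by
    intro k hk
    set R : ℤ := (τ : ℤ) - 1 + k with hR
    have h1 : pr P (Finset.Icc L R) w' ≤ pr P (Finset.Icc L (-1)) w' :=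
      pr_mono_Icc P (by omega) w'
    have h2 : pr P (Finset.Icc L (-1)) w' = pr P (Finset.Icc L (-1)) w := by
      apply pr_congr
      intro n hn
      rw [Finset.mem_Icc] at hn
      exact (hw n (Or.inl (by omega))).symm
    have h3 : delta P D hD ^ (τ + k) * pr P (Finset.Icc L (-1)) w
        ≤ pr P (Finset.Icc L R) w := by
      have := peel_many P hshift hpos D hD hMarkov L hL w (τ + k)
      rw [show (-1 + ((τ + k : ℕ) : ℤ)) = R by push_cast; omega] at this
      exact this
    have h4 : delta P D hD ^ (τ + D) ≤ delta P D hD ^ (τ + k) :=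
      pow_le_pow_of_le_one (delta_pos P hpos D hD).le (delta_le_one P hpos D hD) (by omega)
    calc delta P D hD ^ (τ + D) * pr P (Finset.Icc L R) w'
        ≤ delta P D hD ^ (τ + D) * pr P (Finset.Icc L (-1)) w := by
          rw [← h2]
          exact mul_le_mul_of_nonneg_left h1 (pow_nonneg (delta_pos P hpos D hD).le _)
      _ ≤ delta P D hD ^ (τ + k) * pr P (Finset.Icc L (-1)) w :=
          mul_le_mul_of_nonneg_right h4 (pr_pos P hpos _ _).le
      _ ≤ pr P (Finset.Icc L R) w := h3
  intro k
  induction k with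
  | zero => exact hbase 0 (by omega)
  | succ k ih =>
    rcases le_or_gt (k + 1) D with hk | hk
    · exact hbase (k + 1) hk
    · set R : ℤ := (τ : ℤ) - 1 + ((k : ℤ) + 1) with hR
      have hRcast : ((τ : ℤ) - 1 + ((k + 1 : ℕ) : ℤ)) = R := by push_cast; ring
      rw [hRcast]
      have hRτD : (τ : ℤ) + D ≤ R := by omega
      have hpeelw := peel P hshift hpos L R (by omega) w
      have hpeelw' := peel P hshift hpos L R (by omega) w'
      -- the peeled factors agree, via the Markov property
      have hMw : q P (R - L).toNat (w R) (fun n => w (n + R)) = q P D (w R) (fun n => w (n + R)) :=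
        hMarkov (w R) (R - L).toNat (by omega) _
      have hMw' : q P (R - L).toNat (w' R) (fun n => w' (n + R)) = q P D (w' R) (fun n => w' (n + R)) :=
        hMarkov (w' R) (R - L).toNat (by omega) _
      have hfac : q P D (w R) (fun n => w (n + R)) = q P D (w' R) (fun n => w' (n + R)) := by
        rw [hw R (Or.inr (by omega))]
        unfold q
        congr 1
        apply cyl_congr
        intro n hn
        rw [Finset.mem_Icc] at hn
        exact hw (n + R) (Or.inr (by omega))
      have hqnn : 0 ≤ q P D (w' R) (fun n => w' (n + R)) := condProb_nonneg P _ _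
      have hih : delta P D hD ^ (τ + D) * pr P (Finset.Icc L (R - 1)) w'
          ≤ pr P (Finset.Icc L (R - 1)) w := by
        have := ih
        rw [show ((τ : ℤ) - 1 + (k : ℤ)) = R - 1 by omega] at this
        exact this
      calc delta P D hD ^ (τ + D) * pr P (Finset.Icc L R) w'
          = q P D (w' R) (fun n => w' (n + R))
              * (delta P D hD ^ (τ + D) * pr P (Finset.Icc L (R - 1)) w') := by
            rw [hpeelw', hMw']; ring
        _ ≤ q P D (w' R) (fun n => w' (n + R)) * pr P (Finset.Icc L (R - 1)) w :=
            mul_le_mul_of_nonneg_left hih hqnn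
        _ = pr P (Finset.Icc L R) w := by rw [hpeelw, hMw, hfac]

end BinPf
-- Section 5: partitioning by finite blocks
namespace BinPf
variable {N : ℕ}

instance fintypeBlocks (s : Finset ℤ) : Fintype ({y // y ∈ s} → Pat N) := inferInstance

/-- extend a block on `s` to a full configuration -/
def extFin (s : Finset ℤ) (b : {x // x ∈ s} → Pat N) : ℤ → Pat N := fun n =>
  if h : n ∈ s then b ⟨n, h⟩ else zPat N

variable (P : Measure (Conf N)) [IsProbabilityMeasure P]

lemma partition (s : Finset ℤ) (E : Set (Conf N)) (hE : MeasurableSet E) :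
    P E = ∑ b : ({x // x ∈ s} → Pat N), P (E ∩ cyl s (extFin s b)) := by
  have hcover : E = ⋃ b : ({x // x ∈ s} → Pat N), E ∩ cyl s (extFin s b) := by
    ext ω
    simp only [Set.mem_iUnion, Set.mem_inter_iff]
    constructor
    · intro hω
      refine ⟨fun x => ω x, hω, fun n hn => ?_⟩
      unfold extFin
      rw [dif_pos hn]
    · rintro ⟨b, hb, _⟩
      exact hb
  have hdisj : Pairwise (Function.onFun Disjoint
      fun b : ({x // x ∈ s} → Pat N) => E ∩ cyl s (extFin s b)) := by
    intro b b' hbb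
    refine Set.disjoint_left.mpr ?_
    rintro ω ⟨_, h1⟩ ⟨_, h2⟩
    apply hbb
    funext x
    have e1 := h1 x x.2
    have e2 := h2 x x.2
    unfold extFin at e1 e2
    rw [dif_pos x.2] at e1 e2
    exact e1.symm.trans e2
  conv_lhs => rw [hcover]
  rw [measure_iUnion hdisj fun b => hE.inter (measurable_cyl s (extFin s b))]
  exact tsum_fintype _

lemma cyl_subset_of_local {s : Finset ℤ} {E : Set (Conf N)}
    (hloc : ∀ x y : Conf N, (∀ n ∈ s, x n = y n) → x ∈ E → y ∈ E)
    {b : {x // x ∈ s} → Pat N} (hb : extFin s b ∈ E) :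
    cyl s (extFin s b) ⊆ E := by
  intro ω hω
  exact hloc (extFin s b) ω (fun n hn => (hω n hn).symm) hb

lemma inter_cyl_of_not_local {s : Finset ℤ} {E : Set (Conf N)}
    (hloc : ∀ x y : Conf N, (∀ n ∈ s, x n = y n) → x ∈ E → y ∈ E)
    {b : {x // x ∈ s} → Pat N} (hb : extFin s b ∉ E) :
    E ∩ cyl s (extFin s b) = ∅ := by
  ext ω
  simp only [Set.mem_inter_iff, Set.mem_empty_iff_false, iff_false, not_and]
  intro hωE hωc
  exact hb (hloc ω (extFin s b) (fun n hn => hωc n hn) hωE)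

open Classical in
lemma partition_local (s : Finset ℤ) (E : Set (Conf N)) (hE : MeasurableSet E)
    (hloc : ∀ x y : Conf N, (∀ n ∈ s, x n = y n) → x ∈ E → y ∈ E) :
    P E = ∑ b : ({x // x ∈ s} → Pat N),
      (if extFin s b ∈ E then P (cyl s (extFin s b)) else 0) := by
  rw [partition P s E hE]
  apply Finset.sum_congr rfl
  intro b _
  by_cases hb : extFin s b ∈ E
  · rw [if_pos hb, Set.inter_eq_right.mpr (cyl_subset_of_local hloc hb)]
  · rw [if_neg hb, inter_cyl_of_not_local hloc hb, measure_empty]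

end BinPf
-- Section 6: per-block bound
namespace BinPf
variable {N : ℕ}

/-- canonical block producing pattern `a` in bin `0`. -/
def blockA (a : Pat N) : ℤ → Pat N := fun n => if n = 0 then a else zPat N

variable (P : Measure (Conf N)) [IsProbabilityMeasure P]
  (hshift : Measure.map shiftMap P = P) (hpos : PosCyl P)
  (D : ℕ) (hD : 1 ≤ D) (hMarkov : MarkovOrder P D)

include hshift hpos hMarkov in
lemma per_block (τ : ℕ) (hτ : 1 ≤ τ) (J' : Finset ℤ) (L : ℤ) (k : ℕ) (hk : 1 ≤ k) (hL : L ≤ -1)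
    (hdisj : ∀ z, ¬(z ∈ J' ∧ z ∈ Finset.Icc (0 : ℤ) ((τ : ℤ) - 1)))
    (hun : J' ∪ Finset.Icc (0 : ℤ) ((τ : ℤ) - 1) = Finset.Icc L ((τ : ℤ) - 1 + k))
    (x : ℤ → Pat N) (a : Pat N) :
    (P (cyl J' x)).toReal
      ≤ ((Nat.card ({y // y ∈ Finset.Icc (0 : ℤ) ((τ : ℤ) - 1)} → Pat N) : ℝ)
          / delta P D hD ^ (τ + D))
        * (P (cyl J' x ∩ cyl (Finset.Icc (0 : ℤ) ((τ : ℤ) - 1)) (blockA a))).toReal := by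
  set Iτ : Finset ℤ := Finset.Icc (0 : ℤ) ((τ : ℤ) - 1) with hIτ
  set d : ℝ := delta P D hD with hd
  have hd0 : 0 < d := delta_pos P hpos D hD
  have hde : (0 : ℝ) < d ^ (τ + D) := pow_pos hd0 _
  -- the "target" configuration with block `blockA a` inserted
  have hmerge : ∀ u : ℤ → Pat N, cyl (N := N) J' x ∩ cyl Iτ u
      = cyl (Finset.Icc L ((τ : ℤ) - 1 + k)) (fun z => if z ∈ Iτ then u z else x z) := by
    intro u
    rw [cyl_inter_cyl hdisj, hun]
  -- comparison for each inserted block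
  have hcomp : ∀ u : ℤ → Pat N,
      (P (cyl J' x ∩ cyl Iτ u)).toReal
        ≤ (P (cyl J' x ∩ cyl Iτ (blockA a))).toReal / d ^ (τ + D) := by
    intro u
    rw [hmerge u, hmerge (blockA a)]
    have hcmp := compare P hshift hpos D hD hMarkov τ hτ L hL
      (fun z => if z ∈ Iτ then blockA a z else x z)
      (fun z => if z ∈ Iτ then u z else x z)
      (fun z hz => by
        have hzI : z ∉ Iτ := by
          rw [hIτ, Finset.mem_Icc]
          omega
        simp [hzI]) k
    rw [le_div_iff₀ hde]
    unfold pr at hcmp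
    linarith [hcmp]
  -- partition over the inserted block
  have hpart := partition P Iτ (cyl J' x) (measurable_cyl J' x)
  have htr : (P (cyl (N := N) J' x)).toReal
      = ∑ v : ({y // y ∈ Iτ} → Pat N), (P (cyl J' x ∩ cyl Iτ (extFin Iτ v))).toReal := by
    rw [hpart, ENNReal.toReal_sum]
    intro v _
    exact measure_ne_top P _
  rw [htr]
  calc ∑ v : ({y // y ∈ Iτ} → Pat N), (P (cyl J' x ∩ cyl Iτ (extFin Iτ v))).toReal
      ≤ ∑ _v : ({y // y ∈ Iτ} → Pat N),
          (P (cyl J' x ∩ cyl Iτ (blockA a))).toReal / d ^ (τ + D) :=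
        Finset.sum_le_sum fun v _ => hcomp (extFin Iτ v)
    _ = (Nat.card ({y // y ∈ Iτ} → Pat N) : ℝ)
          * ((P (cyl J' x ∩ cyl Iτ (blockA a))).toReal / d ^ (τ + D)) := by
        rw [Finset.sum_const, Finset.card_univ, nsmul_eq_mul, Nat.card_eq_fintype_card]
    _ = ((Nat.card ({y // y ∈ Iτ} → Pat N) : ℝ) / d ^ (τ + D))
          * (P (cyl J' x ∩ cyl Iτ (blockA a))).toReal := by ring

end BinPf

/-- Strong non-nullness of the specification of the binned measure: there is a
constant `c > 0` such that all two-sided conditional probabilities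
`P⁽ᵇ⁾(X₀ = a | X₋ₘ = ω(-m), …, X₋₁ = ω(-1), X₁ = ω(1), …, Xₙ = ω(n))`
are bounded below by `c`. -/
theorem binned_specification_strongly_nonnull
    {N D τ : ℕ} (hN : 1 ≤ N) (hD : 1 ≤ D) (hτ : 1 ≤ τ)
    (P : Measure (Conf N)) [IsProbabilityMeasure P]
    (hshift : Measure.map shiftMap P = P)
    (hpos : PosCyl P) (hMarkov : MarkovOrder P D) :
    ∃ c > (0 : ℝ), ∀ m n : ℕ, 1 ≤ m → 1 ≤ n →
      ∀ (a : Pat N) (ω : Conf N),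
        c ≤ condProb (Measure.map (binMap τ) P) {x | x 0 = a}
          (cyl (Finset.Icc (-(m : ℤ)) (-1) ∪ Finset.Icc 1 (n : ℤ)) ω) := by
  classical
  set d : ℝ := BinPf.delta P D hD with hdd
  have hd0 : 0 < d := BinPf.delta_pos P hpos D hD
  set e : ℕ := τ + D with he
  have hde : (0 : ℝ) < d ^ e := pow_pos hd0 _
  set K : ℝ := (Nat.card ({y // y ∈ Finset.Icc (0 : ℤ) ((τ : ℤ) - 1)} → Pat N) : ℝ) with hKdef
  have hK0 : (0 : ℝ) < K := by
    rw [hKdef]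
    have : 0 < Nat.card ({y // y ∈ Finset.Icc (0 : ℤ) ((τ : ℤ) - 1)} → Pat N) := Nat.card_pos
    exact_mod_cast this
  refine ⟨d ^ e / K, div_pos hde hK0, ?_⟩
  intro m n hm hn a ω
  -- cast arithmetic facts
  have hm1 : (1 : ℤ) ≤ (m : ℤ) := by exact_mod_cast hm
  have hn1 : (1 : ℤ) ≤ (n : ℤ) := by exact_mod_cast hn
  have hτ1 : (1 : ℤ) ≤ (τ : ℤ) := by exact_mod_cast hτ
  have hmτ : (1 : ℤ) ≤ (m : ℤ) * τ := by nlinarith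
  have hnτ : (1 : ℤ) ≤ (n : ℤ) * τ := by nlinarith
  -- names for the relevant objects
  set S : Finset ℤ := Finset.Icc (-(m : ℤ)) (-1) ∪ Finset.Icc 1 (n : ℤ) with hS
  set E0 : Set (Conf N) := {x : Conf N | x 0 = a} with hE0
  set C : Set (Conf N) := cyl S ω with hCdef
  have hCm : MeasurableSet C := BinPf.measurable_cyl S ω
  have hE0m : MeasurableSet E0 := by
    have h1 : E0 = (fun x : Conf N => x 0) ⁻¹' {a} := rfl
    rw [h1]
    exact measurable_pi_apply 0 (measurableSet_singleton a)
  set G : Set (Conf N) := binMap τ ⁻¹' C with hGdef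
  set H : Set (Conf N) := binMap τ ⁻¹' E0 with hHdef
  have hGm : MeasurableSet G := BinPf.measurable_binMap τ hCm
  have hHm : MeasurableSet H := BinPf.measurable_binMap τ hE0m
  set L : ℤ := -((m : ℤ) * τ) with hLdef
  have hL1 : L ≤ -1 := by omega
  set k₀ : ℕ := n * τ with hk₀def
  have hk₀1 : 1 ≤ k₀ := Nat.one_le_iff_ne_zero.mpr (by positivity)
  have hk₀c : (k₀ : ℤ) = (n : ℤ) * τ := by rw [hk₀def]; push_cast; ring
  set R : ℤ := (τ : ℤ) - 1 + (k₀ : ℤ) with hRdef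
  set J' : Finset ℤ := Finset.Icc L (-1) ∪ Finset.Icc (τ : ℤ) R with hJ'def
  set Iτ : Finset ℤ := Finset.Icc (0 : ℤ) ((τ : ℤ) - 1) with hIτdef
  -- windows of relevant bins sit inside J'
  have hwin : ∀ j ∈ S, ∀ i : ℕ, i < τ → j * (τ : ℤ) + (i : ℤ) ∈ J' := by
    intro j hj i hi
    have hi1 : (i : ℤ) < (τ : ℤ) := by exact_mod_cast hi
    have hi0 : (0 : ℤ) ≤ (i : ℤ) := by positivity
    rw [hS, Finset.mem_union, Finset.mem_Icc, Finset.mem_Icc] at hj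
    rw [hJ'def, Finset.mem_union, Finset.mem_Icc, Finset.mem_Icc]
    rcases hj with hj | hj
    · left
      have e1 : -(m : ℤ) * τ ≤ j * τ := mul_le_mul_of_nonneg_right hj.1 (by omega)
      have e2 : j * (τ : ℤ) ≤ (-1) * τ := mul_le_mul_of_nonneg_right hj.2 (by omega)
      constructor
      · rw [hLdef]; linarith
      · linarith
    · right
      have e1 : (1 : ℤ) * τ ≤ j * τ := mul_le_mul_of_nonneg_right hj.1 (by omega)
      have e2 : j * (τ : ℤ) ≤ (n : ℤ) * τ := mul_le_mul_of_nonneg_right hj.2 (by omega)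
      constructor
      · linarith
      · rw [hRdef, hk₀c]; linarith
  -- G only depends on coordinates in J'
  have hGloc : ∀ x y : Conf N, (∀ z ∈ J', x z = y z) → x ∈ G → y ∈ G := by
    intro x y hxy hx
    have hx' : ∀ j ∈ S, binMap τ x j = ω j := hx
    intro j hj
    rw [← BinPf.binMap_congr_at τ x y j (fun i hi => hxy _ (hwin j hj i hi))]
    exact hx' j hj
  -- the canonical block realizing pattern `a` in bin 0
  have hHsub : cyl Iτ (BinPf.blockA a) ⊆ H := by
    intro x hx
    have hx' : ∀ i : ℕ, i < τ → x (i : ℤ) = BinPf.blockA a (i : ℤ) := by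
      intro i hi
      exact hx (i : ℤ) (by rw [hIτdef, Finset.mem_Icc]; omega)
    show binMap τ x 0 = a
    funext k
    have hval : ∀ i : ℕ, i < τ → x ((0 : ℤ) * τ + (i : ℤ)) k = if (i : ℕ) = 0 then a k else false := by
      intro i hi
      rw [show (0 : ℤ) * τ + (i : ℤ) = (i : ℤ) by ring, hx' i hi]
      unfold BinPf.blockA zPat
      by_cases h0 : (i : ℕ) = 0
      · simp [h0]
      · rw [if_neg (by exact_mod_cast h0), if_neg h0]
    unfold binMap
    cases hak : a k with
    | false =>
      rw [List.any_eq_false]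
      intro i hi
      rw [hval i (List.mem_range.mp hi)]
      split_ifs <;> simp [hak]
    | true =>
      rw [List.any_eq_true]
      exact ⟨0, List.mem_range.mpr (by omega), by rw [hval 0 (by omega)]; simp [hak]⟩
  -- identification of the binned probabilities
  have hmapC : Measure.map (binMap τ) P C = P G :=
    Measure.map_apply (BinPf.measurable_binMap τ) hCm
  have hmapEC : Measure.map (binMap τ) P (E0 ∩ C) = P (H ∩ G) := by
    rw [Measure.map_apply (BinPf.measurable_binMap τ) (hE0m.inter hCm), Set.preimage_inter]
  -- set disjointness and union facts for the partition
  have hdisj : ∀ z, ¬(z ∈ J' ∧ z ∈ Finset.Icc (0 : ℤ) ((τ : ℤ) - 1)) := by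
    intro z ⟨hz1, hz2⟩
    rw [hJ'def, Finset.mem_union, Finset.mem_Icc, Finset.mem_Icc] at hz1
    rw [Finset.mem_Icc] at hz2
    omega
  have hun : J' ∪ Finset.Icc (0 : ℤ) ((τ : ℤ) - 1) = Finset.Icc L ((τ : ℤ) - 1 + k₀) := by
    ext z
    rw [Finset.mem_union, hJ'def, Finset.mem_union, Finset.mem_Icc, Finset.mem_Icc,
      Finset.mem_Icc, Finset.mem_Icc]
    omega
  -- partition of G and of H ∩ G over blocks on J'
  have hgsum := BinPf.partition_local P J' G hGm hGloc
  have hhsum := BinPf.partition P J' (H ∩ G) (hHm.inter hGm)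
  -- real versions
  set g : ℝ := (P G).toReal with hgdef
  set hh : ℝ := (P (H ∩ G)).toReal with hhdef
  have hgreal : g = ∑ b : ({y // y ∈ J'} → Pat N),
      (if BinPf.extFin J' b ∈ G then (P (cyl J' (BinPf.extFin J' b))).toReal else 0) := by
    rw [hgdef, hgsum, ENNReal.toReal_sum (fun b _ => by
      split_ifs
      · exact measure_ne_top P _
      · exact ENNReal.zero_ne_top)]
    apply Finset.sum_congr rfl
    intro b _
    split_ifs <;> simp
  have hhterm : ∀ b : ({y // y ∈ J'} → Pat N),
      (if BinPf.extFin J' b ∈ G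
        then (P (cyl J' (BinPf.extFin J' b) ∩ cyl Iτ (BinPf.blockA a))).toReal else 0)
      ≤ (P ((H ∩ G) ∩ cyl J' (BinPf.extFin J' b))).toReal := by
    intro b
    split_ifs with hb
    · apply ENNReal.toReal_mono (measure_ne_top P _)
      apply measure_mono
      intro x ⟨hx1, hx2⟩
      exact ⟨⟨hHsub hx2, BinPf.cyl_subset_of_local hGloc hb hx1⟩, hx1⟩
    · exact ENNReal.toReal_nonneg
  have hhreal : (∑ b : ({y // y ∈ J'} → Pat N),
      (if BinPf.extFin J' b ∈ G
        then (P (cyl J' (BinPf.extFin J' b) ∩ cyl Iτ (BinPf.blockA a))).toReal else 0)) ≤ hh := by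
    have h1 : hh = ∑ b : ({y // y ∈ J'} → Pat N),
        (P ((H ∩ G) ∩ cyl J' (BinPf.extFin J' b))).toReal := by
      rw [hhdef, hhsum, ENNReal.toReal_sum (fun b _ => measure_ne_top P _)]
    rw [h1]
    exact Finset.sum_le_sum fun b _ => hhterm b
  -- the per-block comparison
  have hperb : ∀ b : ({y // y ∈ J'} → Pat N),
      (P (cyl J' (BinPf.extFin J' b))).toReal
        ≤ (K / d ^ e) * (P (cyl J' (BinPf.extFin J' b) ∩ cyl Iτ (BinPf.blockA a))).toReal := by
    intro b
    have := BinPf.per_block P hshift hpos D hD hMarkov τ hτ J' L k₀ hk₀1 hL1 hdisj hun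
      (BinPf.extFin J' b) a
    rw [← hIτdef, ← hKdef, ← hdd, ← he] at this
    exact this
  -- combine: g ≤ (K / d^e) * hh
  have hgle : g ≤ (K / d ^ e) * hh := by
    rw [hgreal]
    calc (∑ b : ({y // y ∈ J'} → Pat N),
        if BinPf.extFin J' b ∈ G then (P (cyl J' (BinPf.extFin J' b))).toReal else 0)
        ≤ ∑ b : ({y // y ∈ J'} → Pat N),
          (if BinPf.extFin J' b ∈ G
            then (K / d ^ e) * (P (cyl J' (BinPf.extFin J' b) ∩ cyl Iτ (BinPf.blockA a))).toReal
            else 0) := by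
          apply Finset.sum_le_sum
          intro b _
          split_ifs with hb
          · exact hperb b
          · exact le_refl 0
      _ = (K / d ^ e) * ∑ b : ({y // y ∈ J'} → Pat N),
          (if BinPf.extFin J' b ∈ G
            then (P (cyl J' (BinPf.extFin J' b) ∩ cyl Iτ (BinPf.blockA a))).toReal else 0) := by
          rw [Finset.mul_sum]
          apply Finset.sum_congr rfl
          intro b _
          split_ifs <;> ring
      _ ≤ (K / d ^ e) * hh :=
          mul_le_mul_of_nonneg_left hhreal (div_nonneg hK0.le hde.le)
  -- positivity of g
  have hg0 : 0 < g := by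
    set x0 : Conf N := fun z => if (τ : ℤ) ∣ z then ω (z / τ) else zPat N with hx0def
    set b0 : {y // y ∈ J'} → Pat N := fun y => x0 y with hb0def
    have hb0G : BinPf.extFin J' b0 ∈ G := by
      intro j hj
      have h1 : binMap τ (BinPf.extFin J' b0) j = binMap τ x0 j := by
        apply BinPf.binMap_congr_at
        intro i hi
        unfold BinPf.extFin
        rw [dif_pos (hwin j hj i hi)]
      rw [h1]
      funext k
      have hval : ∀ i : ℕ, i < τ → x0 (j * (τ : ℤ) + (i : ℤ)) k
          = if (i : ℕ) = 0 then ω j k else false := by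
        intro i hi
        by_cases h0 : (i : ℕ) = 0
        · subst h0
          have hne : (τ : ℤ) ≠ 0 := by omega
          have hdvd : (τ : ℤ) ∣ j * τ := ⟨j, by ring⟩
          simp [hx0def, hdvd, Int.mul_ediv_cancel j hne]
        · have hnd : ¬ ((τ : ℤ) ∣ j * (τ : ℤ) + (i : ℤ)) := by
            intro ⟨c, hc⟩
            have : (τ : ℤ) ∣ (i : ℤ) := ⟨c - j, by linear_combination hc⟩
            rcases this with ⟨u, hu⟩
            have hi1 : (i : ℤ) < (τ : ℤ) := by exact_mod_cast hi
            have hi2 : (1 : ℤ) ≤ (i : ℤ) := by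
              have : 1 ≤ i := Nat.one_le_iff_ne_zero.mpr h0
              exact_mod_cast this
            rcases le_or_gt u 0 with hu0 | hu0
            · have h1 : (τ : ℤ) * u ≤ 0 :=
                mul_nonpos_iff.mpr (Or.inl ⟨by omega, hu0⟩)
              linarith
            · have h1 : (τ : ℤ) * 1 ≤ (τ : ℤ) * u :=
                mul_le_mul_of_nonneg_left (by omega) (by omega)
              linarith
          rw [hx0def]
          simp only [if_neg hnd, if_neg h0]
          rfl
      unfold binMap
      cases hjk : ω j k with
      | false =>
        rw [List.any_eq_false]
        intro i hi
        rw [hval i (List.mem_range.mp hi)]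
        split_ifs <;> simp [hjk]
      | true =>
        rw [List.any_eq_true]
        exact ⟨0, List.mem_range.mpr (by omega), by rw [hval 0 (by omega)]; simp [hjk]⟩
    rw [hgreal]
    have hterm0 : (0 : ℝ) < (if BinPf.extFin J' b0 ∈ G
        then (P (cyl J' (BinPf.extFin J' b0))).toReal else 0) := by
      rw [if_pos hb0G]
      exact ENNReal.toReal_pos (hpos J' (BinPf.extFin J' b0)).ne' (measure_ne_top P _)
    have hsle := Finset.single_le_sum (f := fun b : ({y // y ∈ J'} → Pat N) =>
        (if BinPf.extFin J' b ∈ G then (P (cyl J' (BinPf.extFin J' b))).toReal else 0))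
      (fun b _ => by split_ifs; exacts [ENNReal.toReal_nonneg, le_refl 0])
      (Finset.mem_univ b0)
    exact lt_of_lt_of_le hterm0 hsle
  -- conclude
  show d ^ e / K ≤ condProb (Measure.map (binMap τ) P) E0 C
  unfold condProb
  rw [hmapC, hmapEC, ← hgdef, ← hhdef]
  rw [le_div_iff₀ hg0]
  calc d ^ e / K * g ≤ d ^ e / K * ((K / d ^ e) * hh) :=
        mul_le_mul_of_nonneg_left hgle (div_nonneg hde.le hK0.le)
    _ = hh := by field_simp
end
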